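/- arXiv:2510.14754 — 9 statements merged into one kernel-verified Lean document; each statement's English description precedes it below -/
import Mathlib

section
/- Let p be prime, H = ⟨a_1,...,a_n⟩ ≅ (Z/pZ)^n with a_{n+1} := (a_1⋯a_n)^{-1}, and let K ≤ H be the kernel of a surjective homomorphism θ : H → (Z/pZ)^2 with a_j ∉ K for all j = 1,...,n+1. Then exactly one of the following holds: (1) there are integers r_3, s_3, ..., r_n, s_n ∈ {0,...,p-1} with (r_j, s_j) ≠ (0,0) for all j and (1 + r_3 + ⋯ + r_n, 1 + s_3 + ⋯ + s_n) ≢ (0,0) mod p such that K = ⟨a_1^{r_3} a_2^{s_3} a_3^{-1}, ..., a_1^{r_n} a_2^{s_n} a_n^{-1}⟩; or (2) there is an integer 2 ≤ t ≤ n-1, integers l_2, ..., l_t ∈ {1,...,p-1}, and integers r_{t+2}, s_{t+2}, ..., r_n, s_n ∈ {0,...,p-1} with (r_j, s_j) ≠ (0,0) and (1 + l_2 + ⋯ + l_t + r_{t+2} + ⋯ + r_n, 1 + s_{t+2} + ⋯ + s_n) ≢ (0,0) mod p such that K = ⟨a_1^{l_2} a_2^{-1}, ..., a_1^{l_t} a_t^{-1},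 a_1^{r_{t+2}} a_{t+1}^{s_{t+2}} a_{t+2}^{-1}, ..., a_1^{r_n} a_{t+1}^{s_n} a_n^{-1}⟩. -/
/-! Auxiliary lemmas -/

lemma zmodSmul (p : ℕ) [NeZero p] {M : Type*} [AddCommGroup M] [Module (ZMod p) M]
    (c : ZMod p) (x : M) : c • x = c.val • x := by
  rw [← Nat.cast_smul_eq_nsmul (ZMod p), ZMod.natCast_val, ZMod.cast_id]

lemma closureEqSpan (p : ℕ) [NeZero p] {M : Type*} [AddCommGroup M] [Module (ZMod p) M]
    (S : Set M) :
    AddSubgroup.closure S = (Submodule.span (ZMod p) S).toAddSubgroup := by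
  apply le_antisymm
  · exact AddSubgroup.closure_le _ |>.mpr (Submodule.subset_span)
  · intro x hx
    simp only [Submodule.mem_toAddSubgroup] at hx
    induction hx using Submodule.span_induction with
    | mem _ h => exact AddSubgroup.subset_closure h
    | zero => exact zero_mem _
    | add _ _ _ _ h1 h2 => exact add_mem h1 h2
    | smul c y _ h => rw [zmodSmul]; exact AddSubgroup.nsmul_mem _ h _

lemma singleExpand {p n : ℕ} [NeZero p] (x : Fin n → ZMod p) :
    x = ∑ j : Fin n, x j • (Pi.single j 1 : Fin n → ZMod p) := by
  conv_lhs => rw [← Finset.univ_sum_single x]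
  refine Finset.sum_congr rfl fun j _ => ?_
  funext k
  by_cases h : k = j <;> simp [Pi.single_apply, h]

noncomputable def phiLM (p : ℕ) [Fact p.Prime] (u w : Fin 2 → ZMod p) :
    (Fin 2 → ZMod p) →ₗ[ZMod p] (Fin 2 → ZMod p) where
  toFun x := (u 0 * w 1 - u 1 * w 0)⁻¹ • ![w 1 * x 0 - w 0 * x 1, u 0 * x 1 - u 1 * x 0]
  map_add' x y := by
    funext i
    fin_cases i <;> simp [Pi.smul_apply, smul_eq_mul] <;> ring
  map_smul' c x := by
    funext i
    fin_cases i <;> simp [Pi.smul_apply, smul_eq_mul] <;> ring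

lemma phiLM_apply (p : ℕ) [Fact p.Prime] (u w x : Fin 2 → ZMod p) :
    phiLM p u w x = (u 0 * w 1 - u 1 * w 0)⁻¹ •
      ![w 1 * x 0 - w 0 * x 1, u 0 * x 1 - u 1 * x 0] := rfl

lemma phiLM_u (p : ℕ) [Fact p.Prime] (u w : Fin 2 → ZMod p)
    (hd : u 0 * w 1 - u 1 * w 0 ≠ 0) : phiLM p u w u = ![1, 0] := by
  funext i
  fin_cases i
  · show (u 0 * w 1 - u 1 * w 0)⁻¹ * (w 1 * u 0 - w 0 * u 1) = 1
    rw [show w 1 * u 0 - w 0 * u 1 = u 0 * w 1 - u 1 * w 0 by ring]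
    exact inv_mul_cancel₀ hd
  · show (u 0 * w 1 - u 1 * w 0)⁻¹ * (u 0 * u 1 - u 1 * u 0) = 0
    rw [show u 0 * u 1 - u 1 * u 0 = 0 by ring, mul_zero]

lemma phiLM_w (p : ℕ) [Fact p.Prime] (u w : Fin 2 → ZMod p)
    (hd : u 0 * w 1 - u 1 * w 0 ≠ 0) : phiLM p u w w = ![0, 1] := by
  funext i
  fin_cases i
  · show (u 0 * w 1 - u 1 * w 0)⁻¹ * (w 1 * w 0 - w 0 * w 1) = 0
    rw [show w 1 * w 0 - w 0 * w 1 = 0 by ring, mul_zero]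
  · show (u 0 * w 1 - u 1 * w 0)⁻¹ * (u 0 * w 1 - u 1 * w 0) = 1
    exact inv_mul_cancel₀ hd

lemma phiLM_snd (p : ℕ) [Fact p.Prime] (u w x : Fin 2 → ZMod p)
    (h : u 0 * x 1 - u 1 * x 0 = 0) : phiLM p u w x 1 = 0 := by
  show (u 0 * w 1 - u 1 * w 0)⁻¹ * (u 0 * x 1 - u 1 * x 0) = 0
  rw [h, mul_zero]

lemma phiLM_inj (p : ℕ) [Fact p.Prime] (u w : Fin 2 → ZMod p)
    (hd : u 0 * w 1 - u 1 * w 0 ≠ 0) {x : Fin 2 → ZMod p}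
    (h : phiLM p u w x = 0) : x = 0 := by
  have h0 : (u 0 * w 1 - u 1 * w 0)⁻¹ * (w 1 * x 0 - w 0 * x 1) = 0 := congrFun h 0
  have h1 : (u 0 * w 1 - u 1 * w 0)⁻¹ * (u 0 * x 1 - u 1 * x 0) = 0 := congrFun h 1
  have hd' : (u 0 * w 1 - u 1 * w 0)⁻¹ ≠ 0 := inv_ne_zero hd
  have h0' : w 1 * x 0 - w 0 * x 1 = 0 := by
    rcases mul_eq_zero.mp h0 with h | h; · exact absurd h hd'
    · exact h
  have h1' : u 0 * x 1 - u 1 * x 0 = 0 := by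
    rcases mul_eq_zero.mp h1 with h | h; · exact absurd h hd'
    · exact h
  funext i
  fin_cases i
  · have : (u 0 * w 1 - u 1 * w 0) * x 0 = 0 := by linear_combination u 0 * h0' + w 0 * h1'
    simpa using (mul_eq_zero.mp this).resolve_left hd
  · have : (u 0 * w 1 - u 1 * w 0) * x 1 = 0 := by linear_combination u 1 * h0' + w 1 * h1'
    simpa using (mul_eq_zero.mp this).resolve_left hd

lemma depOf (p : ℕ) [Fact p.Prime] (u v : Fin 2 → ZMod p) (hu : u ≠ 0)
    (h : u 0 * v 1 - u 1 * v 0 = 0) : ∃ c : ZMod p, v = c • u := by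
  have hcase : u 0 ≠ 0 ∨ u 1 ≠ 0 := by
    by_contra hc
    push_neg at hc
    refine hu (funext fun i => ?_)
    fin_cases i
    · simpa using hc.1
    · simpa using hc.2
  rcases hcase with h0 | h1
  · refine ⟨v 0 * (u 0)⁻¹, ?_⟩
    funext i
    fin_cases i
    · show v 0 = v 0 * (u 0)⁻¹ * u 0
      field_simp
    · show v 1 = v 0 * (u 0)⁻¹ * u 1
      field_simp
      linear_combination h
  · refine ⟨v 1 * (u 1)⁻¹, ?_⟩
    funext i
    fin_cases i
    · show v 0 = v 1 * (u 1)⁻¹ * u 0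
      field_simp
      linear_combination -h
    · show v 1 = v 1 * (u 1)⁻¹ * u 1
      field_simp

lemma sumComp (n : ℕ) {M : Type*} [AddCommGroup M] (A : Fin (n + 1) → M)
    (t : ℕ) (ht1 : 1 ≤ t) (htn : t < n) :
    (∑ j : Fin n, A j.castSucc) =
      A 0 + (∑ j ∈ Finset.univ.filter (fun j : Fin (n + 1) => 1 ≤ (j : ℕ) ∧ (j : ℕ) < t), A j)
        + A ⟨t, by omega⟩
        + ∑ j ∈ Finset.univ.filter (fun j : Fin (n + 1) => t + 1 ≤ (j : ℕ) ∧ (j : ℕ) < n), A j := by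
  classical
  set g : ℕ → M := fun m => if h : m < n + 1 then A ⟨m, h⟩ else 0 with hg
  have hgval : ∀ (m : ℕ) (hm : m < n + 1), g m = A ⟨m, hm⟩ := by
    intro m hm; simp only [hg, dif_pos hm]
  have e1 : ∑ j : Fin n, A j.castSucc = ∑ j ∈ Finset.range n, g j := by
    rw [← Fin.sum_univ_eq_sum_range]
    refine Finset.sum_congr rfl fun j _ => ?_
    rw [hgval _ (by omega : (j : ℕ) < n + 1)]
    rfl
  have efil : ∀ c1 c2 : ℕ, c2 ≤ n + 1 →
      ∑ j ∈ Finset.univ.filter (fun j : Fin (n + 1) => c1 ≤ (j : ℕ) ∧ (j : ℕ) < c2), A j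
        = ∑ m ∈ Finset.Ico c1 c2, g m := by
    intro c1 c2 hc2
    have : Finset.Ico c1 c2 = (Finset.range (n + 1)).filter (fun m => c1 ≤ m ∧ m < c2) := by
      ext m
      simp only [Finset.mem_Ico, Finset.mem_filter, Finset.mem_range]
      omega
    rw [this, Finset.sum_filter, Finset.sum_filter, ← Fin.sum_univ_eq_sum_range
      (fun m => if c1 ≤ m ∧ m < c2 then g m else 0) (n + 1)]
    refine Finset.sum_congr rfl fun j _ => ?_
    by_cases hj : c1 ≤ (j : ℕ) ∧ (j : ℕ) < c2
    · rw [if_pos hj, if_pos hj, hgval _ (by omega)]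
    · rw [if_neg hj, if_neg hj]
  have hsplit : ∑ j ∈ Finset.range n, g j =
      (∑ m ∈ Finset.Ico 0 1, g m) + (∑ m ∈ Finset.Ico 1 t, g m)
        + (∑ m ∈ Finset.Ico t (t + 1), g m) + ∑ m ∈ Finset.Ico (t + 1) n, g m := by
    rw [Finset.range_eq_Ico,
      ← Finset.sum_Ico_consecutive g (by omega : (0:ℕ) ≤ 1) (by omega : 1 ≤ n),
      ← Finset.sum_Ico_consecutive g (by omega : 1 ≤ t) (by omega : t ≤ n),
      ← Finset.sum_Ico_consecutive g (by omega : t ≤ t + 1) (by omega : t + 1 ≤ n)]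
    abel
  have s0 : ∑ m ∈ Finset.Ico 0 1, g m = A 0 := by
    rw [Nat.Ico_succ_singleton, Finset.sum_singleton, hgval 0 n.succ_pos]
    congr 1
  have st : ∑ m ∈ Finset.Ico t (t + 1), g m = A ⟨t, by omega⟩ := by
    rw [Nat.Ico_succ_singleton, Finset.sum_singleton, hgval t (by omega)]
  rw [e1, hsplit, s0, st, efil 1 t (by omega), efil (t + 1) n (by omega)]

lemma stmt4master (p n : ℕ) [Fact p.Prime] (hn : 3 ≤ n)
    (a : Fin (n + 1) → (Fin n → ZMod p))
    (ha : ∀ j : Fin n, a j.castSucc = Pi.single j 1)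
    (θ : (Fin n → ZMod p) →+ (Fin 2 → ZMod p))
    (t : ℕ) (ht1 : 1 ≤ t) (htn : t < n)
    (l r s : Fin (n + 1) → ZMod p)
    (h0 : θ (a 0) = ![1, 0])
    (ht : θ (a ⟨t, by omega⟩) = ![0, 1])
    (hl : ∀ j : Fin (n + 1), 1 ≤ (j : ℕ) → (j : ℕ) < t → θ (a j) = ![l j, 0])
    (hr : ∀ j : Fin (n + 1), t + 1 ≤ (j : ℕ) → (j : ℕ) < n → θ (a j) = ![r j, s j]) :
    θ.ker = AddSubgroup.closure
      {x | (∃ j : Fin (n + 1), 1 ≤ (j : ℕ) ∧ (j : ℕ) < t ∧ x = l j • a 0 - a j) ∨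
           (∃ j : Fin (n + 1), t + 1 ≤ (j : ℕ) ∧ (j : ℕ) < n ∧
             x = r j • a 0 + s j • a ⟨t, by omega⟩ - a j)} := by
  classical
  set θL := θ.toZModLinearMap p with hθL
  have hθLa : ∀ x, θL x = θ x := fun _ => rfl
  set S : Set (Fin n → ZMod p) :=
      {x | (∃ j : Fin (n + 1), 1 ≤ (j : ℕ) ∧ (j : ℕ) < t ∧ x = l j • a 0 - a j) ∨
           (∃ j : Fin (n + 1), t + 1 ≤ (j : ℕ) ∧ (j : ℕ) < n ∧
             x = r j • a 0 + s j • a ⟨t, by omega⟩ - a j)} with hS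
  rw [closureEqSpan p]
  -- easy direction: S ⊆ ker
  have hSker : Submodule.span (ZMod p) S ≤ LinearMap.ker θL := by
    rw [Submodule.span_le]
    rintro x (⟨j, hj1, hjt, rfl⟩ | ⟨j, hj1, hjn, rfl⟩)
    · simp only [SetLike.mem_coe, LinearMap.mem_ker, map_sub, map_smul]
      simp only [hθLa]
      rw [h0, hl j hj1 hjt]
      funext i
      fin_cases i <;> simp
    · simp only [SetLike.mem_coe, LinearMap.mem_ker, map_add, map_sub, map_smul]
      simp only [hθLa]
      rw [h0, ht, hr j hj1 hjn]
      funext i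
      fin_cases i <;> simp
  ext x
  simp only [AddMonoidHom.mem_ker, Submodule.mem_toAddSubgroup]
  constructor
  · intro hx
    set W := Submodule.span (ZMod p) S with hW
    set q := W.mkQ with hq
    have hqS : ∀ y ∈ S, q y = 0 := fun y hy => by
      rw [hq, Submodule.mkQ_apply, Submodule.Quotient.mk_eq_zero]
      exact Submodule.subset_span hy
    set t0 : Fin (n + 1) := ⟨t, by omega⟩ with ht0
    have key : ∀ j : Fin n, q (Pi.single j 1) =
        θ (a j.castSucc) 0 • q (a 0) + θ (a j.castSucc) 1 • q (a t0) := by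
      intro j
      rw [← ha j]
      rcases Nat.lt_or_ge (j : ℕ) 1 with hj | hj
      · have hj0 : j.castSucc = 0 := by
          ext; simpa using Nat.lt_one_iff.mp hj
        rw [hj0, h0]
        simp
      rcases Nat.lt_or_ge (j : ℕ) t with hjt | hjt
      · have hθj : θ (a j.castSucc) = ![l j.castSucc, 0] := hl j.castSucc hj hjt
        have hgen : (l j.castSucc • a 0 - a j.castSucc) ∈ S :=
          Or.inl ⟨j.castSucc, hj, hjt, rfl⟩
        have := hqS _ hgen
        rw [map_sub, map_smul, sub_eq_zero] at this
        rw [hθj]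
        simp [← this]
      rcases Nat.eq_or_lt_of_le hjt with hjt' | hjt'
      · have hjt0 : j.castSucc = t0 := by ext; simpa using hjt'.symm
        rw [hjt0, ht]
        simp
      · have hθj : θ (a j.castSucc) = ![r j.castSucc, s j.castSucc] :=
          hr j.castSucc hjt' j.isLt
        have hgen : (r j.castSucc • a 0 + s j.castSucc • a t0 - a j.castSucc) ∈ S :=
          Or.inr ⟨j.castSucc, hjt', j.isLt, rfl⟩
        have := hqS _ hgen
        rw [map_sub, map_add, map_smul, map_smul, sub_eq_zero] at this
        rw [hθj]
        simp [← this]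
    have hcoord : ∀ i : Fin 2, θ x i = ∑ j : Fin n, x j * θ (Pi.single j 1) i := by
      intro i
      conv_lhs => rw [← hθLa, singleExpand x, map_sum]
      rw [Finset.sum_apply]
      refine Finset.sum_congr rfl fun j _ => ?_
      rw [map_smul, hθLa]
      rfl
    have hq0 : q x = 0 := by
      conv_lhs => rw [singleExpand x, map_sum]
      have : ∀ j : Fin n, q (x j • (Pi.single j 1 : Fin n → ZMod p)) =
          (x j * θ (a j.castSucc) 0) • q (a 0) + (x j * θ (a j.castSucc) 1) • q (a t0) := by
        intro j
        rw [map_smul, key j, smul_add, smul_smul, smul_smul]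
      rw [Finset.sum_congr rfl fun j _ => this j, Finset.sum_add_distrib,
        ← Finset.sum_smul, ← Finset.sum_smul]
      have e0 : ∑ j : Fin n, x j * θ (a j.castSucc) 0 = 0 := by
        have := hcoord 0
        rw [hx] at this
        rw [← Finset.sum_congr rfl fun j (_ : j ∈ Finset.univ) => by rw [ha j]]
        exact (this.symm.trans (by simp))
      have e1 : ∑ j : Fin n, x j * θ (a j.castSucc) 1 = 0 := by
        have := hcoord 1
        rw [hx] at this
        rw [← Finset.sum_congr rfl fun j (_ : j ∈ Finset.univ) => by rw [ha j]]
        exact (this.symm.trans (by simp))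
      rw [e0, e1, zero_smul, zero_smul, add_zero]
    rwa [hq, Submodule.mkQ_apply, Submodule.Quotient.mk_eq_zero] at hq0
  · intro hx
    exact hSker hx

/-- Classification of the members of `F(p,n)` (for `p` prime, `n ≥ 3`):
if `K = ker θ` for a surjection `θ : H → (ℤ/pℤ)²` with `a_j ∉ K` for all
`j = 1,…,n+1` (here `H = Fin n → ZMod p` with standard basis `a_1,…,a_n`
and `a_{n+1} = -(a_1+⋯+a_n)`), then exactly one of the following holds:
(1) `K = ⟨a_1^{r_3} a_2^{s_3} a_3^{-1}, …, a_1^{r_n} a_2^{s_n} a_n^{-1}⟩`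
with `(r_j,s_j) ≠ (0,0)` for each `j` and
`(1+r_3+⋯+r_n, 1+s_3+⋯+s_n) ≢ (0,0) (mod p)`; or
(2) there is `2 ≤ t ≤ n-1` with
`K = ⟨a_1^{l_2} a_2^{-1}, …, a_1^{l_t} a_t^{-1},
a_1^{r_{t+2}} a_{t+1}^{s_{t+2}} a_{t+2}^{-1}, …, a_1^{r_n} a_{t+1}^{s_n} a_n^{-1}⟩`
with `l_j ≠ 0`, `(r_j,s_j) ≠ (0,0)` and
`(1+l_2+⋯+l_t+r_{t+2}+⋯+r_n, 1+s_{t+2}+⋯+s_n) ≢ (0,0) (mod p)`.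
Indices here are zero-based: `a_j` of the paper is `a ⟨j-1⟩`. -/
theorem stmt4 (p n : ℕ) [Fact p.Prime] (hn : 3 ≤ n)
    (a : Fin (n + 1) → (Fin n → ZMod p))
    (ha : ∀ j : Fin n, a j.castSucc = Pi.single j 1)
    (hlast : a (Fin.last n) = -∑ j : Fin n, Pi.single j 1)
    (θ : (Fin n → ZMod p) →+ (Fin 2 → ZMod p))
    (hsurj : Function.Surjective θ)
    (hnotin : ∀ j, a j ∉ θ.ker) :
    Xor'
      (∃ r s : Fin (n + 1) → ZMod p,
        (∀ j : Fin (n + 1), 2 ≤ (j : ℕ) → (j : ℕ) < n → ¬(r j = 0 ∧ s j = 0)) ∧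
        ¬(1 + ∑ j ∈ Finset.univ.filter (fun j : Fin (n + 1) => 2 ≤ (j : ℕ) ∧ (j : ℕ) < n), r j = 0 ∧
          1 + ∑ j ∈ Finset.univ.filter (fun j : Fin (n + 1) => 2 ≤ (j : ℕ) ∧ (j : ℕ) < n), s j = 0) ∧
        θ.ker = AddSubgroup.closure
          {x | ∃ j : Fin (n + 1), 2 ≤ (j : ℕ) ∧ (j : ℕ) < n ∧
            x = r j • a 0 + s j • a 1 - a j})
      (∃ t : ℕ, ∃ ht2 : 2 ≤ t, ∃ htn : t ≤ n - 1,
        ∃ l r s : Fin (n + 1) → ZMod p,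
        (∀ j : Fin (n + 1), 1 ≤ (j : ℕ) → (j : ℕ) < t → l j ≠ 0) ∧
        (∀ j : Fin (n + 1), t + 1 ≤ (j : ℕ) → (j : ℕ) < n → ¬(r j = 0 ∧ s j = 0)) ∧
        ¬(1 + (∑ j ∈ Finset.univ.filter (fun j : Fin (n + 1) => 1 ≤ (j : ℕ) ∧ (j : ℕ) < t), l j)
            + (∑ j ∈ Finset.univ.filter (fun j : Fin (n + 1) => t + 1 ≤ (j : ℕ) ∧ (j : ℕ) < n), r j) = 0 ∧
          1 + ∑ j ∈ Finset.univ.filter (fun j : Fin (n + 1) => t + 1 ≤ (j : ℕ) ∧ (j : ℕ) < n), s j = 0) ∧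
        θ.ker = AddSubgroup.closure
          {x | (∃ j : Fin (n + 1), 1 ≤ (j : ℕ) ∧ (j : ℕ) < t ∧ x = l j • a 0 - a j) ∨
               (∃ j : Fin (n + 1), t + 1 ≤ (j : ℕ) ∧ (j : ℕ) < n ∧
                 x = r j • a 0 + s j • a ⟨t, by omega⟩ - a j)}) := by
  classical
  haveI : NeZero n := ⟨by omega⟩
  set θL := θ.toZModLinearMap p with hθLdef
  have hθLa : ∀ x, θL x = θ x := fun _ => rfl
  have ha0 : a 0 = Pi.single 0 1 := by
    rw [← ha 0]
    congr 1
  have hane : ∀ j, θ (a j) ≠ 0 := fun j h => hnotin j h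
  set u := θ (a 0) with hudef
  have hcoord : ∀ x : Fin n → ZMod p, θ x = ∑ j : Fin n, x j • θ (Pi.single j 1) := by
    intro x
    rw [← hθLa]
    conv_lhs => rw [singleExpand x]
    rw [map_sum]
    exact Finset.sum_congr rfl fun j _ => by rw [map_smul, hθLa]
  have hval1 : ((1 : Fin (n + 1)) : ℕ) = 1 := by
    rw [Fin.val_one']
    exact Nat.mod_eq_of_lt (by omega)
  -- find the first index independent from u
  have hT : ∃ t : ℕ, ∃ htn : t < n, 1 ≤ t ∧
      (u 0 * θ (a ⟨t, Nat.lt_succ_of_lt htn⟩) 1 - u 1 * θ (a ⟨t, Nat.lt_succ_of_lt htn⟩) 0 ≠ 0) ∧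
      ∀ j : Fin (n + 1), 1 ≤ (j : ℕ) → (j : ℕ) < t →
        u 0 * θ (a j) 1 - u 1 * θ (a j) 0 = 0 := by
    have hex : ∃ m : ℕ, ∃ hm : m < n,
        u 0 * θ (Pi.single (⟨m, hm⟩ : Fin n) 1) 1
          - u 1 * θ (Pi.single (⟨m, hm⟩ : Fin n) 1) 0 ≠ 0 := by
      by_contra hall
      push_neg at hall
      have hdep : ∀ j : Fin n, ∃ c : ZMod p, θ (Pi.single j 1) = c • u := by
        intro j
        refine depOf p u _ (hane 0) ?_
        have := hall (j : ℕ) j.isLt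
        simpa using this
      choose c hc using hdep
      have hu2 : u 0 ≠ 0 ∨ u 1 ≠ 0 := by
        by_contra hcon
        push_neg at hcon
        refine hane 0 (funext fun i => ?_)
        fin_cases i
        · simpa using hcon.1
        · simpa using hcon.2
      obtain ⟨v, hv⟩ : ∃ v : Fin 2 → ZMod p, u 0 * v 1 - u 1 * v 0 ≠ 0 := by
        rcases hu2 with h | h
        · exact ⟨![0, 1], by simpa using h⟩
        · refine ⟨![1, 0], ?_⟩
          simpa using h
      obtain ⟨x, hx⟩ := hsurj v
      have hxval : θ x = (∑ j : Fin n, x j * c j) • u := by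
        rw [hcoord x, Finset.sum_congr rfl fun j _ => by rw [hc j, smul_smul],
          Finset.sum_smul]
      rw [hx] at hxval
      apply hv
      rw [hxval]
      simp only [Pi.smul_apply, smul_eq_mul]
      ring
    obtain ⟨hm0n, hm0det⟩ := Nat.find_spec hex
    refine ⟨Nat.find hex, hm0n, ?_, ?_, ?_⟩
    · rcases Nat.eq_zero_or_pos (Nat.find hex) with h | h
      · exfalso
        have h0fin : (⟨Nat.find hex, hm0n⟩ : Fin n) = ⟨0, by omega⟩ := by
          ext; simp [h]
        rw [h0fin] at hm0det
        apply hm0det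
        have h00 : (⟨0, by omega⟩ : Fin n) = 0 := by
          ext
          simp
        have hsa : (Pi.single (⟨0, by omega⟩ : Fin n) 1 : Fin n → ZMod p) = a 0 := by
          rw [h00]
          exact ha0.symm
        rw [hsa, ← hudef]
        ring
      · exact h
    · have heq : a ⟨Nat.find hex, Nat.lt_succ_of_lt hm0n⟩
          = Pi.single (⟨Nat.find hex, hm0n⟩ : Fin n) 1 := by
        rw [← ha ⟨Nat.find hex, hm0n⟩]
        congr 1
      rw [heq]
      exact hm0det
    · intro j hj1 hjt
      have hjn : (j : ℕ) < n := by omega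
      have hmin := Nat.find_min hex hjt
      push_neg at hmin
      have h2 := hmin hjn
      have haj : a j = Pi.single (⟨(j : ℕ), hjn⟩ : Fin n) 1 := by
        rw [← ha ⟨(j : ℕ), hjn⟩]
        congr 1
      rw [haj]
      exact h2
  obtain ⟨t, htn, ht1, hdet, hmin⟩ := hT
  have htn1 : t < n + 1 := by omega
  set t0 : Fin (n + 1) := ⟨t, htn1⟩ with ht0def
  set w := θ (a t0) with hwdef
  have hd : u 0 * w 1 - u 1 * w 0 ≠ 0 := hdet
  set Θ := (phiLM p u w) ∘ₗ θL with hΘdef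
  set θ' := Θ.toAddMonoidHom with hθ'def
  have hθ'a : ∀ x, θ' x = phiLM p u w (θ x) := fun _ => rfl
  have hΘa : ∀ x, Θ x = θ' x := fun _ => rfl
  have hker : θ'.ker = θ.ker := by
    ext x
    simp only [AddMonoidHom.mem_ker, hθ'a]
    constructor
    · intro h
      exact phiLM_inj p u w hd h
    · intro h
      rw [h, map_zero]
  have h0' : θ' (a 0) = ![1, 0] := by
    rw [hθ'a, ← hudef]
    exact phiLM_u p u w hd
  have ht' : θ' (a t0) = ![0, 1] := by
    rw [hθ'a, ← hwdef]
    exact phiLM_w p u w hd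
  have hline : ∀ j : Fin (n + 1), 1 ≤ (j : ℕ) → (j : ℕ) < t →
      θ' (a j) = ![θ' (a j) 0, 0] := by
    intro j h1 h2
    have hz : θ' (a j) 1 = 0 := by
      rw [hθ'a]
      exact phiLM_snd p u w _ (hmin j h1 h2)
    funext i
    fin_cases i
    · simp
    · simpa using hz
  have hθ'ne : ∀ j, θ' (a j) ≠ 0 := by
    intro j h
    exact hane j (phiLM_inj p u w hd (by rw [← hθ'a]; exact h))
  have hsumall : ∀ i : Fin 2, θ' (a (Fin.last n)) i = - ∑ j : Fin n, θ' (a j.castSucc) i := by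
    intro i
    have hlasteq : θ' (a (Fin.last n)) = - ∑ j : Fin n, θ' (a j.castSucc) := by
      rw [hlast, map_neg, map_sum]
      congr 1
      exact Finset.sum_congr rfl fun j _ => by rw [ha j]
    rw [hlasteq]
    simp
  have hQsum : ∀ i : Fin 2, ∑ j : Fin n, θ' (a j.castSucc) i =
      θ' (a 0) i
      + (∑ j ∈ Finset.univ.filter (fun j : Fin (n + 1) => 1 ≤ (j : ℕ) ∧ (j : ℕ) < t),
          θ' (a j) i)
      + θ' (a t0) i
      + ∑ j ∈ Finset.univ.filter (fun j : Fin (n + 1) => t + 1 ≤ (j : ℕ) ∧ (j : ℕ) < n),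
          θ' (a j) i := by
    intro i
    exact sumComp n (fun j => θ' (a j) i) t ht1 htn
  rcases eq_or_lt_of_le ht1 with ht1' | ht2
  · -- case t = 1 : first alternative holds
    have ht01 : t0 = 1 := by
      ext
      show t = ((1 : Fin (n + 1)) : ℕ)
      rw [hval1]
      exact ht1'.symm
    have hat01 : a t0 = a 1 := by rw [ht01]
    left
    constructor
    · refine ⟨fun j => θ' (a j) 0, fun j => θ' (a j) 1, ?_, ?_, ?_⟩
      · intro j _ _ hrs
        apply hθ'ne j
        funext i
        fin_cases i
        · simpa using hrs.1
        · simpa using hrs.2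
      · rintro ⟨e0, e1⟩
        apply hθ'ne (Fin.last n)
        have hfilA : (Finset.univ.filter (fun j : Fin (n + 1) => 1 ≤ (j : ℕ) ∧ (j : ℕ) < t))
            = (∅ : Finset (Fin (n + 1))) := by
          ext j
          simp only [Finset.mem_filter, Finset.mem_univ, true_and, Finset.notMem_empty,
            iff_false]
          omega
        have hfilB : (Finset.univ.filter
              (fun j : Fin (n + 1) => t + 1 ≤ (j : ℕ) ∧ (j : ℕ) < n))
            = (Finset.univ.filter (fun j : Fin (n + 1) => 2 ≤ (j : ℕ) ∧ (j : ℕ) < n)) := by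
          ext j
          simp only [Finset.mem_filter, Finset.mem_univ, true_and]
          omega
        have c0 : θ' (a (Fin.last n)) 0 = 0 := by
          rw [hsumall 0, hQsum 0, hfilA, Finset.sum_empty, hfilB, h0', ht']
          simp only [Matrix.cons_val_zero]
          linear_combination -e0
        have c1 : θ' (a (Fin.last n)) 1 = 0 := by
          rw [hsumall 1, hQsum 1, hfilA, Finset.sum_empty, hfilB, h0', ht']
          simp only [Matrix.cons_val_one, Matrix.head_cons, Matrix.cons_val_zero]
          linear_combination -e1
        funext i
        fin_cases i
        · simpa using c0
        · simpa using c1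
      · rw [← hker, stmt4master p n hn a ha θ' t ht1 htn (fun _ => 0)
          (fun j => θ' (a j) 0) (fun j => θ' (a j) 1) h0' ht'
          (fun j h1 h2 => absurd (h1.trans_lt h2) (by omega))
          (fun j _ _ => by funext i; fin_cases i <;> simp)]
        congr 1
        ext x
        simp only [Set.mem_setOf_eq]
        constructor
        · rintro (⟨j, hj1, hjt, rfl⟩ | ⟨j, hj1, hjn, rfl⟩)
          · exact absurd hjt (by omega)
          · exact ⟨j, by omega, hjn, by rw [hat01]⟩
        · rintro ⟨j, hj2, hjn, rfl⟩
          exact Or.inr ⟨j, by omega, hjn, by rw [hat01]⟩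
    · rintro ⟨t', ht2', htn', l, r', s', hl', hr', hsum', hK⟩
      have hgen : l 1 • a 0 - a 1 ∈ θ.ker := by
        rw [hK]
        exact AddSubgroup.subset_closure (Or.inl ⟨1, by omega, by omega, rfl⟩)
      rw [← hker, AddMonoidHom.mem_ker] at hgen
      have hΘg : Θ (l 1 • a 0 - a 1) = 0 := hgen
      rw [map_sub, map_smul] at hΘg
      have hcomp := congrFun hΘg 1
      have hΘ0 : Θ (a 0) = ![1, 0] := h0'
      have hΘ1 : Θ (a 1) = ![0, 1] := by rw [← hat01]; exact ht'
      rw [hΘ0, hΘ1] at hcomp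
      simp at hcomp
  · -- case t ≥ 2 : second alternative holds
    have ht0ge : 2 ≤ (t0 : ℕ) := ht2
    right
    constructor
    · refine ⟨t, ht2, by omega, fun j => θ' (a j) 0, fun j => θ' (a j) 0,
        fun j => θ' (a j) 1, ?_, ?_, ?_, ?_⟩
      · intro j h1 h2 h0c
        apply hθ'ne j
        have h0c' : θ' (a j) 0 = 0 := h0c
        rw [hline j h1 h2, h0c']
        funext i
        fin_cases i <;> simp
      · intro j _ _ hrs
        apply hθ'ne j
        funext i
        fin_cases i
        · simpa using hrs.1
        · simpa using hrs.2
      · rintro ⟨e0, e1⟩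
        apply hθ'ne (Fin.last n)
        have hmid1 : ∑ j ∈ Finset.univ.filter
            (fun j : Fin (n + 1) => 1 ≤ (j : ℕ) ∧ (j : ℕ) < t), θ' (a j) 1 = 0 := by
          refine Finset.sum_eq_zero fun j hj => ?_
          simp only [Finset.mem_filter, Finset.mem_univ, true_and] at hj
          rw [hline j hj.1 hj.2]
          simp
        have c0 : θ' (a (Fin.last n)) 0 = 0 := by
          rw [hsumall 0, hQsum 0, h0', ht']
          simp only [Matrix.cons_val_zero]
          linear_combination -e0
        have c1 : θ' (a (Fin.last n)) 1 = 0 := by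
          rw [hsumall 1, hQsum 1, h0', ht', hmid1]
          simp only [Matrix.cons_val_one, Matrix.head_cons, Matrix.cons_val_zero]
          linear_combination -e1
        funext i
        fin_cases i
        · simpa using c0
        · simpa using c1
      · rw [← hker, stmt4master p n hn a ha θ' t ht1 htn
          (fun j => θ' (a j) 0) (fun j => θ' (a j) 0) (fun j => θ' (a j) 1) h0' ht'
          (fun j h1 h2 => hline j h1 h2)
          (fun j _ _ => by funext i; fin_cases i <;> simp)]
    · rintro ⟨r', s', hrs', hsum', hK⟩
      have hgen : r' t0 • a 0 + s' t0 • a 1 - a t0 ∈ θ.ker := by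
        rw [hK]
        exact AddSubgroup.subset_closure ⟨t0, ht0ge, htn, rfl⟩
      rw [← hker, AddMonoidHom.mem_ker] at hgen
      have hΘg : Θ (r' t0 • a 0 + s' t0 • a 1 - a t0) = 0 := hgen
      rw [map_sub, map_add, map_smul, map_smul] at hΘg
      have hcomp := congrFun hΘg 1
      have hΘ0 : Θ (a 0) = ![1, 0] := h0'
      have hΘ1 : Θ (a 1) = ![θ' (a 1) 0, 0] := hline 1 (by omega) (by omega)
      have hΘt : Θ (a t0) = ![0, 1] := ht'
      rw [hΘ0, hΘ1, hΘt] at hcomp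
      simp at hcomp
end

section
/- Let p ≥ 3 be prime and H = ⟨a_1, a_2, a_3⟩ ≅ (Z/pZ)^3 with a_4 := (a_1 a_2 a_3)^{-1}. The set F(p,3) of subgroups K ≤ H with H/K ≅ (Z/pZ)^2 and a_j ∉ K for j = 1,2,3,4 consists exactly of: (i) the groups K(r,s) = ⟨a_1^r a_2^s a_3^{-1}⟩ for r, s ∈ {0,...,p-1} with (r,s) ∉ {(0,0), (p-1,p-1)}, and (ii) the groups K(l) = ⟨a_1^l a_2^{-1}⟩ for l ∈ {1,...,p-1}. In particular, F(p,3) has exactly p^2 + p - 3 elements. -/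
namespace Stmt7Aux

variable {p : ℕ} [Fact p.Prime]

lemma closure_eq_span (v : Fin 3 → ZMod p) :
    AddSubgroup.closure {v} = (Submodule.span (ZMod p) {v}).toAddSubgroup := by
  apply le_antisymm
  · rw [AddSubgroup.closure_le]
    exact Set.singleton_subset_iff.2 (Submodule.mem_span_singleton_self v)
  · intro x hx
    have h : Submodule.span (ZMod p) {v} ≤
        AddSubgroup.toZModSubmodule p (AddSubgroup.closure {v}) :=
      Submodule.span_le.2 (Set.singleton_subset_iff.2 (AddSubgroup.subset_closure rfl))
    exact h hx

lemma mem_closure_vec (v x : Fin 3 → ZMod p) :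
    x ∈ AddSubgroup.closure {v} ↔ ∃ c : ZMod p, c • v = x := by
  rw [closure_eq_span]
  exact Submodule.mem_span_singleton

lemma closure_smul {c : ZMod p} (hc : c ≠ 0) (v : Fin 3 → ZMod p) :
    AddSubgroup.closure {c • v} = AddSubgroup.closure {v} := by
  rw [closure_eq_span, closure_eq_span,
    Submodule.span_singleton_smul_eq (IsUnit.mk0 c hc) v]

lemma quot_iso (v : Fin 3 → ZMod p) (hv : v ≠ 0) :
    Nonempty (((Fin 3 → ZMod p) ⧸ AddSubgroup.closure {v}) ≃+ (ZMod p × ZMod p)) := by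
  rw [closure_eq_span]
  have h : Nonempty (((Fin 3 → ZMod p) ⧸ Submodule.span (ZMod p) {v})
      ≃ₗ[ZMod p] (ZMod p × ZMod p)) := by
    apply FiniteDimensional.nonempty_linearEquiv_of_finrank_eq
    have h1 := Submodule.finrank_quotient_add_finrank (Submodule.span (ZMod p) {v})
    rw [finrank_span_singleton hv] at h1
    have h2 : Module.finrank (ZMod p) (Fin 3 → ZMod p) = 3 := Module.finrank_fin_fun (ZMod p)
    have h3 : Module.finrank (ZMod p) (ZMod p × ZMod p) = 2 := by
      simp [Module.finrank_prod]
    omega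
  exact h.map fun e => e.toAddEquiv

lemma exists_gen (K : AddSubgroup (Fin 3 → ZMod p))
    (h : Nonempty (((Fin 3 → ZMod p) ⧸ K) ≃+ (ZMod p × ZMod p))) :
    ∃ v : Fin 3 → ZMod p, v ≠ 0 ∧ K = AddSubgroup.closure {v} := by
  obtain ⟨e⟩ := h
  have hp2 : 2 ≤ p := (Fact.out : p.Prime).two_le
  have hcardV : Nat.card (Fin 3 → ZMod p) = p ^ 3 := by
    simp [Nat.card_pi, Nat.card_zmod, Finset.prod_const]
  have hcardQ : Nat.card ((Fin 3 → ZMod p) ⧸ K) = p ^ 2 := by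
    rw [Nat.card_congr e.toEquiv, Nat.card_prod, Nat.card_zmod]
    ring
  have hmul := AddSubgroup.card_eq_card_quotient_mul_card_addSubgroup K
  rw [hcardV, hcardQ] at hmul
  have hK : Nat.card K = p := by
    have hpos : 0 < p ^ 2 := Nat.pow_pos (by omega)
    have h' : p ^ 2 * p = p ^ 2 * Nat.card K := by rw [← hmul]; ring
    exact (Nat.eq_of_mul_eq_mul_left hpos h').symm
  set S : Submodule (ZMod p) (Fin 3 → ZMod p) := AddSubgroup.toZModSubmodule p K with hS
  have hKS : ∀ x, x ∈ S ↔ x ∈ K := fun x => AddSubgroup.mem_toZModSubmodule p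
  have hnt : Nontrivial K := Finite.one_lt_card_iff_nontrivial.mp (by omega)
  obtain ⟨⟨v, hvK⟩, hvne⟩ := exists_ne (0 : K)
  have hv0 : v ≠ 0 := fun hv => hvne (Subtype.ext hv)
  refine ⟨v, hv0, ?_⟩
  have hle : Submodule.span (ZMod p) {v} ≤ S :=
    Submodule.span_le.2 (Set.singleton_subset_iff.2 ((hKS v).2 hvK))
  haveI : Fintype S := Fintype.ofFinite S
  have hfinS : Module.finrank (ZMod p) S = 1 := by
    have hc : Fintype.card S = p ^ Module.finrank (ZMod p) S := by
      have := Module.card_eq_pow_finrank (K := ZMod p) (V := S)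
      rwa [ZMod.card] at this
    have hcS : Fintype.card S = p := by
      rw [← Nat.card_eq_fintype_card]
      have h' : Nat.card S = Nat.card K := rfl
      rw [h', hK]
    rw [hcS] at hc
    nth_rewrite 1 [← pow_one p] at hc
    have := Nat.pow_right_injective hp2 hc
    omega
  have heq : Submodule.span (ZMod p) {v} = S := by
    apply Submodule.eq_of_le_of_finrank_le hle
    rw [hfinS, finrank_span_singleton hv0]
  rw [closure_eq_span, heq]
  exact (AddSubgroup.toZModSubmodule_toAddSubgroup (n := p) K).symm

/-- First family of subgroups. -/
def Fm (p : ℕ) [Fact p.Prime] : ZMod p × ZMod p → AddSubgroup (Fin 3 → ZMod p) :=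
  fun x => AddSubgroup.closure {![x.1, x.2, -1]}

/-- Second family of subgroups. -/
def Gm (p : ℕ) [Fact p.Prime] : ZMod p → AddSubgroup (Fin 3 → ZMod p) :=
  fun l => AddSubgroup.closure {![l, -1, 0]}

/-- Parameter set for the first family. -/
def Am (p : ℕ) : Set (ZMod p × ZMod p) :=
  {x | ¬(x.1 = 0 ∧ x.2 = 0) ∧ ¬(x.1 = -1 ∧ x.2 = -1)}

/-- Parameter set for the second family. -/
def Bm (p : ℕ) : Set (ZMod p) := {l | l ≠ 0}

lemma injF : Function.Injective (Fm p) := by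
  rintro ⟨r, s⟩ ⟨r', s'⟩ h
  have hmem : (![r', s', -1] : Fin 3 → ZMod p) ∈ AddSubgroup.closure {![r, s, -1]} := by
    rw [show AddSubgroup.closure {![r, s, -1]} = Fm p (r, s) from rfl, h]
    exact AddSubgroup.subset_closure rfl
  rw [mem_closure_vec] at hmem
  obtain ⟨c, hc⟩ := hmem
  have h2 := congrFun hc 2
  have h0 := congrFun hc 0
  have h1 := congrFun hc 1
  simp at h2 h0 h1
  rw [h2, one_mul] at h0 h1
  simp [Prod.ext_iff, h0, h1]

lemma injG : Function.Injective (Gm p) := by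
  intro l l' h
  have hmem : (![l', -1, 0] : Fin 3 → ZMod p) ∈ AddSubgroup.closure {![l, -1, 0]} := by
    rw [show AddSubgroup.closure {![l, -1, 0]} = Gm p l from rfl, h]
    exact AddSubgroup.subset_closure rfl
  rw [mem_closure_vec] at hmem
  obtain ⟨c, hc⟩ := hmem
  have h1 := congrFun hc 1
  have h0 := congrFun hc 0
  simp at h1 h0
  rw [h1, one_mul] at h0
  exact h0

lemma disjFG : Disjoint (Fm p '' Am p) (Gm p '' Bm p) := by
  have hm1 : (-1 : ZMod p) ≠ 0 := by simp
  rw [Set.disjoint_left]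
  rintro K ⟨⟨r, s⟩, -, hK1⟩ ⟨l, -, hK2⟩
  have hmem : (![l, -1, 0] : Fin 3 → ZMod p) ∈ AddSubgroup.closure {![r, s, -1]} := by
    rw [show AddSubgroup.closure {![r, s, -1]} = Fm p (r, s) from rfl, hK1, ← hK2]
    exact AddSubgroup.subset_closure rfl
  rw [mem_closure_vec] at hmem
  obtain ⟨c, hc⟩ := hmem
  have h2 := congrFun hc 2
  have h1 := congrFun hc 1
  simp at h2 h1
  rw [h2, zero_mul] at h1
  exact hm1 h1.symm

lemma ncard_Am : (Am p).ncard = p ^ 2 - 2 := by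
  have hne : ((0 : ZMod p), (0 : ZMod p)) ≠ ((-1 : ZMod p), (-1 : ZMod p)) := by
    intro h
    have h1 := (Prod.ext_iff.mp h).1
    exact (neg_ne_zero.mpr (one_ne_zero : (1 : ZMod p) ≠ 0)) h1.symm
  have hA : Am p = Set.univ \ {((0 : ZMod p), (0 : ZMod p)), ((-1 : ZMod p), (-1 : ZMod p))} := by
    ext x
    simp only [Am, Set.mem_setOf_eq, Set.mem_diff, Set.mem_univ, true_and,
      Set.mem_insert_iff, Set.mem_singleton_iff, Prod.ext_iff]
    tauto
  rw [hA, Set.ncard_diff (Set.subset_univ _), Set.ncard_univ, Nat.card_prod, Nat.card_zmod,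
    Set.ncard_pair hne]
  have : p * p = p ^ 2 := (sq p).symm
  omega

lemma ncard_Bm : (Bm p).ncard = p - 1 := by
  have hB : Bm p = Set.univ \ {(0 : ZMod p)} := by
    ext x
    simp [Bm]
  rw [hB, Set.ncard_diff (Set.subset_univ _), Set.ncard_univ, Nat.card_zmod,
    Set.ncard_singleton]

end Stmt7Aux

open Stmt7Aux in
/-- For `p ≥ 3` prime and `H = ⟨a_1,a_2,a_3⟩ ≅ (ℤ/pℤ)³` (additively
`Fin 3 → ZMod p`, `a_4 := -(a_1+a_2+a_3)`), the set `F(p,3)` of subgroups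
`K ≤ H` with `H/K ≅ (ℤ/pℤ)²` and `a_j ∉ K` for `j = 1,2,3,4` consists exactly
of the groups `K(r,s) = ⟨a_1^r a_2^s a_3^{-1}⟩` with
`(r,s) ∉ {(0,0),(p-1,p-1)}` and the groups `K(l) = ⟨a_1^l a_2^{-1}⟩` with
`l ∈ {1,…,p-1}`; in particular `F(p,3)` has exactly `p² + p - 3` elements. -/
theorem stmt7 (p : ℕ) [Fact p.Prime] (hp : 3 ≤ p)
    (a : Fin 4 → (Fin 3 → ZMod p))
    (ha : ∀ j : Fin 3, a j.castSucc = Pi.single j 1)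
    (hlast : a 3 = -(a 0 + a 1 + a 2)) :
    (∀ K : AddSubgroup (Fin 3 → ZMod p),
      (Nonempty ((Fin 3 → ZMod p) ⧸ K ≃+ (ZMod p × ZMod p)) ∧ ∀ j, a j ∉ K) ↔
      ((∃ r s : ZMod p, ¬(r = 0 ∧ s = 0) ∧ ¬(r = -1 ∧ s = -1) ∧
          K = AddSubgroup.closure {r • a 0 + s • a 1 - a 2}) ∨
       (∃ l : ZMod p, l ≠ 0 ∧ K = AddSubgroup.closure {l • a 0 - a 1}))) ∧
    Nat.card {K : AddSubgroup (Fin 3 → ZMod p) //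
      Nonempty ((Fin 3 → ZMod p) ⧸ K ≃+ (ZMod p × ZMod p)) ∧ ∀ j, a j ∉ K} =
      p ^ 2 + p - 3 := by
  have hm1 : (-1 : ZMod p) ≠ 0 := by simp
  have ha0 : a 0 = ![1, 0, 0] := by
    have h := ha 0
    rw [show ((0 : Fin 3).castSucc) = (0 : Fin 4) from rfl] at h
    rw [h]; funext i; fin_cases i <;> simp
  have ha1 : a 1 = ![0, 1, 0] := by
    have h := ha 1
    rw [show ((1 : Fin 3).castSucc) = (1 : Fin 4) from rfl] at h
    rw [h]; funext i; fin_cases i <;> simp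
  have ha2 : a 2 = ![0, 0, 1] := by
    have h := ha 2
    rw [show ((2 : Fin 3).castSucc) = (2 : Fin 4) from rfl] at h
    rw [h]; funext i; fin_cases i <;> simp
  have ha3 : a 3 = ![-1, -1, -1] := by
    rw [hlast, ha0, ha1, ha2]; funext i; fin_cases i <;> simp
  have hw2 : ∀ r s : ZMod p, r • a 0 + s • a 1 - a 2 = ![r, s, -1] := by
    intro r s; rw [ha0, ha1, ha2]; funext i; fin_cases i <;> simp
  have hw1 : ∀ l : ZMod p, l • a 0 - a 1 = ![l, -1, 0] := by
    intro l; rw [ha0, ha1]; funext i; fin_cases i <;> simp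
  have hvne2 : ∀ r s : ZMod p, (![r, s, -1] : Fin 3 → ZMod p) ≠ 0 := by
    intro r s h; exact hm1 (by simpa using congrFun h 2)
  have hvne1 : ∀ l : ZMod p, (![l, -1, 0] : Fin 3 → ZMod p) ≠ 0 := by
    intro l h; exact hm1 (by simpa using congrFun h 1)
  have main : ∀ K : AddSubgroup (Fin 3 → ZMod p),
      (Nonempty ((Fin 3 → ZMod p) ⧸ K ≃+ (ZMod p × ZMod p)) ∧ ∀ j, a j ∉ K) ↔
      ((∃ r s : ZMod p, ¬(r = 0 ∧ s = 0) ∧ ¬(r = -1 ∧ s = -1) ∧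
          K = AddSubgroup.closure {r • a 0 + s • a 1 - a 2}) ∨
       (∃ l : ZMod p, l ≠ 0 ∧ K = AddSubgroup.closure {l • a 0 - a 1})) := by
    intro K
    constructor
    · rintro ⟨hiso, hmem⟩
      obtain ⟨v, hv0, rfl⟩ := exists_gen K hiso
      by_cases hv2 : v 2 = 0
      · -- second family
        have hv1 : v 1 ≠ 0 := by
          intro hv1
          have hvv0 : v 0 ≠ 0 := by
            intro h0
            exact hv0 (funext fun i => by fin_cases i <;> simp [h0, hv1, hv2])
          apply hmem 0
          rw [ha0, mem_closure_vec]
          exact ⟨(v 0)⁻¹, by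
            funext i; fin_cases i <;> simp [hv1, hv2, inv_mul_cancel₀ hvv0]⟩
        right
        refine ⟨-(v 0) * (v 1)⁻¹, ?_, ?_⟩
        · intro hl
          have h0 : v 0 = 0 := by
            rcases mul_eq_zero.mp hl with h | h
            · exact neg_eq_zero.mp h
            · exact absurd h (inv_ne_zero hv1)
          apply hmem 1
          rw [ha1, mem_closure_vec]
          exact ⟨(v 1)⁻¹, by
            funext i; fin_cases i <;> simp [h0, hv2, inv_mul_cancel₀ hv1]⟩
        · rw [hw1]
          have hvec : (-(v 1)⁻¹) • v = ![-(v 0) * (v 1)⁻¹, -1, 0] := by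
            funext i; fin_cases i
            · show -(v 1)⁻¹ * v 0 = -(v 0) * (v 1)⁻¹; ring
            · show -(v 1)⁻¹ * v 1 = -1
              rw [neg_mul, inv_mul_cancel₀ hv1]
            · show -(v 1)⁻¹ * v 2 = 0
              rw [hv2, mul_zero]
          rw [← hvec, closure_smul (by simp [inv_ne_zero hv1]) v]
      · -- first family
        left
        refine ⟨-(v 0) * (v 2)⁻¹, -(v 1) * (v 2)⁻¹, ?_, ?_, ?_⟩
        · rintro ⟨hr, hs⟩
          have h0 : v 0 = 0 := by
            rcases mul_eq_zero.mp hr with h | h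
            · exact neg_eq_zero.mp h
            · exact absurd h (inv_ne_zero hv2)
          have h1 : v 1 = 0 := by
            rcases mul_eq_zero.mp hs with h | h
            · exact neg_eq_zero.mp h
            · exact absurd h (inv_ne_zero hv2)
          apply hmem 2
          rw [ha2, mem_closure_vec]
          exact ⟨(v 2)⁻¹, by
            funext i; fin_cases i <;> simp [h0, h1, inv_mul_cancel₀ hv2]⟩
        · rintro ⟨hr, hs⟩
          have h0 : v 0 = v 2 := by field_simp at hr; exact neg_inj.mp hr
          have h1 : v 1 = v 2 := by field_simp at hs; exact neg_inj.mp hs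
          apply hmem 3
          rw [ha3, mem_closure_vec]
          refine ⟨-(v 2)⁻¹, ?_⟩
          funext i; fin_cases i
          · show -(v 2)⁻¹ * v 0 = -1
            rw [h0, neg_mul, inv_mul_cancel₀ hv2]
          · show -(v 2)⁻¹ * v 1 = -1
            rw [h1, neg_mul, inv_mul_cancel₀ hv2]
          · show -(v 2)⁻¹ * v 2 = -1
            rw [neg_mul, inv_mul_cancel₀ hv2]
        · rw [hw2]
          have hvec : (-(v 2)⁻¹) • v = ![-(v 0) * (v 2)⁻¹, -(v 1) * (v 2)⁻¹, -1] := by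
            funext i; fin_cases i
            · show -(v 2)⁻¹ * v 0 = -(v 0) * (v 2)⁻¹; ring
            · show -(v 2)⁻¹ * v 1 = -(v 1) * (v 2)⁻¹; ring
            · show -(v 2)⁻¹ * v 2 = -1
              rw [neg_mul, inv_mul_cancel₀ hv2]
          rw [← hvec, closure_smul (by simp [inv_ne_zero hv2]) v]
    · rintro (⟨r, s, hrs0, hrs1, hKeq⟩ | ⟨l, hl, hKeq⟩)
      · rw [hw2 r s] at hKeq; subst hKeq
        refine ⟨quot_iso _ (hvne2 r s), ?_⟩
        intro j; fin_cases j
        · show a 0 ∉ _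
          rw [ha0, mem_closure_vec]
          rintro ⟨c, hc⟩
          have h2 := congrFun hc 2
          have h0 := congrFun hc 0
          simp at h2 h0
          rw [h2, zero_mul] at h0
          exact one_ne_zero h0.symm
        · show a 1 ∉ _
          rw [ha1, mem_closure_vec]
          rintro ⟨c, hc⟩
          have h2 := congrFun hc 2
          have h1 := congrFun hc 1
          simp at h2 h1
          rw [h2, zero_mul] at h1
          exact one_ne_zero h1.symm
        · show a 2 ∉ _
          rw [ha2, mem_closure_vec]
          rintro ⟨c, hc⟩
          have h2 := congrFun hc 2
          have h0 := congrFun hc 0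
          have h1 := congrFun hc 1
          simp at h2 h0 h1
          have hcne : c ≠ 0 := by
            intro h
            rw [h, neg_zero] at h2
            exact one_ne_zero h2.symm
          exact hrs0 ⟨h0.resolve_left hcne, h1.resolve_left hcne⟩
        · show a 3 ∉ _
          rw [ha3, mem_closure_vec]
          rintro ⟨c, hc⟩
          have h2 := congrFun hc 2
          have h0 := congrFun hc 0
          have h1 := congrFun hc 1
          simp at h2 h0 h1
          rw [h2, one_mul] at h0 h1
          exact hrs1 ⟨h0, h1⟩
      · rw [hw1 l] at hKeq; subst hKeq
        refine ⟨quot_iso _ (hvne1 l), ?_⟩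
        intro j; fin_cases j
        · show a 0 ∉ _
          rw [ha0, mem_closure_vec]
          rintro ⟨c, hc⟩
          have h1 := congrFun hc 1
          have h0 := congrFun hc 0
          simp at h1 h0
          rw [h1, zero_mul] at h0
          exact one_ne_zero h0.symm
        · show a 1 ∉ _
          rw [ha1, mem_closure_vec]
          rintro ⟨c, hc⟩
          have h1 := congrFun hc 1
          have h0 := congrFun hc 0
          simp at h1 h0
          have hcne : c ≠ 0 := by
            intro h
            rw [h, neg_zero] at h1
            exact one_ne_zero h1.symm
          exact hl (h0.resolve_left hcne)
        · show a 2 ∉ _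
          rw [ha2, mem_closure_vec]
          rintro ⟨c, hc⟩
          have h2 := congrFun hc 2
          simp at h2
        · show a 3 ∉ _
          rw [ha3, mem_closure_vec]
          rintro ⟨c, hc⟩
          have h2 := congrFun hc 2
          simp at h2
  refine ⟨main, ?_⟩
  have hcard : Nat.card {K : AddSubgroup (Fin 3 → ZMod p) //
      Nonempty ((Fin 3 → ZMod p) ⧸ K ≃+ (ZMod p × ZMod p)) ∧ ∀ j, a j ∉ K} =
      ({K : AddSubgroup (Fin 3 → ZMod p) |
        Nonempty ((Fin 3 → ZMod p) ⧸ K ≃+ (ZMod p × ZMod p)) ∧ ∀ j, a j ∉ K}).ncard :=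
    Nat.card_coe_set_eq _
  rw [hcard]
  have hset : {K : AddSubgroup (Fin 3 → ZMod p) |
        Nonempty ((Fin 3 → ZMod p) ⧸ K ≃+ (ZMod p × ZMod p)) ∧ ∀ j, a j ∉ K} =
      (Fm p '' Am p) ∪ (Gm p '' Bm p) := by
    ext K
    rw [Set.mem_setOf_eq, main K, Set.mem_union, Set.mem_image, Set.mem_image]
    constructor
    · rintro (⟨r, s, h0, h1, hK⟩ | ⟨l, hl, hK⟩)
      · exact Or.inl ⟨(r, s), ⟨h0, h1⟩, by rw [Fm]; dsimp; rw [← hw2 r s, hK]⟩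
      · exact Or.inr ⟨l, hl, by rw [Gm]; dsimp; rw [← hw1 l, hK]⟩
    · rintro (⟨⟨r, s⟩, ⟨h0, h1⟩, hK⟩ | ⟨l, hl, hK⟩)
      · refine Or.inl ⟨r, s, h0, h1, ?_⟩
        rw [← hK, Fm]; dsimp; rw [hw2]
      · refine Or.inr ⟨l, hl, ?_⟩
        rw [← hK, Gm]; dsimp; rw [hw1]
  rw [hset, Set.ncard_union_eq disjFG ((Am p).toFinite.image _) ((Bm p).toFinite.image _),
    Set.ncard_image_of_injective (Am p) injF, Set.ncard_image_of_injective (Bm p) injG,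
    ncard_Am, ncard_Bm]
  have h9 : 9 ≤ p ^ 2 := by nlinarith
  omega
end

section
/- Let p ≥ 3 be prime, H = ⟨a_1, a_2, a_3⟩ ≅ (Z/pZ)^3 with a_4 := (a_1a_2a_3)^{-1}, and let Q_8* ≤ Aut(H) be the subgroup generated by the permutations (1 2)(3 4) and (2 3 4) of the indices of a_1, a_2, a_3, a_4 (so Q_8* ≅ A_4). Then no subgroup K ∈ F(p,3) is invariant under Q_8*. -/
section Aux

variable {p : ℕ} [Fact p.Prime]

private lemma aux_smul (f : (Fin 3 → ZMod p) ≃+ (Fin 3 → ZMod p)) (x : ZMod p)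
    (u : Fin 3 → ZMod p) : f (x • u) = x • f u := by
  have h : x • u = x.val • u := by
    rw [← Nat.cast_smul_eq_nsmul (ZMod p) x.val u, ZMod.natCast_val, ZMod.cast_id]
  have h' : x • f u = x.val • f u := by
    rw [← Nat.cast_smul_eq_nsmul (ZMod p) x.val (f u), ZMod.natCast_val, ZMod.cast_id]
  rw [h, h', map_nsmul]

end Aux

/-- For `p ≥ 3` prime, `H = ⟨a_1,a_2,a_3⟩ ≅ (ℤ/pℤ)³` with
`a_4 := -(a_1+a_2+a_3)`, let `Φ` and `Ψ` be the automorphisms of `H` induced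
by the permutations `(1 2)(3 4)` and `(2 3 4)` of `a_1,a_2,a_3,a_4`
(generating `Q₈* ≅ A₄`).  Then no subgroup `K ∈ F(p,3)` (i.e. with
`H/K ≅ (ℤ/pℤ)²` and `a_j ∉ K` for all `j`) is invariant under both `Φ` and
`Ψ`, hence none is `Q₈*`-invariant. -/
theorem stmt9 (p : ℕ) [Fact p.Prime] (hp : 3 ≤ p)
    (a : Fin 4 → (Fin 3 → ZMod p))
    (ha : ∀ j : Fin 3, a j.castSucc = Pi.single j 1)
    (hlast : a 3 = -(a 0 + a 1 + a 2))
    (Φ Ψ : (Fin 3 → ZMod p) ≃+ (Fin 3 → ZMod p))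
    (hΦ0 : Φ (a 0) = a 1) (hΦ1 : Φ (a 1) = a 0)
    (hΦ2 : Φ (a 2) = a 3) (hΦ3 : Φ (a 3) = a 2)
    (hΨ0 : Ψ (a 0) = a 0) (hΨ1 : Ψ (a 1) = a 2)
    (hΨ2 : Ψ (a 2) = a 3) (hΨ3 : Ψ (a 3) = a 1) :
    ∀ K : AddSubgroup (Fin 3 → ZMod p),
      (Nonempty ((Fin 3 → ZMod p) ⧸ K ≃+ (ZMod p × ZMod p)) ∧ ∀ j, a j ∉ K) →
      ¬(AddSubgroup.map Φ.toAddMonoidHom K = K ∧ AddSubgroup.map Ψ.toAddMonoidHom K = K) := by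
  have hprime : p.Prime := Fact.out
  have hp1 : 1 < p := hprime.one_lt
  rintro K ⟨⟨e⟩, -⟩ ⟨hKΦ, hKΨ⟩
  -- basis vectors
  have h0 : a 0 = Pi.single (0 : Fin 3) 1 := ha 0
  have h1 : a 1 = Pi.single (1 : Fin 3) 1 := ha 1
  have h2 : a 2 = Pi.single (2 : Fin 3) 1 := ha 2
  -- cardinalities
  have hcardH : Nat.card (Fin 3 → ZMod p) = p ^ 3 := by
    simp [Nat.card_eq_fintype_card, ZMod.card]
  have hcardQ : Nat.card ((Fin 3 → ZMod p) ⧸ K) = p ^ 2 := by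
    rw [Nat.card_congr e.toEquiv]
    simp [Nat.card_eq_fintype_card, ZMod.card, sq]
  have hcardK : Nat.card K = p := by
    have h := AddSubgroup.card_eq_card_quotient_mul_card_addSubgroup K
    rw [hcardH, hcardQ] at h
    have : p ^ 2 * p = p ^ 2 * Nat.card K := by rw [← h]; ring
    exact (Nat.eq_of_mul_eq_mul_left (by positivity) this).symm
  -- a nonzero element of K
  obtain ⟨v, hvK, hv0⟩ : ∃ v ∈ K, v ≠ 0 := by
    rcases AddSubgroup.bot_or_exists_ne_zero K with h | h
    · rw [h, AddSubgroup.card_bot] at hcardK; omega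
    · exact h
  -- K is exactly the multiples of v
  have hpsmul : p • v = 0 := by
    funext i
    simp [nsmul_eq_mul, ZMod.natCast_self]
  have hord : addOrderOf v = p := by
    have hdvd := addOrderOf_dvd_of_nsmul_eq_zero hpsmul
    rcases (Nat.Prime.eq_one_or_self_of_dvd hprime _ hdvd) with h | h
    · exact absurd (AddMonoid.addOrderOf_eq_one_iff.mp h) hv0
    · exact h
  have hKeq : AddSubgroup.zmultiples v = K := by
    apply AddSubgroup.eq_of_le_of_card_ge
    · rwa [AddSubgroup.zmultiples_le]
    · rw [hcardK, Nat.card_zmultiples, hord]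
  -- membership of images gives scalar equations
  have hΦvK : Φ v ∈ K := by
    rw [← hKΦ]; exact AddSubgroup.mem_map_of_mem _ hvK
  have hΨvK : Ψ v ∈ K := by
    rw [← hKΨ]; exact AddSubgroup.mem_map_of_mem _ hvK
  rw [← hKeq, AddSubgroup.mem_zmultiples_iff] at hΦvK hΨvK
  obtain ⟨m, hm⟩ := hΦvK
  obtain ⟨n, hn⟩ := hΨvK
  set c : ZMod p := (m : ZMod p) with hc
  set d : ZMod p := (n : ZMod p) with hd
  have hΦv : Φ v = c • v := by rw [← hm, hc, Int.cast_smul_eq_zsmul]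
  have hΨv : Ψ v = d • v := by rw [← hn, hd, Int.cast_smul_eq_zsmul]
  -- decompose v
  have hdecomp : v = v 0 • a 0 + v 1 • a 1 + v 2 • a 2 := by
    funext i
    fin_cases i <;> simp [h0, h1, h2]
  -- compute images
  have hΦv' : Φ v = v 0 • a 1 + v 1 • a 0 + v 2 • a 3 := by
    conv_lhs => rw [hdecomp]
    rw [map_add, map_add, aux_smul, aux_smul, aux_smul, hΦ0, hΦ1, hΦ2]
  have hΨv' : Ψ v = v 0 • a 0 + v 1 • a 2 + v 2 • a 3 := by
    conv_lhs => rw [hdecomp]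
    rw [map_add, map_add, aux_smul, aux_smul, aux_smul, hΨ0, hΨ1, hΨ2]
  set x := v 0 with hx
  set y := v 1 with hy
  set z := v 2 with hz
  -- coordinate equations
  have eΦ0 : y - z = c * x := by
    have := congrFun (hΦv'.symm.trans hΦv) 0
    simpa [hlast, h0, h1, h2, sub_eq_add_neg] using this
  have eΦ1 : x - z = c * y := by
    have := congrFun (hΦv'.symm.trans hΦv) 1
    simpa [hlast, h0, h1, h2, sub_eq_add_neg] using this
  have eΦ2 : -z = c * z := by
    have := congrFun (hΦv'.symm.trans hΦv) 2
    simpa [hlast, h0, h1, h2] using this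
  have eΨ0 : x - z = d * x := by
    have := congrFun (hΨv'.symm.trans hΨv) 0
    simpa [hlast, h0, h1, h2, sub_eq_add_neg] using this
  have eΨ1 : -z = d * y := by
    have := congrFun (hΨv'.symm.trans hΨv) 1
    simpa [hlast, h0, h1, h2] using this
  have eΨ2 : y - z = d * z := by
    have := congrFun (hΨv'.symm.trans hΨv) 2
    simpa [hlast, h0, h1, h2, sub_eq_add_neg] using this
  -- c and d are nonzero
  have hcne : c ≠ 0 := by
    intro h
    rw [h, zero_smul] at hΦv
    exact hv0 (EmbeddingLike.map_eq_zero_iff.mp hΦv)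
  have hdne : d ≠ 0 := by
    intro h
    rw [h, zero_smul] at hΨv
    exact hv0 (EmbeddingLike.map_eq_zero_iff.mp hΨv)
  have hv0' : ¬(x = 0 ∧ y = 0 ∧ z = 0) := by
    rintro ⟨h0', h1', h2'⟩
    apply hv0
    funext i
    fin_cases i <;> assumption
  have h2ne : (2 : ZMod p) ≠ 0 := by
    intro h
    have := (ZMod.natCast_eq_zero_iff 2 p).mp (by exact_mod_cast h)
    have := Nat.le_of_dvd (by norm_num) this
    omega
  by_cases hzz : z = 0
  · -- z = 0 : then y = 0 then x = 0
    have hy0 : y = 0 := by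
      have : d * y = 0 := by rw [← eΨ1, hzz, neg_zero]
      exact (mul_eq_zero.mp this).resolve_left hdne
    have hx0 : x = 0 := by
      have : c * x = 0 := by rw [← eΦ0, hy0, hzz, sub_zero]
      exact (mul_eq_zero.mp this).resolve_left hcne
    exact hv0' ⟨hx0, hy0, hzz⟩
  · -- z ≠ 0 : c = -1
    have hcm1 : c = -1 := by
      have h : (c + 1) * z = 0 := by rw [add_mul, one_mul, ← eΦ2]; ring
      have := (mul_eq_zero.mp h).resolve_right hzz
      linear_combination this
    have hzxy : z = x + y := by linear_combination -eΦ0 - x * hcm1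
    -- Ψ equations with z = x + y
    have e1 : -y = d * x := by linear_combination eΨ0 + hzxy
    have e2 : -(x + y) = d * y := by linear_combination eΨ1 + hzxy
    have e3 : -x = d * (x + y) := by linear_combination eΨ2 + hzxy + d * hzxy
    have hy0 : y = 0 := by
      have h2y : 2 * y = 0 := by linear_combination e3 - e1 - e2
      exact (mul_eq_zero.mp h2y).resolve_left h2ne
    have hx0 : x = 0 := by
      have : d * x = 0 := by rw [← e1, hy0, neg_zero]
      exact (mul_eq_zero.mp this).resolve_left hdne
    exact hzz (by rw [hzxy, hx0, hy0, add_zero])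
end

section
/- Let p ≥ 3 be prime, H = ⟨a_1, a_2, a_3⟩ ≅ (Z/pZ)^3 with a_4 := (a_1a_2a_3)^{-1}, and let Q_1* = ⟨Φ_3⟩ where Φ_3 swaps a_3 and a_4. The set of K ∈ F(p,3) invariant under Q_1* is exactly {K(l) : l = 1,...,p-1} ∪ {K((p-1)/2, (p-1)/2)}, where K(l) = ⟨a_1^l a_2^{-1}⟩ and K(r,s) = ⟨a_1^r a_2^s a_3^{-1}⟩. -/
lemma memC {p : ℕ} [Fact p.Prime] (v x : Fin 3 → ZMod p) :
    x ∈ AddSubgroup.closure {v} ↔ ∃ c : ZMod p, c • v = x := by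
  rw [AddSubgroup.mem_closure_singleton]
  constructor
  · rintro ⟨n, rfl⟩; exact ⟨(n : ZMod p), by rw [Int.cast_smul_eq_zsmul]⟩
  · rintro ⟨c, rfl⟩
    refine ⟨(c.val : ℤ), ?_⟩
    rw [← Int.cast_smul_eq_zsmul (ZMod p)]
    push_cast [ZMod.natCast_val, ZMod.cast_id]
    rfl

lemma closure_smul_eq {p : ℕ} [Fact p.Prime] (v : Fin 3 → ZMod p) (c : ZMod p) (hc : c ≠ 0) :
    AddSubgroup.closure {c • v} = AddSubgroup.closure {v} := by
  apply le_antisymm <;> rw [AddSubgroup.closure_le, Set.singleton_subset_iff] <;>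
    rw [SetLike.mem_coe, memC]
  · exact ⟨c, rfl⟩
  · exact ⟨c⁻¹, by rw [smul_smul, inv_mul_cancel₀ hc, one_smul]⟩

lemma quot2 {p : ℕ} [Fact p.Prime] (v : Fin 3 → ZMod p) (hv : v 2 = -1) :
    Nonempty ((Fin 3 → ZMod p) ⧸ AddSubgroup.closure {v} ≃+ ZMod p × ZMod p) := by
  let f : (Fin 3 → ZMod p) →+ ZMod p × ZMod p :=
    { toFun := fun w => (w 0 + v 0 * w 2, w 1 + v 1 * w 2)
      map_zero' := by simp
      map_add' := by intro x y; simp [Pi.add_apply]; constructor <;> ring }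
  have hker : f.ker = AddSubgroup.closure {v} := by
    ext w
    rw [AddMonoidHom.mem_ker, memC]
    constructor
    · intro h
      have h1 : w 0 + v 0 * w 2 = 0 := congrArg Prod.fst h
      have h2 : w 1 + v 1 * w 2 = 0 := congrArg Prod.snd h
      refine ⟨-w 2, funext fun i => ?_⟩
      fin_cases i
      · show -w 2 * v 0 = w 0; linear_combination -h1
      · show -w 2 * v 1 = w 1; linear_combination -h2
      · show -w 2 * v 2 = w 2; rw [hv]; ring
    · rintro ⟨c, rfl⟩
      show (_, _) = (0, 0)
      simp only [Pi.smul_apply, smul_eq_mul, hv, Prod.mk.injEq]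
      constructor <;> ring
  have hsurj : Function.Surjective f := by
    rintro ⟨x, y⟩
    exact ⟨![x, y, 0], by show (_, _) = _ ; simp [f]⟩
  exact ⟨hker ▸ QuotientAddGroup.quotientKerEquivOfSurjective f hsurj⟩

lemma quot1 {p : ℕ} [Fact p.Prime] (v : Fin 3 → ZMod p) (hv : v 1 = -1) :
    Nonempty ((Fin 3 → ZMod p) ⧸ AddSubgroup.closure {v} ≃+ ZMod p × ZMod p) := by
  let f : (Fin 3 → ZMod p) →+ ZMod p × ZMod p :=
    { toFun := fun w => (w 0 + v 0 * w 1, w 2 + v 2 * w 1)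
      map_zero' := by simp
      map_add' := by intro x y; simp [Pi.add_apply]; constructor <;> ring }
  have hker : f.ker = AddSubgroup.closure {v} := by
    ext w
    rw [AddMonoidHom.mem_ker, memC]
    constructor
    · intro h
      have h1 : w 0 + v 0 * w 1 = 0 := congrArg Prod.fst h
      have h2 : w 2 + v 2 * w 1 = 0 := congrArg Prod.snd h
      refine ⟨-w 1, funext fun i => ?_⟩
      fin_cases i
      · show -w 1 * v 0 = w 0; linear_combination -h1
      · show -w 1 * v 1 = w 1; rw [hv]; ring
      · show -w 1 * v 2 = w 2; linear_combination -h2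
    · rintro ⟨c, rfl⟩
      show (_, _) = (0, 0)
      simp only [Pi.smul_apply, smul_eq_mul, hv, Prod.mk.injEq]
      constructor <;> ring
  have hsurj : Function.Surjective f := by
    rintro ⟨x, y⟩
    exact ⟨![x, 0, y], by show (_, _) = _ ; simp [f]⟩
  exact ⟨hker ▸ QuotientAddGroup.quotientKerEquivOfSurjective f hsurj⟩

/-- For `p ≥ 3` prime, `H = ⟨a_1,a_2,a_3⟩ ≅ (ℤ/pℤ)³` with
`a_4 := -(a_1+a_2+a_3)`, let `Φ₃` be the automorphism of `H` swapping `a_3`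
and `a_4` (generating `Q₁*`).  The members of `F(p,3)` invariant under `Φ₃`
are exactly the groups `K(l) = ⟨a_1^l a_2^{-1}⟩`, `l ∈ {1,…,p-1}`, together
with `K((p-1)/2, (p-1)/2)` where `K(r,s) = ⟨a_1^r a_2^s a_3^{-1}⟩`. -/
theorem stmt11 (p : ℕ) [Fact p.Prime] (hp : 3 ≤ p)
    (a : Fin 4 → (Fin 3 → ZMod p))
    (ha : ∀ j : Fin 3, a j.castSucc = Pi.single j 1)
    (hlast : a 3 = -(a 0 + a 1 + a 2))
    (Φ : (Fin 3 → ZMod p) ≃+ (Fin 3 → ZMod p))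
    (hΦ0 : Φ (a 0) = a 0) (hΦ1 : Φ (a 1) = a 1)
    (hΦ2 : Φ (a 2) = a 3) (hΦ3 : Φ (a 3) = a 2) :
    ∀ K : AddSubgroup (Fin 3 → ZMod p),
      ((Nonempty ((Fin 3 → ZMod p) ⧸ K ≃+ (ZMod p × ZMod p)) ∧ ∀ j, a j ∉ K) ∧
        AddSubgroup.map Φ.toAddMonoidHom K = K) ↔
      ((∃ l : ZMod p, l ≠ 0 ∧ K = AddSubgroup.closure {l • a 0 - a 1}) ∨
       K = AddSubgroup.closure
         {(((p - 1) / 2 : ℕ) : ZMod p) • a 0 + (((p - 1) / 2 : ℕ) : ZMod p) • a 1 - a 2}) := by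
  have hprime : p.Prime := Fact.out
  haveI : NeZero p := ⟨hprime.ne_zero⟩
  have ha0 : a 0 = Pi.single (0 : Fin 3) 1 := ha 0
  have ha1 : a 1 = Pi.single (1 : Fin 3) 1 := ha 1
  have ha2 : a 2 = Pi.single (2 : Fin 3) 1 := ha 2
  have ha3 : a 3 = ![-1, -1, -1] := by
    rw [hlast, ha0, ha1, ha2]; funext i; fin_cases i <;> simp
  have hA0 : a 0 = ![1, 0, 0] := by rw [ha0]; funext i; fin_cases i <;> simp
  have hA1 : a 1 = ![0, 1, 0] := by rw [ha1]; funext i; fin_cases i <;> simp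
  have hA2 : a 2 = ![0, 0, 1] := by rw [ha2]; funext i; fin_cases i <;> simp
  -- (2 : ZMod p) ≠ 0
  have h2 : (2 : ZMod p) ≠ 0 := by
    intro h
    have : ((2 : ℕ) : ZMod p) = 0 := by push_cast; exact h
    rw [ZMod.natCast_eq_zero_iff] at this
    have := Nat.le_of_dvd (by norm_num) this
    omega
  have h1 : (1 : ZMod p) ≠ 0 := one_ne_zero
  set c : ZMod p := (((p - 1) / 2 : ℕ) : ZMod p) with hcdef
  have hc : 2 * c = -1 := by
    have hdvd : 2 ∣ p - 1 := by
      obtain ⟨k, hk⟩ := hprime.odd_of_ne_two (by omega)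
      exact ⟨k, by omega⟩
    have : ((p - 1) / 2 : ℕ) * 2 = p - 1 := Nat.div_mul_cancel hdvd
    have hcast : c * 2 = ((p - 1 : ℕ) : ZMod p) := by
      rw [hcdef, show ((2 : ZMod p)) = ((2 : ℕ) : ZMod p) by norm_cast, ← Nat.cast_mul, this]
    rw [mul_comm, hcast, Nat.cast_sub (by omega), ZMod.natCast_self]
    simp
  have hcne : c ≠ 0 := by
    intro h
    have hc' := hc
    rw [h, mul_zero] at hc'
    exact h1 (by linear_combination hc')
  -- decomposition and Φ formula
  have hdecomp : ∀ w : Fin 3 → ZMod p, w = w 0 • a 0 + w 1 • a 1 + w 2 • a 2 := by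
    intro w; funext i
    rw [ha0, ha1, ha2]
    fin_cases i <;> simp
  have hΦsmul : ∀ (t : ZMod p) (w : Fin 3 → ZMod p), Φ (t • w) = t • Φ w := by
    intro t w
    have h1 : t • w = t.val • w := by
      rw [← Nat.cast_smul_eq_nsmul (ZMod p), ZMod.natCast_val, ZMod.cast_id]
    have h2 : t • Φ w = t.val • Φ w := by
      rw [← Nat.cast_smul_eq_nsmul (ZMod p), ZMod.natCast_val, ZMod.cast_id]
    rw [h1, h2, map_nsmul]
  have hΦw : ∀ w : Fin 3 → ZMod p, Φ w = ![w 0 - w 2, w 1 - w 2, -w 2] := by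
    intro w
    have : Φ w = w 0 • a 0 + w 1 • a 1 + w 2 • a 3 := by
      conv_lhs => rw [hdecomp w]
      rw [map_add, map_add, hΦsmul, hΦsmul, hΦsmul, hΦ0, hΦ1, hΦ2]
    rw [this, ha0, ha1, ha3]
    funext i; fin_cases i <;> simp <;> ring
  have hΦΦ : ∀ w : Fin 3 → ZMod p, Φ (Φ w) = w := by
    intro w
    rw [hΦw w, hΦw]
    funext i; fin_cases i <;> simp <;> ring
  intro K
  constructor
  · rintro ⟨⟨⟨φ⟩, hnot⟩, hinv⟩
    have hcardH : Nat.card (Fin 3 → ZMod p) = p ^ 3 := by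
      rw [Nat.card_fun, Nat.card_zmod]; simp
    have hcardQ : Nat.card ((Fin 3 → ZMod p) ⧸ K) = p ^ 2 := by
      rw [Nat.card_congr φ.toEquiv, Nat.card_prod, Nat.card_zmod]; ring
    have hKcard : Nat.card K = p := by
      have h := AddSubgroup.card_eq_card_quotient_mul_card_addSubgroup K
      rw [hcardH, hcardQ] at h
      have hp2 : 0 < p ^ 2 := by positivity
      have : p ^ 2 * p = p ^ 2 * Nat.card K := by rw [← h]; ring
      exact (Nat.eq_of_mul_eq_mul_left hp2 this).symm
    -- find nonzero element
    have hKne : K ≠ ⊥ := by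
      intro h
      rw [h, AddSubgroup.card_bot] at hKcard
      omega
    obtain ⟨v, hvK, hv0⟩ : ∃ v ∈ K, v ≠ 0 := by
      by_contra h
      push_neg at h
      exact hKne (AddSubgroup.eq_bot_iff_forall K |>.mpr h)
    -- K = closure {v}
    have hle : AddSubgroup.closure {v} ≤ K := by
      rw [AddSubgroup.closure_le, Set.singleton_subset_iff]; exact hvK
    have horder : addOrderOf v = p := by
      refine addOrderOf_eq_prime ?_ hv0
      rw [← Nat.cast_smul_eq_nsmul (ZMod p), ZMod.natCast_self, zero_smul]
    have hKeq : AddSubgroup.closure {v} = K := by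
      refine AddSubgroup.eq_of_le_of_card_ge hle ?_
      rw [hKcard, ← AddSubgroup.zmultiples_eq_closure, Nat.card_zmultiples, horder]
    subst hKeq
    -- eigenvector
    obtain ⟨c₀, hc₀⟩ : ∃ c₀ : ZMod p, c₀ • v = Φ v := by
      rw [← memC, ← hinv]
      exact AddSubgroup.mem_map_of_mem _ (AddSubgroup.subset_closure rfl)
    obtain ⟨i0, hi0⟩ : ∃ i, v i ≠ 0 := Function.ne_iff.mp hv0
    have hsq : c₀ ^ 2 = 1 := by
      have hv2 : (c₀ ^ 2) • v = v := by
        have := congrArg Φ hc₀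
        rw [hΦsmul, hΦΦ, ← hc₀, smul_smul] at this
        rw [pow_two]
        exact this
      have := congrFun hv2 i0
      have h' : (c₀ ^ 2 - 1) * v i0 = 0 := by
        simp only [Pi.smul_apply, smul_eq_mul] at this
        linear_combination this
      rcases mul_eq_zero.mp h' with h | h
      · linear_combination h
      · exact absurd h hi0
    have hcases : c₀ = 1 ∨ c₀ = -1 := by
      rcases mul_eq_zero.mp (show (c₀ - 1) * (c₀ + 1) = 0 by linear_combination hsq) with h | h
      · left; linear_combination h
      · right; linear_combination h
    have hΦv := hΦw v
    rcases hcases with rfl | rfl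
    · -- c₀ = 1 : Φ v = v, v 2 = 0
      left
      rw [one_smul] at hc₀
      have hv2 : v 2 = 0 := by
        have := congrFun (hc₀.trans hΦv) 2
        simp only [Matrix.cons_val_two, Matrix.tail_cons, Matrix.head_cons] at this
        have h2v : (2 : ZMod p) * v 2 = 0 := by linear_combination this
        rcases mul_eq_zero.mp h2v with h | h
        · exact absurd h h2
        · exact h
      have hv0' : v 0 ≠ 0 := by
        intro h
        refine hnot 1 ?_
        rw [memC]
        refine ⟨(v 1)⁻¹, ?_⟩
        have hv1 : v 1 ≠ 0 := by
          intro h1'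
          apply hv0
          funext i; fin_cases i <;> assumption
        rw [hA1]; funext i; fin_cases i <;>
          simp [h, hv2, inv_mul_cancel₀ hv1]
      have hv1' : v 1 ≠ 0 := by
        intro h
        refine hnot 0 ?_
        rw [memC]
        refine ⟨(v 0)⁻¹, ?_⟩
        rw [hA0]; funext i; fin_cases i <;>
          simp [h, hv2, inv_mul_cancel₀ hv0']
      refine ⟨-(v 0) * (v 1)⁻¹, by simp [hv0', hv1'], ?_⟩
      have hrw : v = (-(v 1)) • ((-(v 0) * (v 1)⁻¹) • a 0 - a 1) := by
        rw [hA0, hA1]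
        funext i
        fin_cases i
        · show v 0 = -(v 1) * (-(v 0) * (v 1)⁻¹ * 1 - 0)
          field_simp
          ring
        · show v 1 = -(v 1) * (-(v 0) * (v 1)⁻¹ * 0 - 1)
          ring
        · show v 2 = -(v 1) * (-(v 0) * (v 1)⁻¹ * 0 - 0)
          rw [hv2]; ring
      conv_lhs => rw [hrw]
      rw [closure_smul_eq _ _ (neg_ne_zero.mpr hv1')]
    · -- c₀ = -1
      right
      have h0 := congrFun (hc₀.trans hΦv) 0
      have h1' := congrFun (hc₀.trans hΦv) 1
      simp only [Pi.smul_apply, smul_eq_mul, Matrix.cons_val_zero, Matrix.cons_val_one,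
        Matrix.head_cons] at h0 h1'
      have hv20 : 2 * v 0 = v 2 := by linear_combination -h0
      have hv21 : 2 * v 1 = v 2 := by linear_combination -h1'
      have hv2ne : v 2 ≠ 0 := by
        intro h
        apply hv0
        have e0 : v 0 = 0 := by
          rcases mul_eq_zero.mp (hv20.trans h) with h' | h'
          · exact absurd h' h2
          · exact h'
        have e1 : v 1 = 0 := by
          rcases mul_eq_zero.mp (hv21.trans h) with h' | h'
          · exact absurd h' h2
          · exact h'
        funext i; fin_cases i <;> assumption
      have hrw : v = (-(v 2)) • (c • a 0 + c • a 1 - a 2) := by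
        rw [hA0, hA1, hA2]
        funext i
        fin_cases i
        · show v 0 = -(v 2) * (c * 1 + c * 0 - 0)
          have key : (2 : ZMod p) * v 0 = 2 * (-(v 2) * (c * 1 + c * 0 - 0)) := by
            linear_combination hv20 + v 2 * hc
          exact mul_left_cancel₀ h2 key
        · show v 1 = -(v 2) * (c * 0 + c * 1 - 0)
          have key : (2 : ZMod p) * v 1 = 2 * (-(v 2) * (c * 0 + c * 1 - 0)) := by
            linear_combination hv21 + v 2 * hc
          exact mul_left_cancel₀ h2 key
        · show v 2 = -(v 2) * (c * 0 + c * 0 - 1)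
          ring
      conv_lhs => rw [hrw]
      rw [closure_smul_eq _ _ (neg_ne_zero.mpr hv2ne)]
  · rintro (⟨l, hl, rfl⟩ | rfl)
    · have hveq : l • a 0 - a 1 = ![l, -1, 0] := by
        rw [hA0, hA1]; funext i; fin_cases i <;> simp
      rw [hveq]
      refine ⟨⟨quot1 _ (by simp), ?_⟩, ?_⟩
      · intro j
        fin_cases j
        · show a 0 ∉ _
          rw [hA0, memC]; rintro ⟨t, ht⟩
          have h0' := congrFun ht 0
          have h1' := congrFun ht 1
          simp only [Pi.smul_apply, smul_eq_mul, Matrix.cons_val_zero, Matrix.cons_val_one,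
            Matrix.head_cons] at h0' h1'
          exact h1 (by linear_combination -h0' - l * h1')
        · show a 1 ∉ _
          rw [hA1, memC]; rintro ⟨t, ht⟩
          have h0' := congrFun ht 0
          have h1' := congrFun ht 1
          simp only [Pi.smul_apply, smul_eq_mul, Matrix.cons_val_zero, Matrix.cons_val_one,
            Matrix.head_cons] at h0' h1'
          exact hl (by linear_combination -h0' - l * h1')
        · show a 2 ∉ _
          rw [hA2, memC]; rintro ⟨t, ht⟩
          have h2' := congrFun ht 2
          simp only [Pi.smul_apply, smul_eq_mul, Matrix.cons_val_two, Matrix.tail_cons,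
            Matrix.head_cons] at h2'
          exact h1 (by linear_combination -h2')
        · show a 3 ∉ _
          rw [ha3, memC]; rintro ⟨t, ht⟩
          have h2' := congrFun ht 2
          simp only [Pi.smul_apply, smul_eq_mul, Matrix.cons_val_two, Matrix.tail_cons,
            Matrix.head_cons] at h2'
          exact h1 (by linear_combination h2')
      · rw [AddMonoidHom.map_closure, Set.image_singleton]
        have himg : Φ.toAddMonoidHom ![l, -1, 0] = ![l, -1, 0] := by
          show Φ _ = _
          rw [hΦw]; funext i; fin_cases i <;> simp
        rw [himg]
    · have hveq : c • a 0 + c • a 1 - a 2 = ![c, c, -1] := by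
        rw [hA0, hA1, hA2]; funext i; fin_cases i <;> simp
      rw [hveq]
      refine ⟨⟨quot2 _ (by simp), ?_⟩, ?_⟩
      · intro j
        fin_cases j
        · show a 0 ∉ _
          rw [hA0, memC]; rintro ⟨t, ht⟩
          have h0' := congrFun ht 0
          have h2' := congrFun ht 2
          simp only [Pi.smul_apply, smul_eq_mul, Matrix.cons_val_zero, Matrix.cons_val_two,
            Matrix.tail_cons, Matrix.head_cons] at h0' h2'
          exact h1 (by linear_combination -h0' - c * h2')
        · show a 1 ∉ _
          rw [hA1, memC]; rintro ⟨t, ht⟩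
          have h1c := congrFun ht 1
          have h2' := congrFun ht 2
          simp only [Pi.smul_apply, smul_eq_mul, Matrix.cons_val_one, Matrix.cons_val_two,
            Matrix.tail_cons, Matrix.head_cons, Matrix.cons_val_zero] at h1c h2'
          exact h1 (by linear_combination -h1c - c * h2')
        · show a 2 ∉ _
          rw [hA2, memC]; rintro ⟨t, ht⟩
          have h0' := congrFun ht 0
          have h2' := congrFun ht 2
          simp only [Pi.smul_apply, smul_eq_mul, Matrix.cons_val_zero, Matrix.cons_val_two,
            Matrix.tail_cons, Matrix.head_cons] at h0' h2'
          exact hcne (by linear_combination -h0' - c * h2')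
        · show a 3 ∉ _
          rw [ha3, memC]; rintro ⟨t, ht⟩
          have h0' := congrFun ht 0
          have h2' := congrFun ht 2
          simp only [Pi.smul_apply, smul_eq_mul, Matrix.cons_val_zero, Matrix.cons_val_two,
            Matrix.tail_cons, Matrix.head_cons] at h0' h2'
          exact h1 (by linear_combination 2 * c * h2' + 2 * h0' - hc)
      · rw [AddMonoidHom.map_closure, Set.image_singleton]
        have himg : Φ.toAddMonoidHom ![c, c, -1] = (-1 : ZMod p) • ![c, c, -1] := by
          show Φ _ = _
          rw [hΦw]; funext i
          fin_cases i
          · show (![c, c, -1] : Fin 3 → ZMod p) 0 - ![c, c, -1] 2 = -1 * ![c, c, -1] 0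
            simp; linear_combination hc
          · show (![c, c, -1] : Fin 3 → ZMod p) 1 - ![c, c, -1] 2 = -1 * ![c, c, -1] 1
            simp; linear_combination hc
          · show -(![c, c, -1] : Fin 3 → ZMod p) 2 = -1 * ![c, c, -1] 2
            simp
        rw [himg, closure_smul_eq _ _ (neg_ne_zero.mpr h1)]
end

section
/- Let p ≥ 3 be prime, H = ⟨a_1, a_2, a_3⟩ ≅ (Z/pZ)^3 with a_4 := (a_1a_2a_3)^{-1}, and let Q_3* = ⟨Φ_5⟩ where Φ_5 is the 3-cycle sending a_2 ↦ a_3 ↦ a_4 ↦ a_2 and fixing a_1. If p = 3 or p ≡ 2 mod 3, then no K ∈ F(p,3) is Q_3*-invariant. If p ≡ 1 mod 3, the Q_3*-invariant members of F(p,3) are exactly the groups K(s/(1-s), s) for s ∈ {1,...,p-1} with s^2 + s + 1 ≡ 0 mod p (the quotient s/(1-s) computed in Z/pZ). -/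
open AddSubgroup

variable {p : ℕ} [Fact p.Prime]

lemma aux_smul_eq_nsmul (c : ZMod p) (w : Fin 3 → ZMod p) : c • w = c.val • w := by
  rw [← Nat.cast_smul_eq_nsmul (ZMod p), ZMod.natCast_val, ZMod.cast_id]

lemma aux_smul_mem_closure (c : ZMod p) (w : Fin 3 → ZMod p) :
    c • w ∈ AddSubgroup.closure {w} := by
  rw [aux_smul_eq_nsmul]
  exact AddSubgroup.nsmul_mem _ (AddSubgroup.subset_closure (Set.mem_singleton w)) _

lemma aux_smul_mem {K : AddSubgroup (Fin 3 → ZMod p)} {v : Fin 3 → ZMod p}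
    (hv : v ∈ K) (c : ZMod p) : c • v ∈ K := by
  rw [aux_smul_eq_nsmul]; exact AddSubgroup.nsmul_mem _ hv _

lemma aux_closure_smul {c : ZMod p} (hc : c ≠ 0) (w : Fin 3 → ZMod p) :
    AddSubgroup.closure {c • w} = AddSubgroup.closure {w} := by
  apply le_antisymm
  · rw [AddSubgroup.closure_le, Set.singleton_subset_iff]
    exact aux_smul_mem_closure c w
  · rw [AddSubgroup.closure_le, Set.singleton_subset_iff]
    have h := aux_smul_mem_closure (p := p) c⁻¹ (c • w)
    rwa [smul_smul, inv_mul_cancel₀ hc, one_smul] at h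

lemma aux_equiv_smul (Φ : (Fin 3 → ZMod p) ≃+ (Fin 3 → ZMod p)) (c : ZMod p)
    (x : Fin 3 → ZMod p) : Φ (c • x) = c • Φ x := by
  rw [aux_smul_eq_nsmul, aux_smul_eq_nsmul, map_nsmul]

lemma aux_decomp (v : Fin 3 → ZMod p) :
    v = v 0 • (Pi.single 0 1 : Fin 3 → ZMod p) + v 1 • (Pi.single 1 1 : Fin 3 → ZMod p)
      + v 2 • (Pi.single 2 1 : Fin 3 → ZMod p) := by
  funext i; fin_cases i <;> simp [Pi.single_apply]

lemma aux_forward (hp : 3 ≤ p) (a : Fin 4 → (Fin 3 → ZMod p))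
    (ha0 : a 0 = Pi.single 0 1) (ha1 : a 1 = Pi.single 1 1) (ha2 : a 2 = Pi.single 2 1)
    (hlast : a 3 = -(a 0 + a 1 + a 2))
    (Φ : (Fin 3 → ZMod p) ≃+ (Fin 3 → ZMod p))
    (hΦ0 : Φ (a 0) = a 0) (hΦ1 : Φ (a 1) = a 2) (hΦ2 : Φ (a 2) = a 3)
    (K : AddSubgroup (Fin 3 → ZMod p))
    (hquot : Nonempty ((Fin 3 → ZMod p) ⧸ K ≃+ (ZMod p × ZMod p)))
    (hnot : ∀ j, a j ∉ K)
    (hmap : AddSubgroup.map Φ.toAddMonoidHom K = K) :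
    ∃ s : ZMod p, s ≠ 0 ∧ s ≠ 1 ∧ s ^ 2 + s + 1 = 0 ∧
      K = AddSubgroup.closure {(s / (1 - s)) • a 0 + s • a 1 - a 2} := by
  have hp0 : (p : ℕ) ≠ 0 := (Fact.out : p.Prime).pos.ne'
  -- cardinalities
  have hcardV : Nat.card (Fin 3 → ZMod p) = p ^ 3 := by
    simp [Nat.card_eq_fintype_card, ZMod.card]
  obtain ⟨e⟩ := hquot
  have hq : Nat.card ((Fin 3 → ZMod p) ⧸ K) = p ^ 2 := by
    rw [Nat.card_congr e.toEquiv]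
    simp [Nat.card_eq_fintype_card, ZMod.card]
    ring
  have hK : Nat.card K = p := by
    have h := AddSubgroup.card_eq_card_quotient_mul_card_addSubgroup K
    rw [hcardV, hq] at h
    have h' : p ^ 2 * p = p ^ 2 * Nat.card K := by rw [← h]; ring
    exact (Nat.eq_of_mul_eq_mul_left (by positivity) h').symm
  have hKbot : K ≠ ⊥ := by
    intro h
    rw [h, AddSubgroup.card_bot] at hK
    omega
  obtain ⟨v, hvK, hv0⟩ := (AddSubgroup.bot_or_exists_ne_zero K).resolve_left hKbot
  have hpv : p • v = 0 := by
    funext i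
    simp [Pi.smul_apply, nsmul_eq_mul, ZMod.natCast_self]
  have hord : addOrderOf v = p := addOrderOf_eq_prime hpv hv0
  have hKv : K = AddSubgroup.closure {v} := by
    refine (AddSubgroup.eq_of_le_of_card_ge ?_ ?_).symm
    · rw [AddSubgroup.closure_le, Set.singleton_subset_iff]; exact hvK
    · rw [← AddSubgroup.zmultiples_eq_closure, Nat.card_zmultiples, hord, hK]
  have hΦv : Φ v ∈ K := by
    rw [← hmap]
    exact AddSubgroup.mem_map_of_mem _ hvK
  obtain ⟨n, hn⟩ := AddSubgroup.mem_closure_singleton.1 (hKv ▸ hΦv)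
  have hc : Φ v = (n : ZMod p) • v := by rw [Int.cast_smul_eq_zsmul, hn]
  set c : ZMod p := (n : ZMod p) with hcdef
  have hdecomp : v = v 0 • a 0 + v 1 • a 1 + v 2 • a 2 := by
    rw [ha0, ha1, ha2]; exact aux_decomp v
  have key : c • v = v 0 • a 0 + v 1 • a 2 + v 2 • a 3 := by
    conv_lhs => rw [← hc, hdecomp]
    rw [map_add, map_add, aux_equiv_smul, aux_equiv_smul, aux_equiv_smul, hΦ0, hΦ1, hΦ2]
  have h0 : c * v 0 = v 0 - v 2 := by
    have h := congrFun key 0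
    simp [ha0, ha1, ha2, hlast, Pi.single_apply] at h
    linear_combination h
  have h1 : c * v 1 = -(v 2) := by
    have h := congrFun key 1
    simp [ha0, ha1, ha2, hlast, Pi.single_apply] at h
    linear_combination h
  have h2 : c * v 2 = v 1 - v 2 := by
    have h := congrFun key 2
    simp [ha0, ha1, ha2, hlast, Pi.single_apply] at h
    linear_combination h
  have hZ : v 2 ≠ 0 := by
    intro h
    have hY0 : v 1 = 0 := by rw [h, mul_zero, sub_zero] at h2; exact h2.symm
    have hX0 : v 0 ≠ 0 := by
      intro hX0
      apply hv0
      rw [hdecomp, hX0, hY0, h]; simp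
    apply hnot 0
    have hv' : v = v 0 • a 0 := by
      nth_rewrite 1 [hdecomp]
      rw [hY0, h]; simp
    have heq : a 0 = (v 0)⁻¹ • v := by
      nth_rewrite 2 [hv']
      rw [smul_smul, inv_mul_cancel₀ hX0, one_smul]
    rw [heq]
    exact aux_smul_mem hvK (v 0)⁻¹
  have hcc : c ^ 2 + c + 1 = 0 := by
    have h : (c ^ 2 + c + 1) * v 2 = 0 := by linear_combination c * h2 + h1
    exact (mul_eq_zero.1 h).resolve_right hZ
  have hc1 : c ≠ 1 := by
    intro h
    apply hZ
    rw [h, one_mul] at h0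
    linear_combination h0
  have hc0 : c ≠ 0 := by
    intro h
    rw [h] at hcc
    simp at hcc
  have hZX : v 2 = v 0 * (1 - c) := by linear_combination h0
  have hYZ : v 1 = (c + 1) * v 2 := by linear_combination -h2
  have hs1 : (c : ZMod p) ^ 2 ≠ 1 := by
    intro h
    have h' : (c - 1) * (c + 1) = 0 := by linear_combination h
    rcases mul_eq_zero.1 h' with h'' | h''
    · exact hc1 (by linear_combination h'')
    · have hcm : c = -1 := by linear_combination h''
      rw [hcm] at hcc
      norm_num at hcc
  have h1s2 : 1 - c ^ 2 ≠ 0 := fun h => hs1 (by linear_combination -h)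
  refine ⟨c ^ 2, pow_ne_zero 2 hc0, hs1, by linear_combination (c ^ 2 - c + 1) * hcc, ?_⟩
  have hX' : v 0 = (-(v 2)) * (c ^ 2 / (1 - c ^ 2)) := by
    rw [mul_div_assoc', eq_div_iff h1s2]
    linear_combination c ^ 2 * hZX + v 0 * (1 - c) * hcc
  have hY' : v 1 = (-(v 2)) * c ^ 2 := by linear_combination hYZ + v 2 * hcc
  have hveq : v = (-(v 2)) • ((c ^ 2 / (1 - c ^ 2)) • a 0 + c ^ 2 • a 1 - a 2) := by
    nth_rewrite 1 [hdecomp]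
    rw [hX', hY']
    module
  rw [hKv, hveq, aux_closure_smul (neg_ne_zero.2 hZ)]

lemma aux_zmod3 : ∀ t : ZMod 3, t ^ 2 + t + 1 = 0 → t = 1 := by decide

lemma aux_backward (hp : 3 ≤ p) (a : Fin 4 → (Fin 3 → ZMod p))
    (ha0 : a 0 = Pi.single 0 1) (ha1 : a 1 = Pi.single 1 1) (ha2 : a 2 = Pi.single 2 1)
    (hlast : a 3 = -(a 0 + a 1 + a 2))
    (Φ : (Fin 3 → ZMod p) ≃+ (Fin 3 → ZMod p))
    (hΦ0 : Φ (a 0) = a 0) (hΦ1 : Φ (a 1) = a 2) (hΦ2 : Φ (a 2) = a 3)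
    (s : ZMod p) (hs0 : s ≠ 0) (hs1 : s ≠ 1) (hss : s ^ 2 + s + 1 = 0) :
    (Nonempty ((Fin 3 → ZMod p) ⧸
        AddSubgroup.closure {(s / (1 - s)) • a 0 + s • a 1 - a 2} ≃+ (ZMod p × ZMod p)) ∧
      ∀ j, a j ∉ AddSubgroup.closure {(s / (1 - s)) • a 0 + s • a 1 - a 2}) ∧
    AddSubgroup.map Φ.toAddMonoidHom
        (AddSubgroup.closure {(s / (1 - s)) • a 0 + s • a 1 - a 2}) =
      AddSubgroup.closure {(s / (1 - s)) • a 0 + s • a 1 - a 2} := by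
  have h1s : 1 - s ≠ 0 := sub_ne_zero.2 (Ne.symm hs1)
  have hsm1 : s ≠ -1 := by
    intro h
    rw [h] at hss
    norm_num at hss
  have h1ps : 1 + s ≠ 0 := fun h => hsm1 (by linear_combination h)
  have hs3 : s ^ 3 = 1 := by linear_combination (s - 1) * hss
  have hA3 : a 3 = ![-1, -1, -1] := by
    rw [hlast, ha0, ha1, ha2]
    funext i; fin_cases i <;> simp [Pi.single_apply]
  set W : Fin 3 → ZMod p := ![s / (1 - s), s, -1] with hW
  have hwfun : (s / (1 - s)) • a 0 + s • a 1 - a 2 = W := by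
    rw [ha0, ha1, ha2]
    funext i; fin_cases i <;> simp [hW, Pi.single_apply]
  rw [hwfun]
  set f : (Fin 3 → ZMod p) →+ (ZMod p × ZMod p) :=
    { toFun := fun u => (u 0 + (s / (1 - s)) * u 2, u 1 + s * u 2)
      map_zero' := by simp
      map_add' := by
        intro u v
        simp only [Pi.add_apply, Prod.mk_add_mk, Prod.mk.injEq]
        constructor <;> ring } with hf
  have hfapp : ∀ u : Fin 3 → ZMod p, f u = (u 0 + (s / (1 - s)) * u 2, u 1 + s * u 2) :=
    fun u => rfl
  have hfW : f W = 0 := by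
    rw [hfapp, hW]
    simp
  have hker : f.ker = AddSubgroup.closure {W} := by
    apply le_antisymm
    · intro u hu
      rw [AddMonoidHom.mem_ker, hfapp, Prod.mk_eq_zero] at hu
      obtain ⟨hu1, hu2⟩ := hu
      have hueq : u = (-(u 2)) • W := by
        have h0 : u 0 = -(u 2) * (s / (1 - s)) := by linear_combination hu1
        have h1 : u 1 = -(u 2) * s := by linear_combination hu2
        have h2 : u 2 = -(u 2) * (-1) := by ring
        funext i; fin_cases i <;> simp [hW]
        · linear_combination hu1
        · linear_combination hu2
      rw [hueq]
      exact aux_smul_mem_closure _ _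
    · rw [AddSubgroup.closure_le, Set.singleton_subset_iff]
      exact hfW
  have hsurj : Function.Surjective f := by
    intro q
    refine ⟨![q.1, q.2, 0], ?_⟩
    rw [hfapp]
    simp
  have hmem : ∀ u : Fin 3 → ZMod p, f u ≠ 0 → u ∉ AddSubgroup.closure {W} := by
    intro u hu hmem'
    rw [← hker, AddMonoidHom.mem_ker] at hmem'
    exact hu hmem'
  refine ⟨⟨?_, ?_⟩, ?_⟩
  · rw [← hker]
    exact ⟨QuotientAddGroup.quotientKerEquivOfSurjective f hsurj⟩
  · have e0 : f (a 0) ≠ 0 := by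
      rw [hfapp, ha0]
      simp [Prod.ext_iff]
    have e1 : f (a 1) ≠ 0 := by
      rw [hfapp, ha1]
      simp [Prod.ext_iff]
    have e2 : f (a 2) ≠ 0 := by
      rw [hfapp, ha2]
      simp [Prod.ext_iff, hs0]
    have e3 : f (a 3) ≠ 0 := by
      rw [hfapp, hA3]
      simp only [Matrix.cons_val_zero, Matrix.cons_val_one, Matrix.head_cons, Ne,
        Prod.mk_eq_zero, not_and]
      intro _ h
      apply h1ps
      have h' : (![-1, -1, -1] : Fin 3 → ZMod p) 2 = -1 := by simp
      rw [h'] at h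
      linear_combination -h
    intro j
    fin_cases j
    exacts [hmem _ e0, hmem _ e1, hmem _ e2, hmem _ e3]
  · have hΦW : Φ W = (s ^ 2) • W := by
      rw [← hwfun, map_sub, map_add, aux_equiv_smul, aux_equiv_smul, hΦ0, hΦ1, hΦ2, hA3,
        ha0, ha1, ha2]
      funext i
      fin_cases i <;> simp [hW, Pi.single_apply]
      · field_simp
        linear_combination -hs3
      · linear_combination -hs3
      · linear_combination hss
    rw [AddMonoidHom.map_closure, Set.image_singleton]
    have hcoe : Φ.toAddMonoidHom W = Φ W := rfl
    rw [hcoe, hΦW, aux_closure_smul (pow_ne_zero 2 hs0)]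

/-- For `p ≥ 3` prime, `H = ⟨a_1,a_2,a_3⟩ ≅ (ℤ/pℤ)³` with
`a_4 := -(a_1+a_2+a_3)`, let `Φ₅` be the automorphism of `H` fixing `a_1` and
cycling `a_2 ↦ a_3 ↦ a_4 ↦ a_2` (generating `Q₃*`).  If `p = 3` or
`p ≡ 2 (mod 3)` then no `K ∈ F(p,3)` is `Φ₅`-invariant; if `p ≡ 1 (mod 3)`,
the `Φ₅`-invariant members of `F(p,3)` are exactly the groups
`K(s/(1-s), s)` for `s ∈ {1,…,p-1}` with `s² + s + 1 ≡ 0 (mod p)`. -/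
theorem stmt12 (p : ℕ) [Fact p.Prime] (hp : 3 ≤ p)
    (a : Fin 4 → (Fin 3 → ZMod p))
    (ha : ∀ j : Fin 3, a j.castSucc = Pi.single j 1)
    (hlast : a 3 = -(a 0 + a 1 + a 2))
    (Φ : (Fin 3 → ZMod p) ≃+ (Fin 3 → ZMod p))
    (hΦ0 : Φ (a 0) = a 0) (hΦ1 : Φ (a 1) = a 2)
    (hΦ2 : Φ (a 2) = a 3) (hΦ3 : Φ (a 3) = a 1) :
    ((p = 3 ∨ p % 3 = 2) →
      ∀ K : AddSubgroup (Fin 3 → ZMod p),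
        (Nonempty ((Fin 3 → ZMod p) ⧸ K ≃+ (ZMod p × ZMod p)) ∧ ∀ j, a j ∉ K) →
        AddSubgroup.map Φ.toAddMonoidHom K ≠ K) ∧
    (p % 3 = 1 →
      ∀ K : AddSubgroup (Fin 3 → ZMod p),
        ((Nonempty ((Fin 3 → ZMod p) ⧸ K ≃+ (ZMod p × ZMod p)) ∧ ∀ j, a j ∉ K) ∧
          AddSubgroup.map Φ.toAddMonoidHom K = K) ↔
        (∃ s : ZMod p, s ≠ 0 ∧ s ^ 2 + s + 1 = 0 ∧
          K = AddSubgroup.closure {(s / (1 - s)) • a 0 + s • a 1 - a 2})) := by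
  have ha0 : a 0 = Pi.single 0 1 := by simpa using ha 0
  have ha1 : a 1 = Pi.single 1 1 := by simpa using ha 1
  have ha2 : a 2 = Pi.single 2 1 := by simpa using ha 2
  constructor
  · rintro hcase K ⟨hquot, hnot⟩ hmap
    obtain ⟨s, hs0, hs1, hss, -⟩ :=
      aux_forward hp a ha0 ha1 ha2 hlast Φ hΦ0 hΦ1 hΦ2 K hquot hnot hmap
    rcases hcase with rfl | hmod
    · exact hs1 (aux_zmod3 s hss)
    · haveI : Fact (Nat.Prime 3) := ⟨Nat.prime_three⟩
      have hs3 : s ^ 3 = 1 := by linear_combination (s - 1) * hss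
      have horder : orderOf s = 3 := orderOf_eq_prime hs3 hs1
      have hdvd : orderOf s ∣ p - 1 :=
        orderOf_dvd_of_pow_eq_one (ZMod.pow_card_sub_one_eq_one hs0)
      rw [horder] at hdvd
      omega
  · intro hmod K
    constructor
    · rintro ⟨⟨hquot, hnot⟩, hmap⟩
      obtain ⟨s, hs0, hs1, hss, hKeq⟩ :=
        aux_forward hp a ha0 ha1 ha2 hlast Φ hΦ0 hΦ1 hΦ2 K hquot hnot hmap
      exact ⟨s, hs0, hss, hKeq⟩
    · rintro ⟨s, hs0, hss, rfl⟩
      have hs1 : s ≠ 1 := by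
        intro h
        rw [h] at hss
        have h3 : ((3 : ℕ) : ZMod p) = 0 := by push_cast; linear_combination hss
        have hdvd : p ∣ 3 := (ZMod.natCast_eq_zero_iff 3 p).1 h3
        have hp' : p ≠ 1 := (Fact.out : p.Prime).ne_one
        rcases (Nat.prime_three.eq_one_or_self_of_dvd p hdvd) with h1 | h1 <;> omega
      exact aux_backward hp a ha0 ha1 ha2 hlast Φ hΦ0 hΦ1 hΦ2 s hs0 hs1 hss
end

section
/- The normalizer in S_6 of the subgroup ⟨u, v⟩ generated by u = (1 2 3)(4 5 6) and v = (1 4)(2 6)(3 5) is isomorphic to D_3 × D_3, and the quotient of this normalizer by ⟨u, v⟩ is isomorphic to D_3 of order 6, with coset representatives id, (4 5 6), (4 6 5), (2 3)(5 6), (2 3)(4 5), (2 3)(4 6). -/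
open Equiv DihedralGroup

abbrev D3 := DihedralGroup 3

def e : Fin 6 ≃ D3 where
  toFun := ![r 0, r 1, r 2, sr 0, sr 2, sr 1]
  invFun g := match g with
    | r i => ⟨i.val, by have := ZMod.val_lt i; omega⟩
    | sr i => ⟨3 + (3 - i.val) % 3, by omega⟩
  left_inv := by decide
  right_inv := by decide

def φ : D3 × D3 →* Equiv.Perm (Fin 6) :=
  MonoidHom.mk' (fun p => e.trans ((Equiv.mulLeft p.1).trans ((Equiv.mulRight p.2⁻¹).trans e.symm)))
    (by intro p q; ext x; simp [mul_assoc])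

lemma φ_apply (p : D3 × D3) (x : Fin 6) : φ p x = e.symm (p.1 * e x * p.2⁻¹) := rfl

lemma hinj : Function.Injective φ := by decide

def L : D3 →* Equiv.Perm (Fin 6) := φ.comp (MonoidHom.inl D3 D3)

lemma L_eq_φ (g : D3) : L g = φ (g, 1) := rfl

lemma gen_top : Subgroup.closure ({r 1, sr 0} : Set D3) = ⊤ := by
  rw [eq_top_iff]
  rintro x -
  have h1 : (r 1 : D3) ∈ Subgroup.closure ({r 1, sr 0} : Set D3) :=
    Subgroup.subset_closure (by simp)
  have h2 : (sr 0 : D3) ∈ Subgroup.closure ({r 1, sr 0} : Set D3) :=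
    Subgroup.subset_closure (by simp)
  have hr : ∀ i : ZMod 3, r i ∈ Subgroup.closure ({r 1, sr 0} : Set D3) := by
    intro i
    have : (r 1 : D3) ^ (i.val) = r i := by
      rw [DihedralGroup.r_one_pow, ZMod.natCast_val, ZMod.cast_id]
    exact this ▸ pow_mem h1 _
  rcases x with i | i
  · exact hr i
  · have : (sr 0 : D3) * r i = sr i := by
      rw [DihedralGroup.sr_mul_r, zero_add]
    exact this ▸ mul_mem h2 (hr i)

lemma hQgen :
    Subgroup.closure {((Equiv.swap 0 1 * Equiv.swap 1 2) * (Equiv.swap 3 4 * Equiv.swap 4 5) :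
        Equiv.Perm (Fin 6)), Equiv.swap 0 3 * Equiv.swap 1 5 * Equiv.swap 2 4} = L.range := by
  have hu : ((Equiv.swap 0 1 * Equiv.swap 1 2) * (Equiv.swap 3 4 * Equiv.swap 4 5) :
      Equiv.Perm (Fin 6)) = L (r 1) := by decide
  have hv : (Equiv.swap 0 3 * Equiv.swap 1 5 * Equiv.swap 2 4 : Equiv.Perm (Fin 6)) =
      L (sr 0) := by decide
  rw [hu, hv, show ({L (r 1), L (sr 0)} : Set (Equiv.Perm (Fin 6))) = L '' {r 1, sr 0} by
      rw [Set.image_insert_eq, Set.image_singleton],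
    ← MonoidHom.map_closure, gen_top, ← MonoidHom.range_eq_map]

lemma conj_L (p : D3 × D3) (g : D3) : φ p * L g * (φ p)⁻¹ = L (p.1 * g * p.1⁻¹) := by
  rw [← map_inv]
  ext x
  simp only [L_eq_φ, Equiv.Perm.mul_apply, φ_apply, Equiv.apply_symm_apply, inv_one, mul_one,
    Prod.fst_inv, Prod.snd_inv]
  group

lemma hL_inj : Function.Injective L := fun a b h => by
  have := hinj (show φ (a,1) = φ (b,1) from h)
  exact (Prod.mk.injEq .. ▸ this).1

lemma conj_gen : ∀ a b : D3, a ^ 3 = 1 → a ≠ 1 → b ^ 2 = 1 → b ≠ 1 →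
    ∃ c : D3, c * r 1 * c⁻¹ = a ∧ c * sr 0 * c⁻¹ = b := by decide

lemma hrange : φ.range = Subgroup.normalizer (L.range : Set (Equiv.Perm (Fin 6))) := by
  apply le_antisymm
  · rintro x ⟨p, rfl⟩
    rw [Subgroup.mem_normalizer_iff]
    intro h
    constructor
    · rintro ⟨g, rfl⟩
      exact ⟨p.1 * g * p.1⁻¹, (conj_L p g).symm⟩
    · rintro ⟨g, hg⟩
      refine ⟨p.1⁻¹ * g * p.1⁻¹⁻¹, ?_⟩
      have := conj_L p⁻¹ g
      rw [Prod.fst_inv] at this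
      rw [← this, hg, map_inv]
      group
  · intro n hn
    rw [Subgroup.mem_normalizer_iff] at hn
    obtain ⟨a3, ha3⟩ : ∃ a, L a = n * L (r 1) * n⁻¹ :=
      (hn (L (r 1))).1 ⟨r 1, rfl⟩
    obtain ⟨a2, ha2⟩ : ∃ a, L a = n * L (sr 0) * n⁻¹ :=
      (hn (L (sr 0))).1 ⟨sr 0, rfl⟩
    have hconjpow : ∀ (x : Equiv.Perm (Fin 6)) (k : ℕ), (n * x * n⁻¹) ^ k = n * x ^ k * n⁻¹ := by
      intro x k
      exact conj_pow ..
    have ha3a : a3 ^ 3 = 1 := by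
      apply hL_inj
      rw [map_pow, ha3, hconjpow, ← map_pow, show (r 1 : D3) ^ 3 = 1 by decide]
      simp
    have ha3b : a3 ≠ 1 := by
      intro h
      rw [h, map_one] at ha3
      have hL1 : L (r 1) = 1 := by
        have h2 := congrArg (fun z => n⁻¹ * z * n) ha3
        simpa [mul_assoc] using h2.symm
      have : (r 1 : D3) = 1 := hL_inj (by rw [hL1, map_one])
      exact absurd this (by decide)
    have ha2a : a2 ^ 2 = 1 := by
      apply hL_inj
      rw [map_pow, ha2, hconjpow, ← map_pow, show (sr 0 : D3) ^ 2 = 1 by decide]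
      simp
    have ha2b : a2 ≠ 1 := by
      intro h
      rw [h, map_one] at ha2
      have hL1 : L (sr 0) = 1 := by
        have h2 := congrArg (fun z => n⁻¹ * z * n) ha2
        simpa [mul_assoc] using h2.symm
      have : (sr 0 : D3) = 1 := hL_inj (by rw [hL1, map_one])
      exact absurd this (by decide)
    obtain ⟨c, hc3, hc2⟩ := conj_gen a3 a2 ha3a ha3b ha2a ha2b
    have hkey : ∀ g : D3, n * L g * n⁻¹ = L (c * g * c⁻¹) := by
      intro g
      have hg : g ∈ Subgroup.closure ({r 1, sr 0} : Set D3) := by rw [gen_top]; trivial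
      induction hg using Subgroup.closure_induction with
      | mem x hx =>
        rcases hx with rfl | hx
        · rw [hc3]; exact ha3.symm
        · rw [Set.mem_singleton_iff] at hx
          subst hx
          rw [hc2]; exact ha2.symm
      | one => simp
      | mul x y _ _ hx hy =>
        rw [map_mul, show n * (L x * L y) * n⁻¹ = (n * L x * n⁻¹) * (n * L y * n⁻¹) by group,
          hx, hy, ← map_mul]
        congr 1
        group
      | inv x _ hx =>
        rw [map_inv, show n * (L x)⁻¹ * n⁻¹ = (n * L x * n⁻¹)⁻¹ by group, hx, ← map_inv]
        congr 1
        group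
    set m : D3 := e (n (e.symm 1)) with hm
    refine ⟨(c, m⁻¹ * c), ?_⟩
    ext x
    have happ : (n * L (e x) * n⁻¹) (n (e.symm 1)) = (L (c * e x * c⁻¹)) (n (e.symm 1)) := by
      rw [hkey (e x)]
    simp only [Equiv.Perm.mul_apply, Equiv.Perm.inv_def, Equiv.symm_apply_apply] at happ
    have hLx : (L (e x)) (e.symm 1) = x := by
      rw [L_eq_φ, φ_apply]
      simp
    rw [hLx] at happ
    rw [φ_apply]
    simp only [mul_inv_rev, inv_inv]
    rw [happ, L_eq_φ, φ_apply, ← hm]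
    simp [mul_assoc]

def δ : Fin 6 → D3 := ![1, r 2, r 1, sr 0, sr 1, sr 2]

lemma δ_bij : Function.Bijective δ := by decide

noncomputable def θ : D3 × D3 ≃* (Subgroup.normalizer (L.range : Set (Equiv.Perm (Fin 6))) : Subgroup (Equiv.Perm (Fin 6))) :=
  (MonoidHom.ofInjective hinj).trans (MulEquiv.subgroupCongr hrange)

lemma θ_coe (p : D3 × D3) : ((θ p : Subgroup.normalizer (L.range : Set (Equiv.Perm (Fin 6)))) : Equiv.Perm (Fin 6)) = φ p := rfl

theorem main_aux :
    Nonempty (↥(Subgroup.normalizer ((Subgroup.closure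
        {((Equiv.swap 0 1 * Equiv.swap 1 2) * (Equiv.swap 3 4 * Equiv.swap 4 5) :
          Equiv.Perm (Fin 6)), Equiv.swap 0 3 * Equiv.swap 1 5 * Equiv.swap 2 4}) : Set (Equiv.Perm (Fin 6))))
      ≃* D3 × D3) := by
  have hN : Subgroup.normalizer ((Subgroup.closure
      {((Equiv.swap 0 1 * Equiv.swap 1 2) * (Equiv.swap 3 4 * Equiv.swap 4 5) :
        Equiv.Perm (Fin 6)), Equiv.swap 0 3 * Equiv.swap 1 5 * Equiv.swap 2 4}) : Set (Equiv.Perm (Fin 6)))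
      = Subgroup.normalizer (L.range : Set (Equiv.Perm (Fin 6))) := congrArg (fun H : Subgroup (Equiv.Perm (Fin 6)) => Subgroup.normalizer (H : Set (Equiv.Perm (Fin 6)))) hQgen
  exact ⟨(MulEquiv.subgroupCongr hN).trans θ.symm⟩
/-- The normalizer in `S₆` of the subgroup `⟨u, v⟩` generated by
`u = (1 2 3)(4 5 6)` and `v = (1 4)(2 6)(3 5)` (zero-based: `(0 1 2)(3 4 5)`
and `(0 3)(1 5)(2 4)`) is isomorphic to `D₃ × D₃`, the quotient of the
normalizer by `⟨u, v⟩` is isomorphic to `D₃` (of order 6; expressed via a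
surjective homomorphism with kernel `⟨u,v⟩`), with coset representatives
`id, (4 5 6), (4 6 5), (2 3)(5 6), (2 3)(4 5), (2 3)(4 6)`. -/
theorem stmt15 :
    let u : Equiv.Perm (Fin 6) :=
      (Equiv.swap 0 1 * Equiv.swap 1 2) * (Equiv.swap 3 4 * Equiv.swap 4 5)
    let v : Equiv.Perm (Fin 6) := Equiv.swap 0 3 * Equiv.swap 1 5 * Equiv.swap 2 4
    let Q := Subgroup.closure {u, v}
    let N := Subgroup.normalizer (Q : Set (Equiv.Perm (Fin 6)))
    let reps : Fin 6 → Equiv.Perm (Fin 6) :=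
      ![1, Equiv.swap 3 4 * Equiv.swap 4 5, (Equiv.swap 3 4 * Equiv.swap 4 5) ^ 2,
        Equiv.swap 1 2 * Equiv.swap 4 5, Equiv.swap 1 2 * Equiv.swap 3 4,
        Equiv.swap 1 2 * Equiv.swap 3 5]
    Nonempty (↥N ≃* DihedralGroup 3 × DihedralGroup 3) ∧
    (∃ f : ↥N →* DihedralGroup 3, Function.Surjective f ∧ f.ker = Q.subgroupOf N) ∧
    (∀ i, reps i ∈ N) ∧
    (∀ x ∈ N, ∃! i : Fin 6, x * (reps i)⁻¹ ∈ Q) := by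
  intro u v Q N reps
  have hQ : Q = L.range := hQgen
  have hN : N = Subgroup.normalizer (L.range : Set (Equiv.Perm (Fin 6))) := congrArg (fun H : Subgroup (Equiv.Perm (Fin 6)) => Subgroup.normalizer (H : Set (Equiv.Perm (Fin 6)))) hQ
  have hrep : ∀ i, reps i = φ (δ i, δ i) := by
    have h : ∀ i : Fin 6, (![1, Equiv.swap 3 4 * Equiv.swap 4 5,
        (Equiv.swap 3 4 * Equiv.swap 4 5) ^ 2,
        Equiv.swap 1 2 * Equiv.swap 4 5, Equiv.swap 1 2 * Equiv.swap 3 4,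
        Equiv.swap 1 2 * Equiv.swap 3 5] : Fin 6 → Equiv.Perm (Fin 6)) i
        = φ (δ i, δ i) := by decide
    exact h
  rw [hQ, hN]
  refine ⟨⟨θ.symm⟩, ⟨(MonoidHom.snd D3 D3).comp θ.symm.toMonoidHom, ?_, ?_⟩, ?_, ?_⟩
  · intro b
    exact ⟨θ (1, b), by rw [MonoidHom.comp_apply, MulEquiv.coe_toMonoidHom, θ.symm_apply_apply]; rfl⟩
  · ext x
    simp only [MonoidHom.mem_ker, MonoidHom.comp_apply, MulEquiv.coe_toMonoidHom,
       Subgroup.mem_subgroupOf]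
    constructor
    · intro h
      have hx : x = θ (θ.symm x) := (θ.apply_symm_apply x).symm
      have hcoe : (x : Equiv.Perm (Fin 6)) = φ (θ.symm x) := by
        conv_lhs => rw [hx]
        rw [θ_coe]
      have hp : θ.symm x = ((θ.symm x).1, (1 : D3)) := by rw [← h]; rfl
      rw [hp] at hcoe
      exact ⟨(θ.symm x).1, hcoe.symm⟩
    · rintro ⟨g, hg⟩
      have hθg : θ (g, 1) = x := by
        apply Subtype.ext
        rw [θ_coe, ← hg]
        rfl
      rw [← hθg, θ.symm_apply_apply]
      rfl
  · intro i
    rw [hrep i, ← hrange]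
    exact ⟨(δ i, δ i), rfl⟩
  · intro x hx
    rw [← hrange] at hx
    obtain ⟨⟨a, b⟩, rfl⟩ := hx
    have key : ∀ i : Fin 6, (φ (a, b) * (reps i)⁻¹ ∈ L.range ↔ b = δ i) := by
      intro i
      rw [hrep i, ← map_inv, ← map_mul]
      constructor
      · rintro ⟨g, hg⟩
        have h1 : φ (g, 1) = φ ((a, b) * (δ i, δ i)⁻¹) := hg
        have h2 := congrArg Prod.snd (hinj h1)
        simp only [Prod.snd_mul, Prod.snd_inv] at h2
        have : b * (δ i)⁻¹ = 1 := h2.symm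
        exact (mul_inv_eq_one.mp this)
      · intro h
        refine ⟨a * (δ i)⁻¹, ?_⟩
        show φ (a * (δ i)⁻¹, 1) = _
        congr 1
        rw [Prod.mk_mul_mk]  -- maybe not needed; use Prod.ext
        · simp [h]
    obtain ⟨i, hi⟩ := δ_bij.2 b
    exact ⟨i, (key i).mpr hi.symm, fun j hj => δ_bij.1 (((key j).mp hj).symm.trans hi.symm)⟩
end

section
/- Let p be prime, H = ⟨a_1,...,a_5⟩ ≅ (Z/pZ)^5 with a_6 := (a_1⋯a_5)^{-1}, and let Q* = ⟨u, v⟩ where u permutes (a_1 a_2 a_3)(a_4 a_5 a_6) and v permutes (a_1 a_4)(a_2 a_6)(a_3 a_5). Suppose K = ker(θ) for a surjection θ : H → (Z/pZ)^2 with a_j ∉ K for j = 1,...,6 and K is Q*-invariant. Then either (1) p = 3 or p ≡ 1 mod 3, and K = ⟨a_1a_2a_3, a_1^l a_2^{-1}, a_4^l a_6^{-1}⟩ for some l ∈ {1,...,p-1} with l^2 + l + 1 ≡ 0 mod p; or (2) K = ⟨a_1a_2a_3, a_1^r a_2^s a_4^{-1}, a_1^{-s} a_2^{r-s} a_5^{-1}⟩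 for some r, s ∈ {0,...,p-1} with r^2 + s^2 - rs ≡ 1 mod p. -/
lemma aux_smul_s16 {p : ℕ} [NeZero p] {M N : Type*} [AddCommGroup M] [AddCommGroup N]
    [Module (ZMod p) M] [Module (ZMod p) N] (f : M →+ N) (c : ZMod p) (m : M) :
    f (c • m) = c • f m := by
  have h : c • m = c.val • m := by
    rw [← Nat.cast_smul_eq_nsmul (ZMod p), ZMod.natCast_val, ZMod.cast_id]
  have h2 : c • f m = c.val • f m := by
    rw [← Nat.cast_smul_eq_nsmul (ZMod p), ZMod.natCast_val, ZMod.cast_id]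
  rw [h, h2, map_nsmul]

lemma aux_mod3 {p : ℕ} [hp : Fact p.Prime] (l : ZMod p) (hl : l ^ 2 + l + 1 = 0) :
    p = 3 ∨ p % 3 = 1 := by
  by_cases hp3 : p = 3
  · exact Or.inl hp3
  right
  have hl1 : l ≠ 1 := by
    rintro rfl
    have h3 : ((3 : ℕ) : ZMod p) = 0 := by push_cast; linear_combination hl
    have := (ZMod.natCast_eq_zero_iff 3 p).mp h3
    exact hp3 ((Nat.prime_dvd_prime_iff_eq hp.out (by norm_num)).mp this)
  have hl0 : l ≠ 0 := by
    rintro rfl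
    simp at hl
  have hl3 : l ^ 3 = 1 := by linear_combination (l - 1) * hl
  obtain ⟨u, hu⟩ := (isUnit_iff_ne_zero.mpr hl0)
  have hu3 : u ^ 3 = 1 := by
    ext
    push_cast [hu]
    exact hl3
  have hord : orderOf u ∣ 3 := orderOf_dvd_of_pow_eq_one hu3
  have hord1 : orderOf u ≠ 1 := by
    intro h1c
    rw [orderOf_eq_one_iff] at h1c
    rw [h1c] at hu
    exact hl1 (by simpa using hu.symm)
  have hord3 : orderOf u = 3 := ((Nat.prime_three).eq_one_or_self_of_dvd _ hord).resolve_left hord1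
  have hdvd : orderOf u ∣ Fintype.card (ZMod p)ˣ := orderOf_dvd_card
  rw [hord3, ZMod.card_units p] at hdvd
  have := hp.out.two_le
  omega

lemma aux_dep {p : ℕ} [Fact p.Prime] (y z : ZMod p × ZMod p) (hy : y ≠ 0)
    (h : y.1 * z.2 - y.2 * z.1 = 0) : ∃ t : ZMod p, z = t • y := by
  by_cases h1 : y.1 ≠ 0
  · refine ⟨z.1 / y.1, ?_⟩
    ext
    · exact (div_mul_cancel₀ _ h1).symm
    · show z.2 = z.1 / y.1 * y.2
      field_simp
      linear_combination h
  · push_neg at h1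
    have h2 : y.2 ≠ 0 := fun h2 => hy (Prod.ext h1 h2)
    have hz1 : z.1 = 0 := by
      have h' : y.2 * z.1 = 0 := by linear_combination -h + z.2 * h1
      rcases mul_eq_zero.mp h' with hc | hc
      · exact absurd hc h2
      · exact hc
    refine ⟨z.2 / y.2, ?_⟩
    ext
    · show z.1 = z.2 / y.2 * y.1
      rw [h1, hz1, mul_zero]
    · exact (div_mul_cancel₀ _ h2).symm

lemma aux_uniq {p : ℕ} [Fact p.Prime] (y z : ZMod p × ZMod p)
    (hd : y.1 * z.2 - y.2 * z.1 ≠ 0) (c d : ZMod p) (h : c • y + d • z = 0) :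
    c = 0 ∧ d = 0 := by
  have e1 : c * y.1 + d * z.1 = 0 := congrArg Prod.fst h
  have e2 : c * y.2 + d * z.2 = 0 := congrArg Prod.snd h
  constructor
  · have hc : c * (y.1 * z.2 - y.2 * z.1) = 0 := by
      linear_combination z.2 * e1 - z.1 * e2
    rcases mul_eq_zero.mp hc with h' | h'
    · exact h'
    · exact absurd h' hd
  · have hc : d * (y.1 * z.2 - y.2 * z.1) = 0 := by
      linear_combination -y.2 * e1 + y.1 * e2
    rcases mul_eq_zero.mp hc with h' | h'
    · exact h'
    · exact absurd h' hd

lemma aux_rep {p : ℕ} [Fact p.Prime] (y z w : ZMod p × ZMod p)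
    (hd : y.1 * z.2 - y.2 * z.1 ≠ 0) :
    ∃ c d : ZMod p, w = c • y + d • z := by
  set D := y.1 * z.2 - y.2 * z.1 with hD
  refine ⟨(w.1 * z.2 - w.2 * z.1) / D, (y.1 * w.2 - y.2 * w.1) / D, ?_⟩
  ext
  · show w.1 = _ / D * y.1 + _ / D * z.1
    field_simp
    ring
  · show w.2 = _ / D * y.2 + _ / D * z.2
    field_simp
    ring


/-- Let `p` be prime, `H = ⟨a_1,…,a_5⟩ ≅ (ℤ/pℤ)⁵` with `a_6 := -(a_1+⋯+a_5)`,
and let `U, V` be the automorphisms of `H` given by the permutations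
`u = (a_1 a_2 a_3)(a_4 a_5 a_6)` and `v = (a_1 a_4)(a_2 a_6)(a_3 a_5)`,
generating `Q*`.  Suppose `K = ker θ` for a surjection `θ : H → (ℤ/pℤ)²` with
`a_j ∉ K` for `j = 1,…,6` and `K` invariant under `Q*`.  Then either
(1) `p = 3` or `p ≡ 1 (mod 3)` and
`K = ⟨a_1a_2a_3, a_1^l a_2^{-1}, a_4^l a_6^{-1}⟩` for some `l` with
`l² + l + 1 ≡ 0 (mod p)`; or
(2) `K = ⟨a_1a_2a_3, a_1^r a_2^s a_4^{-1}, a_1^{-s} a_2^{r-s} a_5^{-1}⟩` for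
some `r, s` with `r² + s² - rs ≡ 1 (mod p)`. -/
theorem stmt16 (p : ℕ) [Fact p.Prime]
    (a : Fin 6 → (Fin 5 → ZMod p))
    (ha : ∀ j : Fin 5, a j.castSucc = Pi.single j 1)
    (hlast : a 5 = -∑ j : Fin 5, Pi.single j 1)
    (U V : (Fin 5 → ZMod p) ≃+ (Fin 5 → ZMod p))
    (hU0 : U (a 0) = a 1) (hU1 : U (a 1) = a 2) (hU2 : U (a 2) = a 0)
    (hU3 : U (a 3) = a 4) (hU4 : U (a 4) = a 5) (hU5 : U (a 5) = a 3)
    (hV0 : V (a 0) = a 3) (hV3 : V (a 3) = a 0)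
    (hV1 : V (a 1) = a 5) (hV5 : V (a 5) = a 1)
    (hV2 : V (a 2) = a 4) (hV4 : V (a 4) = a 2)
    (θ : (Fin 5 → ZMod p) →+ (ZMod p × ZMod p))
    (hsurj : Function.Surjective θ)
    (hnotin : ∀ j, a j ∉ θ.ker)
    (hinvU : AddSubgroup.map U.toAddMonoidHom θ.ker = θ.ker)
    (hinvV : AddSubgroup.map V.toAddMonoidHom θ.ker = θ.ker) :
    ((p = 3 ∨ p % 3 = 1) ∧ ∃ l : ZMod p, l ≠ 0 ∧ l ^ 2 + l + 1 = 0 ∧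
      θ.ker = AddSubgroup.closure
        {a 0 + a 1 + a 2, l • a 0 - a 1, l • a 3 - a 5}) ∨
    (∃ r s : ZMod p, r ^ 2 + s ^ 2 - r * s = 1 ∧
      θ.ker = AddSubgroup.closure
        {a 0 + a 1 + a 2, r • a 0 + s • a 1 - a 3, (-s) • a 0 + (r - s) • a 1 - a 4}) := by
  have ha0 : a 0 = Pi.single (0 : Fin 5) 1 := by
    rw [← ha 0]; congr 1
  have ha1 : a 1 = Pi.single (1 : Fin 5) 1 := by
    rw [← ha 1]; congr 1
  have ha2 : a 2 = Pi.single (2 : Fin 5) 1 := by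
    rw [← ha 2]; congr 1
  have ha3 : a 3 = Pi.single (3 : Fin 5) 1 := by
    rw [← ha 3]; congr 1
  have ha4 : a 4 = Pi.single (4 : Fin 5) 1 := by
    rw [← ha 4]; congr 1
  have ha5 : a 5 = -(a 0 + a 1 + a 2 + a 3 + a 4) := by
    rw [hlast, Fin.sum_univ_five, ha0, ha1, ha2, ha3, ha4]
  have hθs : ∀ (c : ZMod p) (m : Fin 5 → ZMod p), θ (c • m) = c • θ m :=
    fun c m => aux_smul_s16 θ c m
  have hUsm : ∀ (c : ZMod p) (m : Fin 5 → ZMod p), U (c • m) = c • U m :=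
    fun c m => aux_smul_s16 U.toAddMonoidHom c m
  have hVsm : ∀ (c : ZMod p) (m : Fin 5 → ZMod p), V (c • m) = c • V m :=
    fun c m => aux_smul_s16 V.toAddMonoidHom c m
  have hxne : ∀ j, θ (a j) ≠ 0 := fun j h => hnotin j (AddMonoidHom.mem_ker.mpr h)
  have hUker : ∀ m, θ m = 0 → θ (U m) = 0 := by
    intro m hm
    have : U m ∈ θ.ker := by
      rw [← hinvU]
      exact AddSubgroup.mem_map_of_mem _ (AddMonoidHom.mem_ker.mpr hm)
    exact AddMonoidHom.mem_ker.mp this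
  have hVker : ∀ m, θ m = 0 → θ (V m) = 0 := by
    intro m hm
    have : V m ∈ θ.ker := by
      rw [← hinvV]
      exact AddSubgroup.mem_map_of_mem _ (AddMonoidHom.mem_ker.mpr hm)
    exact AddMonoidHom.mem_ker.mp this
  have keyU : ∀ c0 c1 c2 c3 c4 c5 : ZMod p,
      c0 • θ (a 0) + c1 • θ (a 1) + c2 • θ (a 2) + c3 • θ (a 3) + c4 • θ (a 4) + c5 • θ (a 5) = 0 →
      c0 • θ (a 1) + c1 • θ (a 2) + c2 • θ (a 0) + c3 • θ (a 4) + c4 • θ (a 5) + c5 • θ (a 3) = 0 := by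
    intro c0 c1 c2 c3 c4 c5 hc
    have hm : θ (c0 • a 0 + c1 • a 1 + c2 • a 2 + c3 • a 3 + c4 • a 4 + c5 • a 5) = 0 := by
      simp only [map_add, hθs]
      exact hc
    have h2 := hUker _ hm
    have hexp : U (c0 • a 0 + c1 • a 1 + c2 • a 2 + c3 • a 3 + c4 • a 4 + c5 • a 5)
        = c0 • a 1 + c1 • a 2 + c2 • a 0 + c3 • a 4 + c4 • a 5 + c5 • a 3 := by
      simp only [map_add, hUsm, hU0, hU1, hU2, hU3, hU4, hU5]
    rw [hexp] at h2
    simpa only [map_add, hθs] using h2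
  have keyV : ∀ c0 c1 c2 c3 c4 c5 : ZMod p,
      c0 • θ (a 0) + c1 • θ (a 1) + c2 • θ (a 2) + c3 • θ (a 3) + c4 • θ (a 4) + c5 • θ (a 5) = 0 →
      c0 • θ (a 3) + c1 • θ (a 5) + c2 • θ (a 4) + c3 • θ (a 0) + c4 • θ (a 2) + c5 • θ (a 1) = 0 := by
    intro c0 c1 c2 c3 c4 c5 hc
    have hm : θ (c0 • a 0 + c1 • a 1 + c2 • a 2 + c3 • a 3 + c4 • a 4 + c5 • a 5) = 0 := by
      simp only [map_add, hθs]
      exact hc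
    have h2 := hVker _ hm
    have hexp : V (c0 • a 0 + c1 • a 1 + c2 • a 2 + c3 • a 3 + c4 • a 4 + c5 • a 5)
        = c0 • a 3 + c1 • a 5 + c2 • a 4 + c3 • a 0 + c4 • a 2 + c5 • a 1 := by
      simp only [map_add, hVsm, hV0, hV1, hV2, hV3, hV4, hV5]
    rw [hexp] at h2
    simpa only [map_add, hθs] using h2
  have hsum6 : θ (a 0) + θ (a 1) + θ (a 2) + θ (a 3) + θ (a 4) + θ (a 5) = 0 := by
    have h0 : a 0 + a 1 + a 2 + a 3 + a 4 + a 5 = 0 := by rw [ha5]; abel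
    rw [← map_add, ← map_add, ← map_add, ← map_add, ← map_add, h0, map_zero]
  have heval : ∀ h : Fin 5 → ZMod p,
      θ h = h 0 • θ (a 0) + h 1 • θ (a 1) + h 2 • θ (a 2) + h 3 • θ (a 3) + h 4 • θ (a 4) := by
    intro h
    have hh : h = h 0 • a 0 + h 1 • a 1 + h 2 • a 2 + h 3 • a 3 + h 4 • a 4 := by
      rw [ha0, ha1, ha2, ha3, ha4]
      funext k
      fin_cases k <;> simp [Pi.single_apply]
    conv_lhs => rw [hh]
    simp only [map_add, hθs]
  have hsmem : ∀ (t : ZMod p) (g : Fin 5 → ZMod p) (S : AddSubgroup (Fin 5 → ZMod p)),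
      g ∈ S → t • g ∈ S := by
    intro t g S hg
    have : t • g = t.val • g := by
      rw [← Nat.cast_smul_eq_nsmul (ZMod p), ZMod.natCast_val, ZMod.cast_id]
    rw [this]
    exact nsmul_mem hg t.val
  have hnotline : ∀ t1 t2 t3 t4 : ZMod p,
      θ (a 1) = t1 • θ (a 0) → θ (a 2) = t2 • θ (a 0) →
      θ (a 3) = t3 • θ (a 0) → θ (a 4) = t4 • θ (a 0) → False := by
    intro t1 t2 t3 t4 ht1 ht2 ht3 ht4
    obtain ⟨m1, hm1⟩ := hsurj (1, 0)
    obtain ⟨m2, hm2⟩ := hsurj (0, 1)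
    rw [heval m1, ht1, ht2, ht3, ht4] at hm1
    rw [heval m2, ht1, ht2, ht3, ht4] at hm2
    have hm1' : (m1 0 + m1 1 * t1 + m1 2 * t2 + m1 3 * t3 + m1 4 * t4) • θ (a 0) = (1, 0) := by
      rw [← hm1]; module
    have hm2' : (m2 0 + m2 1 * t1 + m2 2 * t2 + m2 3 * t3 + m2 4 * t4) • θ (a 0) = (0, 1) := by
      rw [← hm2]; module
    set e := m1 0 + m1 1 * t1 + m1 2 * t2 + m1 3 * t3 + m1 4 * t4
    set f := m2 0 + m2 1 * t1 + m2 2 * t2 + m2 3 * t3 + m2 4 * t4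
    have e1 : e * (θ (a 0)).1 = 1 := congrArg Prod.fst hm1'
    have e2 : e * (θ (a 0)).2 = 0 := congrArg Prod.snd hm1'
    have e3 : f * (θ (a 0)).1 = 0 := congrArg Prod.fst hm2'
    have e4 : f * (θ (a 0)).2 = 1 := congrArg Prod.snd hm2'
    have : (1 : ZMod p) = 0 := by
      linear_combination f * (θ (a 0)).1 * e2 - f * (θ (a 0)).2 * e1 - e4
    exact one_ne_zero this
  by_cases hdep : (θ (a 0)).1 * (θ (a 1)).2 - (θ (a 0)).2 * (θ (a 1)).1 = 0
  · -- Case A: θ (a 1) is a multiple of θ (a 0)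
    obtain ⟨l, hl⟩ := aux_dep _ _ (hxne 0) hdep
    have hl0 : l ≠ 0 := by
      rintro rfl
      rw [zero_smul] at hl
      exact hxne 1 hl
    have k1 := keyU (-l) 1 0 0 0 0 (by rw [hl]; module)
    have hx2 : θ (a 2) = (l * l) • θ (a 0) := by
      rw [hl] at k1
      linear_combination (norm := module) k1
    have k2 := keyV (-l) 1 0 0 0 0 (by rw [hl]; module)
    have hx5 : θ (a 5) = l • θ (a 3) := by
      linear_combination (norm := module) k2
    have k3 := keyV (-(l*l)) 0 1 0 0 0 (by rw [hx2]; module)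
    have hx4 : θ (a 4) = (l * l) • θ (a 3) := by
      linear_combination (norm := module) k3
    have hdep3 : (θ (a 0)).1 * (θ (a 3)).2 - (θ (a 0)).2 * (θ (a 3)).1 ≠ 0 := by
      intro hd
      obtain ⟨t, ht⟩ := aux_dep _ _ (hxne 0) hd
      refine hnotline l (l*l) t (l*l*t) hl hx2 ht ?_
      rw [hx4, ht, smul_smul]
    have uniq := aux_uniq _ _ hdep3
    have hsum' : (1 + l + l * l) • θ (a 0) + (1 + l * l + l) • θ (a 3) = 0 := by
      rw [hl, hx2, hx5, hx4] at hsum6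
      linear_combination (norm := module) hsum6
    have hlpoly : l ^ 2 + l + 1 = 0 := by
      have := (uniq _ _ hsum').1
      linear_combination this
    left
    refine ⟨aux_mod3 l hlpoly, l, hl0, hlpoly, ?_⟩
    apply le_antisymm
    · intro h hh
      rw [AddMonoidHom.mem_ker, heval, hl, hx2, hx4] at hh
      obtain ⟨e1, e2⟩ := uniq (h 0 + h 1 * l + h 2 * (l*l)) (h 3 + h 4 * (l*l))
        (by linear_combination (norm := module) hh)
      have hrep : h = (h 2 - h 4) • (a 0 + a 1 + a 2) + (h 2 - h 1) • (l • a 0 - a 1)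
          + h 4 • (l • a 3 - a 5) := by
        rw [ha5, ha0, ha1, ha2, ha3, ha4]
        funext k
        fin_cases k
        · simp [Pi.single_apply]
          linear_combination e1 - h 2 * hlpoly
        · simp [Pi.single_apply]
        · simp [Pi.single_apply]
        · simp [Pi.single_apply]
          linear_combination e2 - h 4 * hlpoly
        · simp [Pi.single_apply]
      rw [hrep]
      have m1 := AddSubgroup.subset_closure
        (Set.mem_insert (a 0 + a 1 + a 2) {l • a 0 - a 1, l • a 3 - a 5})
      have m2 := AddSubgroup.subset_closure
        (Set.mem_insert_of_mem (a 0 + a 1 + a 2) (Set.mem_insert (l • a 0 - a 1) {l • a 3 - a 5}))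
      have m3 := AddSubgroup.subset_closure (Set.mem_insert_of_mem (a 0 + a 1 + a 2)
        (Set.mem_insert_of_mem (l • a 0 - a 1) (Set.mem_singleton (l • a 3 - a 5))))
      exact add_mem (add_mem (hsmem _ _ _ m1) (hsmem _ _ _ m2)) (hsmem _ _ _ m3)
    · rw [AddSubgroup.closure_le]
      rintro g hg
      simp only [Set.mem_insert_iff, Set.mem_singleton_iff] at hg
      rcases hg with rfl | rfl | rfl
      · rw [SetLike.mem_coe, AddMonoidHom.mem_ker, map_add, map_add, hl, hx2]
        linear_combination (norm := module) hlpoly • θ (a 0)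
      · rw [SetLike.mem_coe, AddMonoidHom.mem_ker, map_sub, hθs, hl]
        module
      · rw [SetLike.mem_coe, AddMonoidHom.mem_ker, map_sub, hθs, hx5]
        module
  · -- Case B: θ (a 0), θ (a 1) independent
    have uniq01 := aux_uniq _ _ hdep
    obtain ⟨α, β, hx2⟩ := aux_rep (θ (a 0)) (θ (a 1)) (θ (a 2)) hdep
    have k1 := keyU (-α) (-β) 1 0 0 0 (by rw [hx2]; module)
    rw [hx2] at k1
    obtain ⟨f1, f2⟩ := uniq01 (1 - β*α) (-α - β*β) (by linear_combination (norm := module) k1)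
    have hαβ : β * α = 1 := by linear_combination -f1
    obtain ⟨r, s, hx3⟩ := aux_rep (θ (a 0)) (θ (a 1)) (θ (a 3)) hdep
    have k2 := keyU (-r) (-s) 0 1 0 0 (by rw [hx3]; module)
    have hx4 : θ (a 4) = r • θ (a 1) + s • θ (a 2) := by
      linear_combination (norm := module) k2
    have k3 := keyU 0 (-r) (-s) 0 1 0 (by rw [hx4]; module)
    have hx5 : θ (a 5) = s • θ (a 0) + r • θ (a 2) := by
      linear_combination (norm := module) k3
    have k4 := keyV (-r) (-s) 0 1 0 0 (by rw [hx3]; module)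
    rw [hx5, hx3, hx2] at k4
    obtain ⟨g1e, g2e⟩ := uniq01 (1 - r*r - s*s - s*r*α) (-(r*s) - s*r*β)
      (by linear_combination (norm := module) k4)
    have k5 := keyV (-α) (-β) 1 0 0 0 (by rw [hx2]; module)
    rw [hx4, hx5, hx3, hx2] at k5
    obtain ⟨g3e, g4e⟩ := uniq01 (-(α*r) - β*s - β*r*α + s*α) (-(α*s) - β*r*β + r + s*β)
      (by linear_combination (norm := module) k5)
    have hβ : β = -1 := by
      by_contra hβne
      have hβ1 : β + 1 ≠ 0 := fun h => hβne (by linear_combination h)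
      have hαne : α ≠ 0 := by
        intro h
        rw [h, mul_zero] at hαβ
        exact one_ne_zero hαβ.symm
      have hrs : r * s = 0 := by
        have h' : r * s * (β + 1) = 0 := by linear_combination -g2e
        exact (mul_eq_zero.mp h').resolve_right hβ1
      rcases mul_eq_zero.mp hrs with hr | hs
      · have hsne : s ≠ 0 := by
          intro hs0
          apply hxne 3
          rw [hx3, hr, hs0, zero_smul, zero_smul, add_zero]
        have hab : α = β := by
          have h' : s * (α - β) = 0 := by rw [hr] at g3e; linear_combination g3e
          have h'' := (mul_eq_zero.mp h').resolve_left hsne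
          linear_combination h''
        have hβ0 : β ≠ 0 := by
          intro h
          rw [h, zero_mul] at hαβ
          exact one_ne_zero hαβ.symm
        have h' : β * (β + 1) = 0 := by linear_combination -f2 - hab
        rcases mul_eq_zero.mp h' with h'' | h''
        · exact hβ0 h''
        · exact hβ1 h''
      · have hrne : r ≠ 0 := by
          intro hr0
          apply hxne 3
          rw [hx3, hs, hr0, zero_smul, zero_smul, add_zero]
        have h' : α * r * (β + 1) = 0 := by rw [hs] at g3e; linear_combination -g3e
        rcases mul_eq_zero.mp h' with h'' | h''
        · rcases mul_eq_zero.mp h'' with h3 | h3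
          · exact hαne h3
          · exact hrne h3
        · exact hβ1 h''
    have hα : α = -1 := by linear_combination -hαβ + α * hβ
    have hr2 : r ^ 2 + s ^ 2 - r * s = 1 := by linear_combination -g1e - s*r*hα
    have hx2' : θ (a 2) = -θ (a 0) - θ (a 1) := by rw [hx2, hα, hβ]; module
    have hx4' : θ (a 4) = (-s) • θ (a 0) + (r - s) • θ (a 1) := by
      rw [hx4, hx2']; module
    right
    refine ⟨r, s, hr2, ?_⟩
    apply le_antisymm
    · intro h hh
      rw [AddMonoidHom.mem_ker, heval, hx2', hx3, hx4'] at hh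
      obtain ⟨e1, e2⟩ := uniq01 (h 0 - h 2 + h 3 * r + h 4 * (-s))
        (h 1 - h 2 + h 3 * s + h 4 * (r - s))
        (by linear_combination (norm := module) hh)
      have hrep : h = h 2 • (a 0 + a 1 + a 2) + (-(h 3)) • (r • a 0 + s • a 1 - a 3)
          + (-(h 4)) • ((-s) • a 0 + (r - s) • a 1 - a 4) := by
        rw [ha0, ha1, ha2, ha3, ha4]
        funext k
        fin_cases k
        · simp [Pi.single_apply]
          linear_combination e1
        · simp [Pi.single_apply]
          linear_combination e2
        · simp [Pi.single_apply]
        · simp [Pi.single_apply]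
        · simp [Pi.single_apply]
      rw [hrep]
      have m1 := AddSubgroup.subset_closure
        (Set.mem_insert (a 0 + a 1 + a 2)
          {r • a 0 + s • a 1 - a 3, (-s) • a 0 + (r - s) • a 1 - a 4})
      have m2 := AddSubgroup.subset_closure
        (Set.mem_insert_of_mem (a 0 + a 1 + a 2)
          (Set.mem_insert (r • a 0 + s • a 1 - a 3) {(-s) • a 0 + (r - s) • a 1 - a 4}))
      have m3 := AddSubgroup.subset_closure (Set.mem_insert_of_mem (a 0 + a 1 + a 2)
        (Set.mem_insert_of_mem (r • a 0 + s • a 1 - a 3)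
          (Set.mem_singleton ((-s) • a 0 + (r - s) • a 1 - a 4))))
      exact add_mem (add_mem (hsmem _ _ _ m1) (hsmem _ _ _ m2)) (hsmem _ _ _ m3)
    · rw [AddSubgroup.closure_le]
      rintro g hg
      simp only [Set.mem_insert_iff, Set.mem_singleton_iff] at hg
      rcases hg with rfl | rfl | rfl
      · rw [SetLike.mem_coe, AddMonoidHom.mem_ker, map_add, map_add, hx2']
        module
      · rw [SetLike.mem_coe, AddMonoidHom.mem_ker, map_sub, map_add, hθs, hθs, hx3]
        module
      · rw [SetLike.mem_coe, AddMonoidHom.mem_ker, map_sub, map_add, hθs, hθs, hx4']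
        module
end

section
/- Let p ≥ 2 be prime, H = ⟨a_1,...,a_5⟩ ≅ (Z/pZ)^5 with a_6 := (a_1⋯a_5)^{-1}, and let Q* = ⟨u, v⟩ ≤ Sym{a_1,...,a_6} with u = (a_3 a_5)(a_4 a_6) and v = (a_1 a_2)(a_3 a_4)(a_5 a_6), acting on H. For p ≥ 3, suppose K = ker(θ) where θ : H → (Z/pZ)^2 is surjective, a_j ∉ K for all j = 1,...,6, and K is Q*-invariant, and suppose moreover θ(a_2) ∉ ⟨θ(a_1)⟩. Then there exist r, s ∈ {0,...,p-1} with r + s ∈ {(p-1)/2, (3p-1)/2} such that θ = (φ_1, φ_2, φ_1^r φ_2^s, φ_1^s φ_2^r, φ_1^r φ_2^s, φ_1^s φ_2^r) on (a_1,...,a_6), where φ_1 = θ(a_1), φ_2 = θ(a_2); equivalently K = ⟨a_1^r a_2^s a_3^{-1}, a_3 a_5^{-1}, a_4 a_6^{-1}⟩. -/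
lemma stmt18_smul_hom {p : ℕ} [NeZero p] {M N : Type*} [AddCommMonoid M] [AddCommMonoid N]
    [Module (ZMod p) M] [Module (ZMod p) N] (f : M →+ N) (c : ZMod p) (x : M) :
    f (c • x) = c • f x := by
  conv_lhs => rw [← ZMod.natCast_zmod_val c, Nat.cast_smul_eq_nsmul, map_nsmul]
  rw [← Nat.cast_smul_eq_nsmul (ZMod p), ZMod.natCast_zmod_val]

/-- Let `p ≥ 3` be prime, `H = ⟨a_1,…,a_5⟩ ≅ (ℤ/pℤ)⁵` with
`a_6 := -(a_1+⋯+a_5)`, and let `U, V` be the automorphisms of `H` given by the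
permutations `u = (a_3 a_5)(a_4 a_6)` and `v = (a_1 a_2)(a_3 a_4)(a_5 a_6)`,
generating `Q* ≅ ℤ₂ × ℤ₂`.  Suppose `K = ker θ` for a surjection
`θ : H → (ℤ/pℤ)²`, with `a_j ∉ K` for all `j`, `K` invariant under `Q*`, and
`θ(a_2) ∉ ⟨θ(a_1)⟩`.  Then there are `r, s ∈ {0,…,p-1}` with
`r + s ∈ {(p-1)/2, (3p-1)/2}` such that, writing `φ₁ = θ(a_1)`,
`φ₂ = θ(a_2)`, one has
`θ = (φ₁, φ₂, φ₁^r φ₂^s, φ₁^s φ₂^r, φ₁^r φ₂^s, φ₁^s φ₂^r)` on `(a_1,…,a_6)`;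
equivalently `K = ⟨a_1^r a_2^s a_3^{-1}, a_3 a_5^{-1}, a_4 a_6^{-1}⟩`. -/
theorem stmt18 (p : ℕ) [Fact p.Prime] (hp : 3 ≤ p)
    (a : Fin 6 → (Fin 5 → ZMod p))
    (ha : ∀ j : Fin 5, a j.castSucc = Pi.single j 1)
    (hlast : a 5 = -∑ j : Fin 5, Pi.single j 1)
    (U V : (Fin 5 → ZMod p) ≃+ (Fin 5 → ZMod p))
    (hU0 : U (a 0) = a 0) (hU1 : U (a 1) = a 1)
    (hU2 : U (a 2) = a 4) (hU4 : U (a 4) = a 2)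
    (hU3 : U (a 3) = a 5) (hU5 : U (a 5) = a 3)
    (hV0 : V (a 0) = a 1) (hV1 : V (a 1) = a 0)
    (hV2 : V (a 2) = a 3) (hV3 : V (a 3) = a 2)
    (hV4 : V (a 4) = a 5) (hV5 : V (a 5) = a 4)
    (θ : (Fin 5 → ZMod p) →+ (ZMod p × ZMod p))
    (hsurj : Function.Surjective θ)
    (hnotin : ∀ j, a j ∉ θ.ker)
    (hinvU : AddSubgroup.map U.toAddMonoidHom θ.ker = θ.ker)
    (hinvV : AddSubgroup.map V.toAddMonoidHom θ.ker = θ.ker)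
    (hnot : θ (a 1) ∉ AddSubgroup.zmultiples (θ (a 0))) :
    ∃ r s : ℕ, r < p ∧ s < p ∧
      (r + s = (p - 1) / 2 ∨ r + s = (3 * p - 1) / 2) ∧
      (θ (a 2) = r • θ (a 0) + s • θ (a 1) ∧
       θ (a 3) = s • θ (a 0) + r • θ (a 1) ∧
       θ (a 4) = r • θ (a 0) + s • θ (a 1) ∧
       θ (a 5) = s • θ (a 0) + r • θ (a 1)) ∧
      θ.ker = AddSubgroup.closure
        {((r : ZMod p)) • a 0 + ((s : ZMod p)) • a 1 - a 2, a 2 - a 4, a 3 - a 5} := by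
  haveI : NeZero p := ⟨(Fact.out : p.Prime).ne_zero⟩
  have hodd : p % 2 = 1 := Nat.odd_iff.mp ((Fact.out : p.Prime).odd_of_ne_two (by omega))
  have h2 : (2 : ZMod p) ≠ 0 := by
    intro h
    have h' : ((2 : ℕ) : ZMod p) = 0 := by push_cast; exact h
    have := (ZMod.natCast_eq_zero_iff 2 p).mp h'
    have := Nat.le_of_dvd (by norm_num) this
    omega
  set φ₁ := θ (a 0) with hφ₁def
  set φ₂ := θ (a 1) with hφ₂def
  have hφ₁ : φ₁ ≠ 0 := fun h => hnotin 0 (by simpa [AddMonoidHom.mem_ker] using h)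
  -- linear independence
  have hind : ∀ c d : ZMod p, c • φ₁ + d • φ₂ = 0 → c = 0 ∧ d = 0 := by
    intro c d h
    have hd : d = 0 := by
      by_contra hd
      apply hnot
      have h2' : φ₂ = (d⁻¹ * (-c)) • φ₁ := by
        have hstep : d • φ₂ = (-c) • φ₁ := by
          rw [neg_smul, eq_neg_iff_add_eq_zero, add_comm]
          exact h
        rw [mul_smul, ← hstep, smul_smul, inv_mul_cancel₀ hd, one_smul]
      rw [h2']
      refine AddSubgroup.mem_zmultiples_iff.mpr ⟨((d⁻¹ * (-c)).val : ℤ), ?_⟩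
      rw [natCast_zsmul, ← Nat.cast_smul_eq_nsmul (ZMod p), ZMod.natCast_zmod_val]
    refine ⟨?_, hd⟩
    rw [hd, zero_smul, add_zero] at h
    rcases smul_eq_zero.mp h with hc | hx
    · exact hc
    · exact absurd hx hφ₁
  -- spanning
  have hspan : ∀ y : ZMod p × ZMod p, ∃ c d : ZMod p, y = c • φ₁ + d • φ₂ := by
    set L : (ZMod p × ZMod p) → (ZMod p × ZMod p) := fun cd => cd.1 • φ₁ + cd.2 • φ₂ with hL
    have hinj : Function.Injective L := by
      intro x y hxy
      have hxy' : x.1 • φ₁ + x.2 • φ₂ = y.1 • φ₁ + y.2 • φ₂ := hxy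
      have hz : (x.1 - y.1) • φ₁ + (x.2 - y.2) • φ₂ = 0 := by
        simp only [sub_smul]
        rw [sub_add_sub_comm, hxy', sub_self]
      obtain ⟨h1, h2'⟩ := hind _ _ hz
      exact Prod.ext (sub_eq_zero.mp h1) (sub_eq_zero.mp h2')
    have hLsurj : Function.Surjective L := Finite.injective_iff_surjective.mp hinj
    intro y
    obtain ⟨cd, hcd⟩ := hLsurj y
    exact ⟨cd.1, cd.2, hcd.symm⟩
  obtain ⟨r, s, hrs⟩ := hspan (θ (a 2))
  -- kernel elements and invariance
  have hUk : ∀ x ∈ θ.ker, U x ∈ θ.ker := by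
    intro x hx
    rw [← hinvU]
    exact AddSubgroup.mem_map_of_mem _ hx
  have hVk : ∀ x ∈ θ.ker, V x ∈ θ.ker := by
    intro x hx
    rw [← hinvV]
    exact AddSubgroup.mem_map_of_mem _ hx
  have hθs : ∀ (c : ZMod p) (y), θ (c • y) = c • θ y := fun c y => stmt18_smul_hom θ c y
  have hUs : ∀ (c : ZMod p) (y), U (c • y) = c • U y := fun c y =>
    stmt18_smul_hom U.toAddMonoidHom c y
  have hVs : ∀ (c : ZMod p) (y), V (c • y) = c • V y := fun c y =>
    stmt18_smul_hom V.toAddMonoidHom c y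
  have hk2 : a 2 - r • a 0 - s • a 1 ∈ θ.ker := by
    rw [AddMonoidHom.mem_ker]
    simp only [map_sub, hθs]
    rw [hrs]; abel
  have hka4 : θ (a 4) = r • φ₁ + s • φ₂ := by
    have := hUk _ hk2
    rw [AddMonoidHom.mem_ker] at this
    have hU' : U (a 2 - r • a 0 - s • a 1) = a 4 - r • a 0 - s • a 1 := by
      simp only [map_sub, hUs, hU2, hU0, hU1]
    rw [hU'] at this
    simp only [map_sub, hθs] at this
    rw [sub_sub, sub_eq_zero] at this
    exact this
  have hka3 : θ (a 3) = s • φ₁ + r • φ₂ := by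
    have := hVk _ hk2
    rw [AddMonoidHom.mem_ker] at this
    have hV' : V (a 2 - r • a 0 - s • a 1) = a 3 - r • a 1 - s • a 0 := by
      simp only [map_sub, hVs, hV2, hV0, hV1]
    rw [hV'] at this
    simp only [map_sub, hθs] at this
    rw [sub_sub, sub_eq_zero] at this
    rw [this, add_comm]
  have hk4 : a 4 - r • a 0 - s • a 1 ∈ θ.ker := by
    rw [AddMonoidHom.mem_ker]
    simp only [map_sub, hθs]
    rw [hka4]; abel
  have hka5 : θ (a 5) = s • φ₁ + r • φ₂ := by
    have := hVk _ hk4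
    rw [AddMonoidHom.mem_ker] at this
    have hV' : V (a 4 - r • a 0 - s • a 1) = a 5 - r • a 1 - s • a 0 := by
      simp only [map_sub, hVs, hV4, hV0, hV1]
    rw [hV'] at this
    simp only [map_sub, hθs] at this
    rw [sub_sub, sub_eq_zero] at this
    rw [this, add_comm]
  -- the basis elements
  have e0 : a 0 = Pi.single (0 : Fin 5) 1 := by
    have := ha 0; rwa [show (0 : Fin 5).castSucc = (0 : Fin 6) from rfl] at this
  have e1 : a 1 = Pi.single (1 : Fin 5) 1 := by
    have := ha 1; rwa [show (1 : Fin 5).castSucc = (1 : Fin 6) from rfl] at this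
  have e2 : a 2 = Pi.single (2 : Fin 5) 1 := by
    have := ha 2; rwa [show (2 : Fin 5).castSucc = (2 : Fin 6) from rfl] at this
  have e3 : a 3 = Pi.single (3 : Fin 5) 1 := by
    have := ha 3; rwa [show (3 : Fin 5).castSucc = (3 : Fin 6) from rfl] at this
  have e4 : a 4 = Pi.single (4 : Fin 5) 1 := by
    have := ha 4; rwa [show (4 : Fin 5).castSucc = (4 : Fin 6) from rfl] at this
  have hsum : a 5 = -(a 0 + a 1 + a 2 + a 3 + a 4) := by
    rw [hlast, Fin.sum_univ_five, e0, e1, e2, e3, e4]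
  -- the constraint 1 + 2r + 2s = 0
  have hcon : 1 + 2 * r + 2 * s = 0 := by
    have h5 : θ (a 5) = -(φ₁ + φ₂ + θ (a 2) + θ (a 3) + θ (a 4)) := by
      rw [hsum, map_neg, map_add, map_add, map_add, map_add]
    rw [hka5, hrs, hka3, hka4] at h5
    have hcomb : (1 + 2 * r + 2 * s) • φ₁ + (1 + 2 * r + 2 * s) • φ₂ = 0 := by
      linear_combination (norm := module) h5
    exact (hind _ _ hcomb).1
  -- natural number versions
  refine ⟨r.val, s.val, ZMod.val_lt r, ZMod.val_lt s, ?_, ?_, ?_⟩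
  · -- the sum condition
    have hcast : ((1 + 2 * r.val + 2 * s.val : ℕ) : ZMod p) = 0 := by
      push_cast
      rw [ZMod.natCast_zmod_val, ZMod.natCast_zmod_val]
      linear_combination hcon
    obtain ⟨k, hk⟩ := (ZMod.natCast_eq_zero_iff _ _).mp hcast
    have hb1 : r.val < p := ZMod.val_lt r
    have hb2 : s.val < p := ZMod.val_lt s
    have hk4 : k < 4 := by
      by_contra hk4
      push_neg at hk4
      have : p * 4 ≤ p * k := Nat.mul_le_mul_left p hk4
      omega
    interval_cases k <;> omega
  · -- the θ values
    have hrv : (r.val : ℕ) • φ₁ = r • φ₁ := by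
      rw [← Nat.cast_smul_eq_nsmul (ZMod p), ZMod.natCast_zmod_val]
    have hsv : (s.val : ℕ) • φ₁ = s • φ₁ := by
      rw [← Nat.cast_smul_eq_nsmul (ZMod p), ZMod.natCast_zmod_val]
    have hrv2 : (r.val : ℕ) • φ₂ = r • φ₂ := by
      rw [← Nat.cast_smul_eq_nsmul (ZMod p), ZMod.natCast_zmod_val]
    have hsv2 : (s.val : ℕ) • φ₂ = s • φ₂ := by
      rw [← Nat.cast_smul_eq_nsmul (ZMod p), ZMod.natCast_zmod_val]
    exact ⟨by rw [hrs, hrv, hsv2], by rw [hka3, hsv, hrv2],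
           by rw [hka4, hrv, hsv2], by rw [hka5, hsv, hrv2]⟩
  · -- kernel equality
    have hRr : ((r.val : ℕ) : ZMod p) = r := ZMod.natCast_zmod_val r
    have hSs : ((s.val : ℕ) : ZMod p) = s := ZMod.natCast_zmod_val s
    rw [hRr, hSs]
    set g1 := r • a 0 + s • a 1 - a 2 with hg1
    set g2 := a 2 - a 4 with hg2
    set g3 := a 3 - a 5 with hg3
    apply le_antisymm
    · -- ker ≤ closure
      intro x hx
      rw [AddMonoidHom.mem_ker] at hx
      have hxdec : x = x 0 • a 0 + x 1 • a 1 + x 2 • a 2 + x 3 • a 3 + x 4 • a 4 := by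
        funext i
        fin_cases i <;>
          simp [e0, e1, e2, e3, e4, Pi.single_apply]
      have hθx : (x 0 + r * x 2 + s * x 3 + r * x 4) • φ₁
          + (x 1 + s * x 2 + r * x 3 + s * x 4) • φ₂ = 0 := by
        have : θ x = x 0 • φ₁ + x 1 • φ₂ + x 2 • θ (a 2) + x 3 • θ (a 3) + x 4 • θ (a 4) := by
          conv_lhs => rw [hxdec]
          simp only [map_add, hθs]
          rfl
        rw [hx, hrs, hka3, hka4] at this
        linear_combination (norm := module) -this
      obtain ⟨hc, hd⟩ := hind _ _ hθx
      set γ := x 3 / 2 with hγ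
      set β := γ - x 4 with hβ
      set α := x 3 - x 2 - x 4 with hα
      have hxeq : x = α • g1 + β • g2 + γ • g3 := by
        have hg2' : 2 * (x 3 / 2) = x 3 := by field_simp
        funext i
        fin_cases i <;>
          simp (config := { decide := true }) [hg1, hg2, hg3, hα, hβ, hγ, e0, e1, e2, e3, e4,
            hsum, Pi.single_apply, smul_eq_mul]
        · linear_combination hc + (-(x 3 / 2)) * hcon + (r + s) * hg2'
        · linear_combination hd + (-(x 3 / 2)) * hcon + (r + s) * hg2'
        · linear_combination -hg2'
        · linear_combination -hg2'
      rw [hxeq]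
      have hmem : ∀ (c : ZMod p) (g : Fin 5 → ZMod p),
          g ∈ ({g1, g2, g3} : Set (Fin 5 → ZMod p)) →
          c • g ∈ AddSubgroup.closure ({g1, g2, g3} : Set (Fin 5 → ZMod p)) := by
        intro c g hg
        rw [← ZMod.natCast_zmod_val c, Nat.cast_smul_eq_nsmul]
        exact AddSubgroup.nsmul_mem _ (AddSubgroup.subset_closure hg) _
      exact AddSubgroup.add_mem _
        (AddSubgroup.add_mem _ (hmem α g1 (by simp)) (hmem β g2 (by simp)))
        (hmem γ g3 (by simp))
    · -- closure ≤ ker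
      rw [AddSubgroup.closure_le]
      rintro g (rfl | rfl | rfl)
      · rw [SetLike.mem_coe, AddMonoidHom.mem_ker, hg1]
        simp only [map_sub, map_add, hθs]
        rw [hrs]; abel
      · rw [SetLike.mem_coe, AddMonoidHom.mem_ker, hg2]
        simp only [map_sub]
        rw [hrs, hka4, sub_self]
      · rw [SetLike.mem_coe, AddMonoidHom.mem_ker, hg3]
        simp only [map_sub]
        rw [hka3, hka5, sub_self]
end

section
/- Let H = ⟨a_1,...,a_5⟩ ≅ (Z/2Z)^5 with a_6 := a_1 a_2 a_3 a_4 a_5, and let Q* = ⟨(a_3 a_5)(a_4 a_6), (a_1 a_2)(a_3 a_4)(a_5 a_6)⟩ acting on H by permutation of a_1,...,a_6. The surjective homomorphisms θ : H → (Z/2Z)^2 with a_j ∉ ker θ for all j = 1,...,6 and ker θ invariant under Q* are exactly the four maps given on (a_1,...,a_6) by (φ_1, φ_1, φ_2, φ_2, φ_2, φ_2), (φ_1, φ_1, φ_2, φ_2, φ_1φ_2, φ_1φ_2), (φ_1, φ_1, φ_2, φ_1φ_2, φ_2, φ_1φ_2), and (φ_1, φ_1, φ_2, φ_1φ_2, φ_1φ_2,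 φ_2), where φ_1, φ_2 is a basis of (Z/2Z)^2. In particular there are exactly 4 such kernels. -/
set_option maxRecDepth 100000
namespace Stmt19Aux
abbrev G2 := ZMod 2 × ZMod 2
abbrev H5 := Fin 5 → ZMod 2
def T (x0 x1 x2 x3 x4 : G2) (h0 h1 h2 h3 h4 : ZMod 2) : G2 :=
  h0 • x0 + h1 • x1 + h2 • x2 + h3 • x3 + h4 • x4
set_option maxHeartbeats 4000000 in
set_option synthInstance.maxHeartbeats 2000000 in
set_option synthInstance.maxSize 2000 in
theorem core (x0 x1 x2 x3 x4 : G2) :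
    ((x0 ≠ 0 ∧ x1 ≠ 0 ∧ x2 ≠ 0 ∧ x3 ≠ 0 ∧ x4 ≠ 0 ∧ x0 + x1 + x2 + x3 + x4 ≠ 0) ∧
     (∀ h0 h1 h2 h3 h4 : ZMod 2,
        T x0 x1 x2 x3 x4 (h0 + h3) (h1 + h3) (h4 + h3) h3 (h2 + h3) = 0 ↔
        T x0 x1 x2 x3 x4 h0 h1 h2 h3 h4 = 0) ∧
     (∀ h0 h1 h2 h3 h4 : ZMod 2,
        T x0 x1 x2 x3 x4 (h1 + h4) (h0 + h4) (h3 + h4) (h2 + h4) h4 = 0 ↔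
        T x0 x1 x2 x3 x4 h0 h1 h2 h3 h4 = 0) ∧
     (∀ y : G2, ∃ h0 h1 h2 h3 h4 : ZMod 2, T x0 x1 x2 x3 x4 h0 h1 h2 h3 h4 = y))
    ↔ (∃ φ₁ φ₂ : G2, (∀ y : G2, ∃ c d : ZMod 2, c • φ₁ + d • φ₂ = y) ∧
        ((x0 = φ₁ ∧ x1 = φ₁ ∧ x2 = φ₂ ∧ x3 = φ₂ ∧ x4 = φ₂ ∧ x0+x1+x2+x3+x4 = φ₂) ∨
         (x0 = φ₁ ∧ x1 = φ₁ ∧ x2 = φ₂ ∧ x3 = φ₂ ∧ x4 = φ₁+φ₂ ∧ x0+x1+x2+x3+x4 = φ₁+φ₂) ∨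
         (x0 = φ₁ ∧ x1 = φ₁ ∧ x2 = φ₂ ∧ x3 = φ₁+φ₂ ∧ x4 = φ₂ ∧ x0+x1+x2+x3+x4 = φ₁+φ₂) ∨
         (x0 = φ₁ ∧ x1 = φ₁ ∧ x2 = φ₂ ∧ x3 = φ₁+φ₂ ∧ x4 = φ₁+φ₂ ∧ x0+x1+x2+x3+x4 = φ₂))) := by
  revert x0 x1 x2 x3 x4; decide

lemma zmod2_cases (c : ZMod 2) : c = 0 ∨ c = 1 := by revert c; decide

lemma map_smul2 {F M N : Type*} [AddCommMonoid M] [AddCommMonoid N]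
    [Module (ZMod 2) M] [Module (ZMod 2) N] [FunLike F M N] [AddMonoidHomClass F M N]
    (f : F) (c : ZMod 2) (v : M) :
    f (c • v) = c • f v := by
  rcases zmod2_cases c with h | h <;> subst h <;> simp

lemma pi_decomp (v : H5) : v = ∑ i, v i • Pi.single i (1 : ZMod 2) := by
  funext j
  simp [Finset.sum_apply, Pi.single_apply, smul_eq_mul]

lemma hom_apply {N : Type*} [AddCommMonoid N] [Module (ZMod 2) N]
    (f : H5 →+ N) (v : H5) :
    f v = ∑ i, v i • f (Pi.single i 1) := by
  conv_lhs => rw [pi_decomp v]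
  rw [map_sum]
  exact Finset.sum_congr rfl fun i _ => map_smul2 f _ _

lemma map_ker_iff {M : Type*} [AddCommGroup M] (e : M ≃+ M) (K : AddSubgroup M) :
    AddSubgroup.map e.toAddMonoidHom K = K ↔ ∀ v, e v ∈ K ↔ v ∈ K := by
  constructor
  · intro hmap v
    constructor
    · intro h
      rw [← hmap, AddSubgroup.mem_map_equiv] at h
      simpa using h
    · intro h
      rw [← hmap]
      exact AddSubgroup.mem_map.mpr ⟨v, h, rfl⟩
  · intro hiff
    ext y
    rw [AddSubgroup.mem_map_equiv]
    simpa using (hiff (e.symm y)).symm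

lemma mem_closure_pair (φ₁ φ₂ y : G2) :
    y ∈ AddSubgroup.closure {φ₁, φ₂} ↔ ∃ c d : ZMod 2, c • φ₁ + d • φ₂ = y := by
  have hneg : ∀ z : G2, -z = z := by decide
  have h1 : ∀ (c : ZMod 2) (w : G2), w ∈ AddSubgroup.closure {φ₁, φ₂} →
      c • w ∈ AddSubgroup.closure {φ₁, φ₂} := by
    intro c w hw
    rcases zmod2_cases c with h | h <;> subst h
    · rw [zero_smul]; exact zero_mem _
    · rw [one_smul]; exact hw
  constructor
  · intro hy
    induction hy using AddSubgroup.closure_induction with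
    | mem z hz =>
      simp only [Set.mem_insert_iff, Set.mem_singleton_iff] at hz
      rcases hz with rfl | rfl
      · exact ⟨1, 0, by simp⟩
      · exact ⟨0, 1, by simp⟩
    | zero => exact ⟨0, 0, by simp⟩
    | add z w _ _ hz hw =>
      obtain ⟨c, d, rfl⟩ := hz
      obtain ⟨c', d', rfl⟩ := hw
      exact ⟨c + c', d + d', by rw [add_smul, add_smul]; abel⟩
    | neg z _ hz =>
      obtain ⟨c, d, rfl⟩ := hz
      exact ⟨c, d, (hneg _).symm⟩
  · rintro ⟨c, d, rfl⟩
    exact add_mem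
      (h1 _ _ (AddSubgroup.subset_closure (by simp)))
      (h1 _ _ (AddSubgroup.subset_closure (by simp)))

lemma closure_pair_top (φ₁ φ₂ : G2) :
    AddSubgroup.closure {φ₁, φ₂} = ⊤ ↔ ∀ y : G2, ∃ c d : ZMod 2, c • φ₁ + d • φ₂ = y := by
  rw [AddSubgroup.eq_top_iff']
  exact forall_congr' fun y => mem_closure_pair φ₁ φ₂ y

lemma jcases6 (j : Fin 6) : j = 0 ∨ j = 1 ∨ j = 2 ∨ j = 3 ∨ j = 4 ∨ j = 5 := by
  revert j; decide

set_option maxHeartbeats 1000000 in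
theorem main_iff
    (a : Fin 6 → (Fin 5 → ZMod 2))
    (ha : ∀ j : Fin 5, a j.castSucc = Pi.single j 1)
    (hlast : a 5 = ∑ j : Fin 5, Pi.single j 1)
    (U V : (Fin 5 → ZMod 2) ≃+ (Fin 5 → ZMod 2))
    (hU0 : U (a 0) = a 0) (hU1 : U (a 1) = a 1)
    (hU2 : U (a 2) = a 4) (hU4 : U (a 4) = a 2)
    (hU3 : U (a 3) = a 5) (hU5 : U (a 5) = a 3)
    (hV0 : V (a 0) = a 1) (hV1 : V (a 1) = a 0)
    (hV2 : V (a 2) = a 3) (hV3 : V (a 3) = a 2)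
    (hV4 : V (a 4) = a 5) (hV5 : V (a 5) = a 4)
    (θ : (Fin 5 → ZMod 2) →+ (ZMod 2 × ZMod 2)) :
    (Function.Surjective θ ∧ (∀ j, a j ∉ θ.ker) ∧
        AddSubgroup.map U.toAddMonoidHom θ.ker = θ.ker ∧
        AddSubgroup.map V.toAddMonoidHom θ.ker = θ.ker) ↔
      (∃ φ₁ φ₂ : ZMod 2 × ZMod 2,
        AddSubgroup.closure {φ₁, φ₂} = (⊤ : AddSubgroup (ZMod 2 × ZMod 2)) ∧
        ((fun j => θ (a j)) = ![φ₁, φ₁, φ₂, φ₂, φ₂, φ₂] ∨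
         (fun j => θ (a j)) = ![φ₁, φ₁, φ₂, φ₂, φ₁ + φ₂, φ₁ + φ₂] ∨
         (fun j => θ (a j)) = ![φ₁, φ₁, φ₂, φ₁ + φ₂, φ₂, φ₁ + φ₂] ∨
         (fun j => θ (a j)) = ![φ₁, φ₁, φ₂, φ₁ + φ₂, φ₁ + φ₂, φ₂])) := by
  have ha0 : a 0 = Pi.single (0 : Fin 5) 1 := by
    rw [show (0 : Fin 6) = Fin.castSucc 0 from by decide]; exact ha 0
  have ha1 : a 1 = Pi.single (1 : Fin 5) 1 := by
    rw [show (1 : Fin 6) = Fin.castSucc 1 from by decide]; exact ha 1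
  have ha2 : a 2 = Pi.single (2 : Fin 5) 1 := by
    rw [show (2 : Fin 6) = Fin.castSucc 2 from by decide]; exact ha 2
  have ha3 : a 3 = Pi.single (3 : Fin 5) 1 := by
    rw [show (3 : Fin 6) = Fin.castSucc 3 from by decide]; exact ha 3
  have ha4 : a 4 = Pi.single (4 : Fin 5) 1 := by
    rw [show (4 : Fin 6) = Fin.castSucc 4 from by decide]; exact ha 4
  set x0 := θ (Pi.single (0 : Fin 5) 1) with hx0
  set x1 := θ (Pi.single (1 : Fin 5) 1) with hx1
  set x2 := θ (Pi.single (2 : Fin 5) 1) with hx2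
  set x3 := θ (Pi.single (3 : Fin 5) 1) with hx3
  set x4 := θ (Pi.single (4 : Fin 5) 1) with hx4
  have hθv : ∀ v : H5, θ v = T x0 x1 x2 x3 x4 (v 0) (v 1) (v 2) (v 3) (v 4) := by
    intro v
    rw [hom_apply θ v, Fin.sum_univ_five]
    rfl
  have hθa0 : θ (a 0) = x0 := by rw [ha0]
  have hθa1 : θ (a 1) = x1 := by rw [ha1]
  have hθa2 : θ (a 2) = x2 := by rw [ha2]
  have hθa3 : θ (a 3) = x3 := by rw [ha3]
  have hθa4 : θ (a 4) = x4 := by rw [ha4]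
  have hθa5 : θ (a 5) = x0 + x1 + x2 + x3 + x4 := by
    rw [hlast, map_sum, Fin.sum_univ_five]
  -- U and V on basis vectors
  have hU0' : U (Pi.single (0 : Fin 5) 1) = Pi.single (0 : Fin 5) 1 := by
    rw [← ha0]; rw [hU0, ha0]
  have hU1' : U (Pi.single (1 : Fin 5) 1) = Pi.single (1 : Fin 5) 1 := by
    rw [← ha1]; rw [hU1, ha1]
  have hU2' : U (Pi.single (2 : Fin 5) 1) = Pi.single (4 : Fin 5) 1 := by
    rw [← ha2]; rw [hU2, ha4]
  have hU4' : U (Pi.single (4 : Fin 5) 1) = Pi.single (2 : Fin 5) 1 := by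
    rw [← ha4]; rw [hU4, ha2]
  have hU3' : U (Pi.single (3 : Fin 5) 1) = ∑ j : Fin 5, Pi.single j 1 := by
    rw [← ha3]; rw [hU3, hlast]
  have hV0' : V (Pi.single (0 : Fin 5) 1) = Pi.single (1 : Fin 5) 1 := by
    rw [← ha0]; rw [hV0, ha1]
  have hV1' : V (Pi.single (1 : Fin 5) 1) = Pi.single (0 : Fin 5) 1 := by
    rw [← ha1]; rw [hV1, ha0]
  have hV2' : V (Pi.single (2 : Fin 5) 1) = Pi.single (3 : Fin 5) 1 := by
    rw [← ha2]; rw [hV2, ha3]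
  have hV3' : V (Pi.single (3 : Fin 5) 1) = Pi.single (2 : Fin 5) 1 := by
    rw [← ha3]; rw [hV3, ha2]
  have hV4' : V (Pi.single (4 : Fin 5) 1) = ∑ j : Fin 5, Pi.single j 1 := by
    rw [← ha4]; rw [hV4, hlast]
  have hθU : ∀ v : H5, θ (U v) =
      T x0 x1 x2 x3 x4 (v 0 + v 3) (v 1 + v 3) (v 4 + v 3) (v 3) (v 2 + v 3) := by
    intro v
    have h1 := hom_apply (θ.comp U.toAddMonoidHom) v
    simp only [AddMonoidHom.comp_apply, AddEquiv.coe_toAddMonoidHom] at h1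
    rw [Fin.sum_univ_five, hU0', hU1', hU2', hU3', hU4'] at h1
    rw [h1, map_sum, Fin.sum_univ_five]
    simp only [T, smul_add, add_smul]
    abel
  have hθV : ∀ v : H5, θ (V v) =
      T x0 x1 x2 x3 x4 (v 1 + v 4) (v 0 + v 4) (v 3 + v 4) (v 2 + v 4) (v 4) := by
    intro v
    have h1 := hom_apply (θ.comp V.toAddMonoidHom) v
    simp only [AddMonoidHom.comp_apply, AddEquiv.coe_toAddMonoidHom] at h1
    rw [Fin.sum_univ_five, hV0', hV1', hV2', hV3', hV4'] at h1
    rw [h1, map_sum, Fin.sum_univ_five]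
    simp only [T, smul_add, add_smul]
    abel
  have hsurj : Function.Surjective θ ↔
      (∀ y : G2, ∃ h0 h1 h2 h3 h4 : ZMod 2, T x0 x1 x2 x3 x4 h0 h1 h2 h3 h4 = y) := by
    constructor
    · intro hs y
      obtain ⟨v, rfl⟩ := hs y
      exact ⟨v 0, v 1, v 2, v 3, v 4, (hθv v).symm⟩
    · intro hs y
      obtain ⟨h0, h1, h2, h3, h4, hh⟩ := hs y
      refine ⟨![h0, h1, h2, h3, h4], ?_⟩
      rw [hθv]
      simpa using hh
  have hmem : (∀ j, a j ∉ θ.ker) ↔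
      (x0 ≠ 0 ∧ x1 ≠ 0 ∧ x2 ≠ 0 ∧ x3 ≠ 0 ∧ x4 ≠ 0 ∧ x0 + x1 + x2 + x3 + x4 ≠ 0) := by
    simp only [AddMonoidHom.mem_ker]
    constructor
    · intro hj
      exact ⟨hθa0 ▸ hj 0, hθa1 ▸ hj 1, hθa2 ▸ hj 2, hθa3 ▸ hj 3, hθa4 ▸ hj 4,
        hθa5 ▸ hj 5⟩
    · rintro ⟨n0, n1, n2, n3, n4, n5⟩ j
      rcases jcases6 j with rfl | rfl | rfl | rfl | rfl | rfl
      · rw [hθa0]; exact n0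
      · rw [hθa1]; exact n1
      · rw [hθa2]; exact n2
      · rw [hθa3]; exact n3
      · rw [hθa4]; exact n4
      · rw [hθa5]; exact n5
  have hUker : AddSubgroup.map U.toAddMonoidHom θ.ker = θ.ker ↔
      (∀ h0 h1 h2 h3 h4 : ZMod 2,
        T x0 x1 x2 x3 x4 (h0 + h3) (h1 + h3) (h4 + h3) h3 (h2 + h3) = 0 ↔
        T x0 x1 x2 x3 x4 h0 h1 h2 h3 h4 = 0) := by
    rw [map_ker_iff]
    constructor
    · intro hk h0 h1 h2 h3 h4
      have := hk ![h0, h1, h2, h3, h4]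
      simp only [AddMonoidHom.mem_ker] at this
      rw [hθU, hθv] at this
      simpa using this
    · intro hk v
      simp only [AddMonoidHom.mem_ker]
      rw [hθU, hθv]
      exact hk (v 0) (v 1) (v 2) (v 3) (v 4)
  have hVker : AddSubgroup.map V.toAddMonoidHom θ.ker = θ.ker ↔
      (∀ h0 h1 h2 h3 h4 : ZMod 2,
        T x0 x1 x2 x3 x4 (h1 + h4) (h0 + h4) (h3 + h4) (h2 + h4) h4 = 0 ↔
        T x0 x1 x2 x3 x4 h0 h1 h2 h3 h4 = 0) := by
    rw [map_ker_iff]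
    constructor
    · intro hk h0 h1 h2 h3 h4
      have := hk ![h0, h1, h2, h3, h4]
      simp only [AddMonoidHom.mem_ker] at this
      rw [hθV, hθv] at this
      simpa using this
    · intro hk v
      simp only [AddMonoidHom.mem_ker]
      rw [hθV, hθv]
      exact hk (v 0) (v 1) (v 2) (v 3) (v 4)
  have hfun : ∀ b0 b1 b2 b3 b4 b5 : G2,
      ((fun j => θ (a j)) = ![b0, b1, b2, b3, b4, b5]) ↔
      (x0 = b0 ∧ x1 = b1 ∧ x2 = b2 ∧ x3 = b3 ∧ x4 = b4 ∧
        x0 + x1 + x2 + x3 + x4 = b5) := by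
    intro b0 b1 b2 b3 b4 b5
    constructor
    · intro hE
      refine ⟨?_, ?_, ?_, ?_, ?_, ?_⟩
      · have := congrFun hE 0; rw [hθa0] at this; simpa using this
      · have := congrFun hE 1; rw [hθa1] at this; simpa using this
      · have := congrFun hE 2; rw [hθa2] at this; simpa using this
      · have := congrFun hE 3; rw [hθa3] at this; simpa using this
      · have := congrFun hE 4; rw [hθa4] at this; simpa using this
      · have := congrFun hE 5; rw [hθa5] at this; simpa using this
    · rintro ⟨e0, e1, e2, e3, e4, e5⟩
      funext j
      rcases jcases6 j with rfl | rfl | rfl | rfl | rfl | rfl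
      · rw [hθa0, e0]; simp
      · rw [hθa1, e1]; simp
      · rw [hθa2, e2]; simp
      · rw [hθa3, e3]; simp
      · rw [hθa4, e4]; simp
      · rw [hθa5, e5]; rfl
  rw [hsurj, hmem, hUker, hVker]
  simp only [closure_pair_top, hfun]
  have C := core x0 x1 x2 x3 x4
  exact ⟨fun ⟨hs, hm, hu, hv⟩ => C.mp ⟨hm, hu, hv, hs⟩,
    fun h => (C.mpr h).elim fun hm h' => h'.elim fun hu h'' => h''.elim fun hv hs =>
      ⟨hs, hm, hu, hv⟩⟩

lemma jcases5 (i : Fin 5) : i = 0 ∨ i = 1 ∨ i = 2 ∨ i = 3 ∨ i = 4 := by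
  revert i; decide

def θstd (p : Fin 5 → G2) : H5 →+ G2 where
  toFun h := ∑ i, h i • p i
  map_zero' := by simp
  map_add' h g := by
    simp [add_smul, Finset.sum_add_distrib]

lemma θstd_apply (p : Fin 5 → G2) (v : H5) :
    θstd p v = T (p 0) (p 1) (p 2) (p 3) (p 4) (v 0) (v 1) (v 2) (v 3) (v 4) := by
  simp [θstd, Fin.sum_univ_five, T]

lemma θstd_single (p : Fin 5 → G2) (j : Fin 5) : θstd p (Pi.single j 1) = p j := by
  simp [θstd, Pi.single_apply, ite_smul]

def gh (φ₁ φ₂ : G2) : G2 →+ G2 where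
  toFun y := y.1 • φ₁ + y.2 • φ₂
  map_zero' := by simp
  map_add' y z := by
    simp only [Prod.fst_add, Prod.snd_add, add_smul]
    abel

lemma ker_eq_helper (θ : H5 →+ G2) (φ₁ φ₂ : G2)
    (hD : ∀ y : G2, ∃ c d : ZMod 2, c • φ₁ + d • φ₂ = y)
    (p : Fin 5 → G2)
    (hp : ∀ i, θ (Pi.single i 1) = gh φ₁ φ₂ (p i)) :
    θ.ker = (θstd p).ker := by
  have hsur : Function.Surjective (gh φ₁ φ₂) := by
    intro y; obtain ⟨c, d, h⟩ := hD y; exact ⟨(c, d), h⟩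
  have hinj : Function.Injective (gh φ₁ φ₂) :=
    Finite.injective_iff_surjective.mpr hsur
  have key : ∀ v, θ v = gh φ₁ φ₂ (θstd p v) := by
    intro v
    rw [hom_apply θ v, hom_apply (θstd p) v, map_sum]
    refine Finset.sum_congr rfl fun i _ => ?_
    rw [map_smul2, θstd_single, hp]
  ext v
  simp only [AddMonoidHom.mem_ker, key]
  constructor
  · intro h; exact hinj (h.trans (map_zero _).symm)
  · intro h; rw [h, map_zero]

def pA : Fin 5 → G2 := ![(1,0),(1,0),(0,1),(0,1),(0,1)]
def pB : Fin 5 → G2 := ![(1,0),(1,0),(0,1),(0,1),(1,1)]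
def pC : Fin 5 → G2 := ![(1,0),(1,0),(0,1),(1,1),(0,1)]
def pD : Fin 5 → G2 := ![(1,0),(1,0),(0,1),(1,1),(1,1)]

end Stmt19Aux

open Stmt19Aux in
set_option maxHeartbeats 1000000 in
/-- Let `H = ⟨a_1,…,a_5⟩ ≅ (ℤ/2ℤ)⁵` with `a_6 := a_1+⋯+a_5`, and let `U, V`
be the automorphisms of `H` given by the permutations `(a_3 a_5)(a_4 a_6)`
and `(a_1 a_2)(a_3 a_4)(a_5 a_6)`, generating `Q*`.  The surjective
homomorphisms `θ : H → (ℤ/2ℤ)²` with `a_j ∉ ker θ` for all `j = 1,…,6` and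
`ker θ` invariant under `Q*` are exactly the maps whose values on
`(a_1,…,a_6)` are `(φ₁,φ₁,φ₂,φ₂,φ₂,φ₂)`, `(φ₁,φ₁,φ₂,φ₂,φ₁φ₂,φ₁φ₂)`,
`(φ₁,φ₁,φ₂,φ₁φ₂,φ₂,φ₁φ₂)` or `(φ₁,φ₁,φ₂,φ₁φ₂,φ₁φ₂,φ₂)` for a basis
`φ₁, φ₂` of `(ℤ/2ℤ)²`; in particular there are exactly `4` such kernels. -/
theorem stmt19
    (a : Fin 6 → (Fin 5 → ZMod 2))
    (ha : ∀ j : Fin 5, a j.castSucc = Pi.single j 1)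
    (hlast : a 5 = ∑ j : Fin 5, Pi.single j 1)
    (U V : (Fin 5 → ZMod 2) ≃+ (Fin 5 → ZMod 2))
    (hU0 : U (a 0) = a 0) (hU1 : U (a 1) = a 1)
    (hU2 : U (a 2) = a 4) (hU4 : U (a 4) = a 2)
    (hU3 : U (a 3) = a 5) (hU5 : U (a 5) = a 3)
    (hV0 : V (a 0) = a 1) (hV1 : V (a 1) = a 0)
    (hV2 : V (a 2) = a 3) (hV3 : V (a 3) = a 2)
    (hV4 : V (a 4) = a 5) (hV5 : V (a 5) = a 4) :
    (∀ θ : (Fin 5 → ZMod 2) →+ (ZMod 2 × ZMod 2),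
      (Function.Surjective θ ∧ (∀ j, a j ∉ θ.ker) ∧
        AddSubgroup.map U.toAddMonoidHom θ.ker = θ.ker ∧
        AddSubgroup.map V.toAddMonoidHom θ.ker = θ.ker) ↔
      (∃ φ₁ φ₂ : ZMod 2 × ZMod 2,
        AddSubgroup.closure {φ₁, φ₂} = (⊤ : AddSubgroup (ZMod 2 × ZMod 2)) ∧
        ((fun j => θ (a j)) = ![φ₁, φ₁, φ₂, φ₂, φ₂, φ₂] ∨
         (fun j => θ (a j)) = ![φ₁, φ₁, φ₂, φ₂, φ₁ + φ₂, φ₁ + φ₂] ∨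
         (fun j => θ (a j)) = ![φ₁, φ₁, φ₂, φ₁ + φ₂, φ₂, φ₁ + φ₂] ∨
         (fun j => θ (a j)) = ![φ₁, φ₁, φ₂, φ₁ + φ₂, φ₁ + φ₂, φ₂]))) ∧
    Nat.card {K : AddSubgroup (Fin 5 → ZMod 2) //
      ∃ θ : (Fin 5 → ZMod 2) →+ (ZMod 2 × ZMod 2),
        Function.Surjective θ ∧ (∀ j, a j ∉ θ.ker) ∧
        AddSubgroup.map U.toAddMonoidHom θ.ker = θ.ker ∧
        AddSubgroup.map V.toAddMonoidHom θ.ker = θ.ker ∧ K = θ.ker} = 4 := by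
  have hmain := main_iff a ha hlast U V hU0 hU1 hU2 hU4 hU3 hU5 hV0 hV1 hV2 hV3 hV4 hV5
  refine ⟨hmain, ?_⟩
  have ha0 : a 0 = Pi.single (0 : Fin 5) 1 := by
    rw [show (0 : Fin 6) = Fin.castSucc 0 from by decide]; exact ha 0
  have ha1 : a 1 = Pi.single (1 : Fin 5) 1 := by
    rw [show (1 : Fin 6) = Fin.castSucc 1 from by decide]; exact ha 1
  have ha2 : a 2 = Pi.single (2 : Fin 5) 1 := by
    rw [show (2 : Fin 6) = Fin.castSucc 2 from by decide]; exact ha 2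
  have ha3 : a 3 = Pi.single (3 : Fin 5) 1 := by
    rw [show (3 : Fin 6) = Fin.castSucc 3 from by decide]; exact ha 3
  have ha4 : a 4 = Pi.single (4 : Fin 5) 1 := by
    rw [show (4 : Fin 6) = Fin.castSucc 4 from by decide]; exact ha 4
  have hset : ∀ K : AddSubgroup (Fin 5 → ZMod 2),
      (∃ θ : (Fin 5 → ZMod 2) →+ (ZMod 2 × ZMod 2),
        Function.Surjective θ ∧ (∀ j, a j ∉ θ.ker) ∧
        AddSubgroup.map U.toAddMonoidHom θ.ker = θ.ker ∧
        AddSubgroup.map V.toAddMonoidHom θ.ker = θ.ker ∧ K = θ.ker) ↔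
      K ∈ ({(θstd pA).ker, (θstd pB).ker, (θstd pC).ker, (θstd pD).ker} :
        Set (AddSubgroup (Fin 5 → ZMod 2))) := by
    intro K
    simp only [Set.mem_insert_iff, Set.mem_singleton_iff]
    constructor
    · rintro ⟨θ, hs, hm, hu, hv, rfl⟩
      obtain ⟨φ₁, φ₂, hφ, hcase⟩ := (hmain θ).mp ⟨hs, hm, hu, hv⟩
      have hD := (closure_pair_top φ₁ φ₂).mp hφ
      have hval : ∀ (b : Fin 6 → G2), (fun j => θ (a j)) = b →
          (θ (Pi.single (0:Fin 5) 1) = b 0 ∧ θ (Pi.single (1:Fin 5) 1) = b 1 ∧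
           θ (Pi.single (2:Fin 5) 1) = b 2 ∧ θ (Pi.single (3:Fin 5) 1) = b 3 ∧
           θ (Pi.single (4:Fin 5) 1) = b 4) := by
        intro b hE
        exact ⟨by rw [← ha0]; exact congrFun hE 0, by rw [← ha1]; exact congrFun hE 1,
               by rw [← ha2]; exact congrFun hE 2, by rw [← ha3]; exact congrFun hE 3,
               by rw [← ha4]; exact congrFun hE 4⟩
      rcases hcase with hc | hc | hc | hc
      · obtain ⟨t0, t1, t2, t3, t4⟩ := hval _ hc
        refine Or.inl (ker_eq_helper θ φ₁ φ₂ hD pA fun i => ?_)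
        rcases jcases5 i with rfl | rfl | rfl | rfl | rfl
        · rw [t0]; simp [gh, pA]
        · rw [t1]; simp [gh, pA]
        · rw [t2]; simp [gh, pA]
        · rw [t3]; simp [gh, pA]
        · rw [t4]; simp [gh, pA]
      · obtain ⟨t0, t1, t2, t3, t4⟩ := hval _ hc
        refine Or.inr (Or.inl (ker_eq_helper θ φ₁ φ₂ hD pB fun i => ?_))
        rcases jcases5 i with rfl | rfl | rfl | rfl | rfl
        · rw [t0]; simp [gh, pB]
        · rw [t1]; simp [gh, pB]
        · rw [t2]; simp [gh, pB]
        · rw [t3]; simp [gh, pB]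
        · rw [t4]; simp [gh, pB]
      · obtain ⟨t0, t1, t2, t3, t4⟩ := hval _ hc
        refine Or.inr (Or.inr (Or.inl (ker_eq_helper θ φ₁ φ₂ hD pC fun i => ?_)))
        rcases jcases5 i with rfl | rfl | rfl | rfl | rfl
        · rw [t0]; simp [gh, pC]
        · rw [t1]; simp [gh, pC]
        · rw [t2]; simp [gh, pC]
        · rw [t3]; simp [gh, pC]
        · rw [t4]; simp [gh, pC]
      · obtain ⟨t0, t1, t2, t3, t4⟩ := hval _ hc
        refine Or.inr (Or.inr (Or.inr (ker_eq_helper θ φ₁ φ₂ hD pD fun i => ?_)))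
        rcases jcases5 i with rfl | rfl | rfl | rfl | rfl
        · rw [t0]; simp [gh, pD]
        · rw [t1]; simp [gh, pD]
        · rw [t2]; simp [gh, pD]
        · rw [t3]; simp [gh, pD]
        · rw [t4]; simp [gh, pD]
    · have build : ∀ (p : Fin 5 → G2) (φ₁ φ₂ : ZMod 2 × ZMod 2),
          AddSubgroup.closure {φ₁, φ₂} = (⊤ : AddSubgroup (ZMod 2 × ZMod 2)) →
          ((fun j => θstd p (a j)) = ![φ₁, φ₁, φ₂, φ₂, φ₂, φ₂] ∨
           (fun j => θstd p (a j)) = ![φ₁, φ₁, φ₂, φ₂, φ₁ + φ₂, φ₁ + φ₂] ∨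
           (fun j => θstd p (a j)) = ![φ₁, φ₁, φ₂, φ₁ + φ₂, φ₂, φ₁ + φ₂] ∨
           (fun j => θstd p (a j)) = ![φ₁, φ₁, φ₂, φ₁ + φ₂, φ₁ + φ₂, φ₂]) →
          ∃ θ : (Fin 5 → ZMod 2) →+ (ZMod 2 × ZMod 2),
            Function.Surjective θ ∧ (∀ j, a j ∉ θ.ker) ∧
            AddSubgroup.map U.toAddMonoidHom θ.ker = θ.ker ∧
            AddSubgroup.map V.toAddMonoidHom θ.ker = θ.ker ∧ (θstd p).ker = θ.ker := by
        intro p φ₁ φ₂ hφ hcs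
        obtain ⟨hs, hm, hu, hv⟩ := (hmain (θstd p)).mpr ⟨φ₁, φ₂, hφ, hcs⟩
        exact ⟨θstd p, hs, hm, hu, hv, rfl⟩
      have hvec : ∀ (p : Fin 5 → G2) (b : Fin 6 → G2),
          p 0 = b 0 → p 1 = b 1 → p 2 = b 2 → p 3 = b 3 → p 4 = b 4 →
          (p 0 + p 1 + p 2 + p 3 + p 4 = b 5) →
          (fun j => θstd p (a j)) = b := by
        intro p b e0 e1 e2 e3 e4 e5
        funext j
        rcases jcases6 j with rfl | rfl | rfl | rfl | rfl | rfl
        · rw [ha0, θstd_single, e0]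
        · rw [ha1, θstd_single, e1]
        · rw [ha2, θstd_single, e2]
        · rw [ha3, θstd_single, e3]
        · rw [ha4, θstd_single, e4]
        · rw [hlast, map_sum, Fin.sum_univ_five]
          simp only [θstd_single]
          exact e5
      rintro (rfl | rfl | rfl | rfl)
      · exact build pA (1,0) (0,1) ((closure_pair_top _ _).mpr (by decide))
          (Or.inl (hvec pA _ (by decide) (by decide) (by decide) (by decide)
            (by decide) (by decide)))
      · exact build pB (1,0) (0,1) ((closure_pair_top _ _).mpr (by decide))
          (Or.inr (Or.inl (hvec pB _ (by decide) (by decide) (by decide) (by decide)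
            (by decide) (by decide))))
      · exact build pC (1,0) (0,1) ((closure_pair_top _ _).mpr (by decide))
          (Or.inr (Or.inr (Or.inl (hvec pC _ (by decide) (by decide) (by decide) (by decide)
            (by decide) (by decide)))))
      · exact build pD (1,0) (0,1) ((closure_pair_top _ _).mpr (by decide))
          (Or.inr (Or.inr (Or.inr (hvec pD _ (by decide) (by decide) (by decide) (by decide)
            (by decide) (by decide)))))
  rw [Nat.card_congr (Equiv.subtypeEquivRight hset)]
  rw [Nat.card_coe_set_eq]
  have memA1 : (![0,0,1,0,1] : H5) ∈ (θstd pA).ker := by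
    rw [AddMonoidHom.mem_ker, θstd_apply]; decide
  have memA2 : (![0,0,1,1,0] : H5) ∈ (θstd pA).ker := by
    rw [AddMonoidHom.mem_ker, θstd_apply]; decide
  have memB2 : (![0,0,1,1,0] : H5) ∈ (θstd pB).ker := by
    rw [AddMonoidHom.mem_ker, θstd_apply]; decide
  have memC1 : (![0,0,1,0,1] : H5) ∈ (θstd pC).ker := by
    rw [AddMonoidHom.mem_ker, θstd_apply]; decide
  have nmemB1 : (![0,0,1,0,1] : H5) ∉ (θstd pB).ker := by
    simp only [AddMonoidHom.mem_ker, θstd_apply]; decide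
  have nmemC2 : (![0,0,1,1,0] : H5) ∉ (θstd pC).ker := by
    simp only [AddMonoidHom.mem_ker, θstd_apply]; decide
  have nmemD1 : (![0,0,1,0,1] : H5) ∉ (θstd pD).ker := by
    simp only [AddMonoidHom.mem_ker, θstd_apply]; decide
  have nmemD2 : (![0,0,1,1,0] : H5) ∉ (θstd pD).ker := by
    simp only [AddMonoidHom.mem_ker, θstd_apply]; decide
  have neAB : (θstd pA).ker ≠ (θstd pB).ker := fun h => nmemB1 (h ▸ memA1)
  have neAC : (θstd pA).ker ≠ (θstd pC).ker := fun h => nmemC2 (h ▸ memA2)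
  have neAD : (θstd pA).ker ≠ (θstd pD).ker := fun h => nmemD1 (h ▸ memA1)
  have neBC : (θstd pB).ker ≠ (θstd pC).ker := fun h => nmemC2 (h ▸ memB2)
  have neBD : (θstd pB).ker ≠ (θstd pD).ker := fun h => nmemD2 (h ▸ memB2)
  have neCD : (θstd pC).ker ≠ (θstd pD).ker := fun h => nmemD1 (h ▸ memC1)
  rw [Set.ncard_insert_of_notMem (by
        simp only [Set.mem_insert_iff, Set.mem_singleton_iff]
        push_neg
        exact ⟨neAB, neAC, neAD⟩),
      Set.ncard_insert_of_notMem (by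
        simp only [Set.mem_insert_iff, Set.mem_singleton_iff]
        push_neg
        exact ⟨neBC, neBD⟩),
      Set.ncard_pair neCD]
end
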